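/- arXiv:2506.20317 — 7 statements merged into one kernel-verified Lean document; each statement's English description precedes it below -/
import Mathlib

section
/- In every multi-graph instance with n ≥ 2 agents all of whose valuations are additive, there exists an orientation X that is both MMS, i.e., v_i(X_i) ≥ μ_i^n for every agent i, and PMMS, i.e., v_i(X_i) ≥ PMMS_i(X) for every agent i. -/
open Finset

/-- A multi-graph fair-division instance: agents `V` (vertices), items `E` (edges of a
multi-graph on `V`), an endpoint map assigning to each item an unordered pair of agents
(self-loops allowed), and for each agent a nonnegative, normalized, monotone, graphical
valuation on sets of items. -/
structure GraphInstance (V E : Type) [DecidableEq E] where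
  ep : E → Sym2 V
  val : V → Finset E → ℝ
  val_nonneg : ∀ i S, 0 ≤ val i S
  val_empty : ∀ i, val i ∅ = 0
  val_mono : ∀ i ⦃S T : Finset E⦄, S ⊆ T → val i S ≤ val i T
  graphical : ∀ i e, i ∉ ep e → ∀ S : Finset E, val i (insert e S) = val i S

variable {V E : Type}

/-- `P` is a partition of `F` into `d` (possibly empty) parts. -/
def IsPartitionInto [DecidableEq E] (d : ℕ) (P : Fin d → Finset E) (F : Finset E) : Prop :=
  (∀ s t : Fin d, s ≠ t → Disjoint (P s) (P t)) ∧ Finset.univ.biUnion P = F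

/-- The `1`-out-of-`d` maximin share value `μ^d(F)` of a valuation `v` on ground set `F`:
the maximum, over all partitions of `F` into `d` (possibly empty) parts, of the minimum
value of a part. -/
noncomputable def mms [DecidableEq E] (v : Finset E → ℝ) (d : ℕ) (F : Finset E) : ℝ :=
  sSup {x | ∃ P : Fin d → Finset E, IsPartitionInto d P F ∧ x = ⨅ t, v (P t)}

/-- An allocation: a family of pairwise disjoint bundles. -/
def IsAllocation [DecidableEq E] (X : V → Finset E) : Prop :=
  ∀ i j : V, i ≠ j → Disjoint (X i) (X j)

/-- An orientation: an allocation in which every item is given to one of its endpoints. -/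
def IsOrientation [DecidableEq E] (I : GraphInstance V E) (X : V → Finset E) : Prop :=
  IsAllocation X ∧ ∀ e : E, ∃ i, i ∈ I.ep e ∧ e ∈ X i

/-- Additive valuation. -/
def IsAdditiveVal [DecidableEq E] (v : Finset E → ℝ) : Prop :=
  ∀ S : Finset E, v S = ∑ e ∈ S, v {e}

/-- XOS (fractionally subadditive) valuation: the pointwise maximum of finitely many
additive functions with nonnegative singleton values. -/
def IsXOSVal [DecidableEq E] (v : Finset E → ℝ) : Prop :=
  ∃ (A : Finset (E → ℝ)) (hA : A.Nonempty),
    (∀ a ∈ A, ∀ e, 0 ≤ a e) ∧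
    ∀ S : Finset E, v S = A.sup' hA fun a => ∑ e ∈ S, a e

/-- Subadditive valuation. -/
def IsSubadditiveVal [DecidableEq E] (v : Finset E → ℝ) : Prop :=
  ∀ S T : Finset E, v (S ∪ T) ≤ v S + v T

/-- The PMMS threshold of agent `i` under allocation `X`:
`PMMS_i(X) = max_{j ≠ i} μ_i^2(X_i ∪ X_j)`. -/
noncomputable def pmmsVal [DecidableEq E] (I : GraphInstance V E) (X : V → Finset E)
    (i : V) : ℝ :=
  sSup {x | ∃ j : V, j ≠ i ∧ x = mms (I.val i) 2 (X i ∪ X j)}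

/-- A canonical 1-out-of-`d` MMS partition of the full ground set for valuation `v`:
a partition into `d` parts whose minimum part value equals `μ^d`. -/
def IsCanonicalPartition [DecidableEq E] [Fintype E] (v : Finset E → ℝ) (d : ℕ)
    (B : Fin d → Finset E) : Prop :=
  IsPartitionInto d B Finset.univ ∧ (⨅ t, v (B t)) = mms v d Finset.univ



namespace S1

set_option linter.unusedSectionVars false

variable {n : ℕ} {E : Type} [Fintype E] [DecidableEq E]

/-- Balanced partition: a nonempty finite set of nonneg weights can be split into
two parts whose sums differ by at most one element's weight. -/
lemma exists_balanced (w : E → ℝ) (hw : ∀ e, 0 ≤ w e) :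
    ∀ F : Finset E, F.Nonempty →
      ∃ e ∈ F, ∃ B ⊆ F,
        ∑ x ∈ F \ B, w x ≤ (∑ x ∈ B, w x) + w e ∧
        ∑ x ∈ B, w x ≤ (∑ x ∈ F \ B, w x) + w e := by
  intro F
  induction F using Finset.strongInduction with
  | _ F ih =>
    intro hF
    obtain ⟨e, heF, hemax⟩ := F.exists_max_image w hF
    rcases (F.erase e).eq_empty_or_nonempty with h0 | hne
    · have hFe : F = {e} := by
        apply Finset.eq_singleton_iff_unique_mem.mpr
        refine ⟨heF, fun x hx => ?_⟩
        by_contra hxe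
        exact (Finset.notMem_empty x) (h0 ▸ Finset.mem_erase.mpr ⟨hxe, hx⟩)
      refine ⟨e, heF, ∅, Finset.empty_subset _, ?_, ?_⟩
      · simp [hFe, hw e]
      · simp [hFe, hw e]
    · obtain ⟨e', he', B', hB', h1, h2⟩ := ih (F.erase e) (Finset.erase_ssubset heF) hne
      have he'F : e' ∈ F := Finset.mem_of_mem_erase he'
      have hwe' : w e' ≤ w e := hemax e' he'F
      have heB' : e ∉ B' := fun h => (Finset.mem_erase.mp (hB' h)).1 rfl
      have hB'F : B' ⊆ F := hB'.trans (Finset.erase_subset _ _)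
      rcases le_total (∑ x ∈ B', w x) (∑ x ∈ F.erase e \ B', w x) with hc | hc
      · have hFB : F \ insert e B' = F.erase e \ B' := by
          ext x
          simp only [Finset.mem_sdiff, Finset.mem_insert, Finset.mem_erase, not_or]
          tauto
        refine ⟨e, heF, insert e B', Finset.insert_subset heF hB'F, ?_, ?_⟩
        · rw [hFB, Finset.sum_insert heB']
          have := hw e
          linarith
        · rw [hFB, Finset.sum_insert heB']
          linarith
      · have hFB : F \ B' = insert e (F.erase e \ B') := by
          ext x
          simp only [Finset.mem_sdiff, Finset.mem_insert, Finset.mem_erase]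
          constructor
          · rintro ⟨hxF, hxB⟩
            by_cases hxe : x = e
            · exact Or.inl hxe
            · exact Or.inr ⟨⟨hxe, hxF⟩, hxB⟩
          · rintro (rfl | ⟨⟨hxe, hxF⟩, hxB⟩)
            · exact ⟨heF, heB'⟩
            · exact ⟨hxF, hxB⟩
        have heFB : e ∉ F.erase e \ B' := fun h =>
          (Finset.mem_erase.mp (Finset.mem_sdiff.mp h).1).1 rfl
        refine ⟨e, heF, B', hB'F, ?_, ?_⟩
        · rw [hFB, Finset.sum_insert heFB]
          linarith
        · rw [hFB, Finset.sum_insert heFB]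
          linarith

/-! ### endpoints, cutter and chooser -/

def mnq (q : Sym2 (Fin n)) : Fin n := Sym2.lift ⟨fun a b => min a b, fun a b => min_comm a b⟩ q

def mxq (q : Sym2 (Fin n)) : Fin n := Sym2.lift ⟨fun a b => max a b, fun a b => max_comm a b⟩ q

lemma mnq_mxq (q : Sym2 (Fin n)) : s(mnq q, mxq q) = q := by
  induction q using Sym2.ind with
  | _ a b =>
    rcases le_total a b with h | h
    · simp [mnq, mxq, Sym2.lift_mk, min_eq_left h, max_eq_right h]
    · rw [mnq, mxq, Sym2.lift_mk, Sym2.lift_mk]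
      simp only [min_eq_right h, max_eq_left h]
      exact Sym2.eq_swap

def v0 (hn : 2 ≤ n) : Fin n := ⟨0, by omega⟩
def v1 (hn : 2 ≤ n) : Fin n := ⟨1, by omega⟩
def vl (hn : 2 ≤ n) : Fin n := ⟨n - 1, by omega⟩

def spq (hn : 2 ≤ n) : Sym2 (Fin n) := s(v0 hn, vl hn)

/-- the cutter of a pair -/
noncomputable def cQ (hn : 2 ≤ n) (q : Sym2 (Fin n)) : Fin n :=
  if q = spq hn then v0 hn else mxq q

/-- the chooser of a pair -/
noncomputable def hQ (hn : 2 ≤ n) (q : Sym2 (Fin n)) : Fin n :=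
  if q = spq hn then vl hn else mnq q

lemma cq_hq (hn : 2 ≤ n) (q : Sym2 (Fin n)) : s(cQ hn q, hQ hn q) = q := by
  by_cases h : q = spq hn
  · subst h
    rw [cQ, hQ, if_pos rfl, if_pos rfl, spq]
  · simp only [cQ, hQ, if_neg h]
    rw [Sym2.eq_swap, mnq_mxq]

lemma cQ_mem (hn : 2 ≤ n) (q : Sym2 (Fin n)) : cQ hn q ∈ q := by
  have := Sym2.mem_mk_left (cQ hn q) (hQ hn q)
  rwa [cq_hq] at this

lemma hQ_mem (hn : 2 ≤ n) (q : Sym2 (Fin n)) : hQ hn q ∈ q := by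
  have := Sym2.mem_mk_right (cQ hn q) (hQ hn q)
  rwa [cq_hq] at this

lemma mem_cQ_or_hQ (hn : 2 ≤ n) {q : Sym2 (Fin n)} {i : Fin n} (hi : i ∈ q) :
    i = cQ hn q ∨ i = hQ hn q := by
  rw [← cq_hq hn q] at hi
  exact Sym2.mem_iff.mp hi

lemma cQ_ne_hQ (hn : 2 ≤ n) {q : Sym2 (Fin n)} (hq : ¬ q.IsDiag) : cQ hn q ≠ hQ hn q := by
  intro h
  apply hq
  rw [← cq_hq hn q, h]
  exact Sym2.mk_isDiag_iff.mpr rfl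

lemma cQ_eq_hQ (hn : 2 ≤ n) {q : Sym2 (Fin n)} (hq : q.IsDiag) : cQ hn q = hQ hn q := by
  rw [← cq_hq hn q] at hq
  exact Sym2.mk_isDiag_iff.mp hq

lemma sym2_eq_of_mem {α : Type*} {z : Sym2 α} {a b : α} (ha : a ∈ z) (hb : b ∈ z)
    (hab : a ≠ b) : z = s(a, b) := by
  induction z using Sym2.ind with
  | _ x y =>
    rcases Sym2.mem_iff.mp ha with rfl | rfl
    · rcases Sym2.mem_iff.mp hb with rfl | rfl
      · exact absurd rfl hab
      · rfl
    · rcases Sym2.mem_iff.mp hb with rfl | rfl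
      · exact Sym2.eq_swap
      · exact absurd rfl hab

end S1

-- part 2: construction
namespace S1

variable {n : ℕ} {E : Type} [Fintype E] [DecidableEq E]

def wgt (I : GraphInstance (Fin n) E) (i : Fin n) (e : E) : ℝ := I.val i {e}

lemma wgt_nonneg (I : GraphInstance (Fin n) E) (i : Fin n) (e : E) : 0 ≤ wgt I i e :=
  I.val_nonneg i {e}

lemma wgt_eq_zero (I : GraphInstance (Fin n) E) {i : Fin n} {e : E} (h : i ∉ I.ep e) :
    wgt I i e = 0 := by
  have h1 := I.graphical i e h ∅
  have h2 : ({e} : Finset E) = insert e ∅ := rfl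
  rw [wgt, h2, h1, I.val_empty]

lemma mem_ep_of_wgt_ne_zero (I : GraphInstance (Fin n) E) {i : Fin n} {e : E}
    (h : wgt I i e ≠ 0) : i ∈ I.ep e := by
  by_contra hc
  exact h (wgt_eq_zero I hc)

lemma val_eq_sum {I : GraphInstance (Fin n) E} (hadd : ∀ i, IsAdditiveVal (I.val i))
    (i : Fin n) (S : Finset E) : I.val i S = ∑ e ∈ S, wgt I i e := hadd i S

def FQ (I : GraphInstance (Fin n) E) (q : Sym2 (Fin n)) : Finset E :=
  univ.filter (fun e => I.ep e = q)

lemma mem_FQ {I : GraphInstance (Fin n) E} {q : Sym2 (Fin n)} {e : E} :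
    e ∈ FQ I q ↔ I.ep e = q := by simp [FQ]

lemma FQ_disjoint (I : GraphInstance (Fin n) E) {q q' : Sym2 (Fin n)} (h : q ≠ q') :
    Disjoint (FQ I q) (FQ I q') := by
  rw [Finset.disjoint_left]
  intro e he he'
  exact h ((mem_FQ.mp he).symm.trans (mem_FQ.mp he'))

lemma exists_Acut (I : GraphInstance (Fin n) E) (c : Fin n) (F : Finset E) :
    ∃ B, B ⊆ F ∧ ∀ B', B' ⊆ F →
      min (I.val c B') (I.val c (F \ B')) ≤ min (I.val c B) (I.val c (F \ B)) := by
  obtain ⟨B, hB, hmax⟩ := F.powerset.exists_max_image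
    (fun B => min (I.val c B) (I.val c (F \ B))) ⟨∅, Finset.mem_powerset.mpr (Finset.empty_subset _)⟩
  exact ⟨B, Finset.mem_powerset.mp hB, fun B' h' => hmax B' (Finset.mem_powerset.mpr h')⟩

noncomputable def Acut (hn : 2 ≤ n) (I : GraphInstance (Fin n) E) (q : Sym2 (Fin n)) :
    Finset E := (exists_Acut I (cQ hn q) (FQ I q)).choose

lemma Acut_subset (hn : 2 ≤ n) (I : GraphInstance (Fin n) E) (q : Sym2 (Fin n)) :
    Acut hn I q ⊆ FQ I q := (exists_Acut I (cQ hn q) (FQ I q)).choose_spec.1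

lemma Acut_max (hn : 2 ≤ n) (I : GraphInstance (Fin n) E) (q : Sym2 (Fin n))
    {B : Finset E} (hB : B ⊆ FQ I q) :
    min (I.val (cQ hn q) B) (I.val (cQ hn q) (FQ I q \ B)) ≤
      min (I.val (cQ hn q) (Acut hn I q)) (I.val (cQ hn q) (FQ I q \ Acut hn I q)) :=
  (exists_Acut I (cQ hn q) (FQ I q)).choose_spec.2 B hB

noncomputable def partC (hn : 2 ≤ n) (I : GraphInstance (Fin n) E) (q : Sym2 (Fin n)) :
    Finset E :=
  if q.IsDiag then FQ I q
  else if I.val (hQ hn q) (Acut hn I q) ≤ I.val (hQ hn q) (FQ I q \ Acut hn I q)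
    then Acut hn I q
    else FQ I q \ Acut hn I q

lemma partC_subset (hn : 2 ≤ n) (I : GraphInstance (Fin n) E) (q : Sym2 (Fin n)) :
    partC hn I q ⊆ FQ I q := by
  rw [partC]
  split_ifs
  · exact Finset.Subset.refl _
  · exact Acut_subset hn I q
  · exact Finset.sdiff_subset

/-- value of the cutter's kept part is at least any 2-partition min of the pair set -/
lemma partC_ge (hn : 2 ≤ n) (I : GraphInstance (Fin n) E) {q : Sym2 (Fin n)}
    (hd : ¬ q.IsDiag) {B : Finset E} (hB : B ⊆ FQ I q) :
    min (I.val (cQ hn q) B) (I.val (cQ hn q) (FQ I q \ B)) ≤ I.val (cQ hn q) (partC hn I q) := by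
  refine (Acut_max hn I q hB).trans ?_
  rw [partC, if_neg hd]
  split_ifs
  · exact min_le_left _ _
  · exact min_le_right _ _

/-- the chooser prefers the complement of the cutter's kept part -/
lemma partC_le_rest (hn : 2 ≤ n) (I : GraphInstance (Fin n) E) {q : Sym2 (Fin n)}
    (hd : ¬ q.IsDiag) :
    I.val (hQ hn q) (partC hn I q) ≤ I.val (hQ hn q) (FQ I q \ partC hn I q) := by
  rw [partC, if_neg hd]
  split_ifs with h
  · exact h
  · rw [Finset.sdiff_sdiff_eq_self (Acut_subset hn I q)]
    linarith [le_of_not_ge h]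

noncomputable def owner (hn : 2 ≤ n) (I : GraphInstance (Fin n) E) (e : E) : Fin n :=
  if e ∈ partC hn I (I.ep e) then cQ hn (I.ep e) else hQ hn (I.ep e)

lemma owner_mem (hn : 2 ≤ n) (I : GraphInstance (Fin n) E) (e : E) :
    owner hn I e ∈ I.ep e := by
  rw [owner]
  split_ifs
  · exact cQ_mem hn _
  · exact hQ_mem hn _

noncomputable def XA (hn : 2 ≤ n) (I : GraphInstance (Fin n) E) (i : Fin n) : Finset E :=
  univ.filter (fun e => owner hn I e = i)

lemma mem_XA {hn : 2 ≤ n} {I : GraphInstance (Fin n) E} {i : Fin n} {e : E} :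
    e ∈ XA hn I i ↔ owner hn I e = i := by simp [XA]

lemma XA_inter_FQ_c (hn : 2 ≤ n) (I : GraphInstance (Fin n) E) {q : Sym2 (Fin n)}
    (hd : ¬ q.IsDiag) : XA hn I (cQ hn q) ∩ FQ I q = partC hn I q := by
  ext e
  simp only [Finset.mem_inter, mem_XA, mem_FQ]
  constructor
  · rintro ⟨ho, hq⟩
    rw [owner, hq] at ho
    by_contra hm
    rw [if_neg hm] at ho
    exact cQ_ne_hQ hn hd ho.symm
  · intro hm
    have hq : I.ep e = q := mem_FQ.mp (partC_subset hn I q hm)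
    refine ⟨?_, hq⟩
    rw [owner, hq, if_pos hm]

lemma XA_inter_FQ_h (hn : 2 ≤ n) (I : GraphInstance (Fin n) E) {q : Sym2 (Fin n)}
    (hd : ¬ q.IsDiag) : XA hn I (hQ hn q) ∩ FQ I q = FQ I q \ partC hn I q := by
  ext e
  simp only [Finset.mem_inter, mem_XA, mem_FQ, Finset.mem_sdiff]
  constructor
  · rintro ⟨ho, hq⟩
    rw [owner, hq] at ho
    refine ⟨hq, fun hm => ?_⟩
    rw [if_pos hm] at ho
    exact cQ_ne_hQ hn hd ho
  · rintro ⟨hq, hm⟩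
    refine ⟨?_, hq⟩
    rw [owner, hq, if_neg hm]

lemma XA_inter_FQ_diag (hn : 2 ≤ n) (I : GraphInstance (Fin n) E) {q : Sym2 (Fin n)}
    (hd : q.IsDiag) {i : Fin n} (hi : i ∈ q) : XA hn I i ∩ FQ I q = FQ I q := by
  have hci : cQ hn q = i := by
    rcases mem_cQ_or_hQ hn hi with h | h
    · exact h.symm
    · rw [cQ_eq_hQ hn hd]; exact h.symm
  ext e
  simp only [Finset.mem_inter, mem_XA, mem_FQ]
  constructor
  · exact fun h => h.2
  · intro hq
    refine ⟨?_, hq⟩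
    have hm : e ∈ partC hn I q := by rw [partC, if_pos hd]; exact mem_FQ.mpr hq
    rw [owner, hq, if_pos hm, hci]

end S1

-- part 3: guarantees
namespace S1

set_option linter.unusedSectionVars false

variable {n : ℕ} {E : Type} [Fintype E] [DecidableEq E]

lemma val_sdiff_add {I : GraphInstance (Fin n) E} (hadd : ∀ i, IsAdditiveVal (I.val i))
    (i : Fin n) {B F : Finset E} (hB : B ⊆ F) :
    I.val i (F \ B) + I.val i B = I.val i F := by
  rw [val_eq_sum hadd, val_eq_sum hadd, val_eq_sum hadd]
  exact Finset.sum_sdiff hB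

/-- (G1): whoever agent `i` is in the pair `q`, the value of what `i` receives from the
pair set is at least the min of any 2-partition of the pair set. -/
lemma guarantee1 (hn : 2 ≤ n) {I : GraphInstance (Fin n) E}
    (hadd : ∀ i, IsAdditiveVal (I.val i)) {q : Sym2 (Fin n)} {i : Fin n} (hi : i ∈ q)
    {B : Finset E} (hB : B ⊆ FQ I q) :
    min (I.val i B) (I.val i (FQ I q \ B)) ≤ I.val i (XA hn I i ∩ FQ I q) := by
  by_cases hd : q.IsDiag
  · rw [XA_inter_FQ_diag hn I hd hi]
    exact (min_le_left _ _).trans (I.val_mono i hB)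
  · rcases mem_cQ_or_hQ hn hi with hc | hh
    · rw [hc, XA_inter_FQ_c hn I hd]
      exact partC_ge hn I hd hB
    · rw [hh, XA_inter_FQ_h hn I hd]
      have hkey := partC_le_rest hn I (q := q) hd
      have hs1 := val_sdiff_add hadd (hQ hn q) (hB.trans (le_refl _))
      have hs2 := val_sdiff_add hadd (hQ hn q) (partC_subset hn I q)
      rw [hh] at *
      rcases le_total (I.val (hQ hn q) B) (I.val (hQ hn q) (FQ I q \ B)) with h | h
      · rw [min_eq_left h]; linarith
      · rw [min_eq_right h]; linarith

/-- (G2): the cutter of a non-loop pair gets at least half the pair value minus half of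
one item. -/
lemma guarantee2 (hn : 2 ≤ n) {I : GraphInstance (Fin n) E}
    (hadd : ∀ i, IsAdditiveVal (I.val i)) {q : Sym2 (Fin n)} (hd : ¬ q.IsDiag)
    (hne : (FQ I q).Nonempty) :
    ∃ e ∈ FQ I q, I.val (cQ hn q) (FQ I q) ≤
      2 * I.val (cQ hn q) (XA hn I (cQ hn q) ∩ FQ I q) + wgt I (cQ hn q) e := by
  obtain ⟨e, he, B, hB, h1, h2⟩ :=
    exists_balanced (wgt I (cQ hn q)) (wgt_nonneg I (cQ hn q)) (FQ I q) hne
  refine ⟨e, he, ?_⟩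
  have hg1 := guarantee1 hn hadd (cQ_mem hn q) hB
  have hs := val_sdiff_add hadd (cQ hn q) hB
  rw [← val_eq_sum hadd, ← val_eq_sum hadd] at h1 h2
  rcases le_total (I.val (cQ hn q) B) (I.val (cQ hn q) (FQ I q \ B)) with h | h
  · rw [min_eq_left h] at hg1; linarith
  · rw [min_eq_right h] at hg1; linarith

/-- (G3): the chooser of a non-loop pair gets at least half the pair value. -/
lemma guarantee3 (hn : 2 ≤ n) {I : GraphInstance (Fin n) E}
    (hadd : ∀ i, IsAdditiveVal (I.val i)) {q : Sym2 (Fin n)} (hd : ¬ q.IsDiag) :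
    I.val (hQ hn q) (FQ I q) ≤ 2 * I.val (hQ hn q) (XA hn I (hQ hn q) ∩ FQ I q) := by
  rw [XA_inter_FQ_h hn I hd]
  have hkey := partC_le_rest hn I (q := q) hd
  have hs := val_sdiff_add hadd (hQ hn q) (partC_subset hn I q)
  linarith

/-- agent `i` receives all loops at `i`. -/
lemma guarantee_diag (hn : 2 ≤ n) (I : GraphInstance (Fin n) E) {q : Sym2 (Fin n)}
    (hd : q.IsDiag) {i : Fin n} (hi : i ∈ q) :
    I.val i (FQ I q) = I.val i (XA hn I i ∩ FQ I q) := by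
  rw [XA_inter_FQ_diag hn I hd hi]

/-! ### decompositions -/

def QI (i : Fin n) : Finset (Sym2 (Fin n)) := univ.filter (fun q => i ∈ q)

lemma val_univ_decomp {I : GraphInstance (Fin n) E} (hadd : ∀ i, IsAdditiveVal (I.val i))
    (i : Fin n) :
    I.val i (univ : Finset E) = ∑ q ∈ QI i, I.val i (FQ I q) := by
  have hdisj : (↑(QI i) : Set (Sym2 (Fin n))).PairwiseDisjoint (FQ I) := by
    intro q hq q' hq' hne
    exact FQ_disjoint I hne
  have hsum : ∑ e ∈ (QI i).biUnion (FQ I), wgt I i e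
      = ∑ q ∈ QI i, ∑ e ∈ FQ I q, wgt I i e := Finset.sum_biUnion hdisj
  rw [val_eq_sum hadd]
  calc ∑ e ∈ (univ : Finset E), wgt I i e
      = ∑ e ∈ (QI i).biUnion (FQ I), wgt I i e := by
        refine (Finset.sum_subset (Finset.subset_univ _) ?_).symm
        intro e _ he
        apply wgt_eq_zero
        intro hie
        apply he
        rw [Finset.mem_biUnion]
        exact ⟨I.ep e, by simp [QI, hie], mem_FQ.mpr rfl⟩
    _ = ∑ q ∈ QI i, ∑ e ∈ FQ I q, wgt I i e := hsum
    _ = ∑ q ∈ QI i, I.val i (FQ I q) := by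
        refine Finset.sum_congr rfl fun q _ => ?_
        rw [val_eq_sum hadd]

lemma XA_eq_biUnion (hn : 2 ≤ n) (I : GraphInstance (Fin n) E) (i : Fin n) :
    XA hn I i = (QI i).biUnion (fun q => XA hn I i ∩ FQ I q) := by
  ext e
  simp only [Finset.mem_biUnion, Finset.mem_inter]
  constructor
  · intro he
    refine ⟨I.ep e, ?_, he, mem_FQ.mpr rfl⟩
    have : owner hn I e = i := mem_XA.mp he
    simp [QI, this ▸ owner_mem hn I e]
  · rintro ⟨q, _, he, _⟩
    exact he

lemma val_XA_decomp (hn : 2 ≤ n) {I : GraphInstance (Fin n) E}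
    (hadd : ∀ i, IsAdditiveVal (I.val i)) (i : Fin n) :
    I.val i (XA hn I i) = ∑ q ∈ QI i, I.val i (XA hn I i ∩ FQ I q) := by
  have hdisj : (↑(QI i) : Set (Sym2 (Fin n))).PairwiseDisjoint
      (fun q => XA hn I i ∩ FQ I q) := by
    intro q hq q' hq' hne
    exact (FQ_disjoint I hne).mono Finset.inter_subset_right Finset.inter_subset_right
  conv_lhs => rw [XA_eq_biUnion hn I i]
  rw [val_eq_sum hadd, Finset.sum_biUnion hdisj]
  exact Finset.sum_congr rfl fun q _ => (val_eq_sum hadd i _).symm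

/-! ### the cutter count -/

noncomputable def CutQ (hn : 2 ≤ n) (I : GraphInstance (Fin n) E) (i : Fin n) : Finset (Sym2 (Fin n)) :=
  univ.filter (fun q => i ∈ q ∧ ¬ q.IsDiag ∧ cQ hn q = i ∧ (FQ I q).Nonempty)

lemma CutQ_subset_QI (hn : 2 ≤ n) (I : GraphInstance (Fin n) E) (i : Fin n) :
    CutQ hn I i ⊆ QI i := by
  intro q hq
  simp only [CutQ, Finset.mem_filter] at hq
  simp [QI, hq.2.1]

lemma mnq_le_mxq (q : Sym2 (Fin n)) : mnq q ≤ mxq q := by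
  induction q using Sym2.ind with
  | _ a b => rw [mnq, mxq, Sym2.lift_mk, Sym2.lift_mk]; exact min_le_max

lemma mnq_ne_mxq {q : Sym2 (Fin n)} (hd : ¬ q.IsDiag) : mnq q ≠ mxq q := by
  intro h
  apply hd
  rw [← mnq_mxq q, h]
  exact Sym2.mk_isDiag_iff.mpr rfl

lemma card_CutQ (hn : 2 ≤ n) (hn3 : 3 ≤ n) (I : GraphInstance (Fin n) E) (i : Fin n) :
    (CutQ hn I i).card ≤ n - 2 := by
  classical
  set z : Fin n := if i = v0 hn then v1 hn else if i = vl hn then v0 hn else vl hn with hz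
  have hiz : i ≠ z := by
    rw [hz]
    split_ifs with h1 h2
    · rw [h1]; intro h; rw [Fin.ext_iff] at h; simp [v0, v1] at h
    · rw [h2]; intro h; rw [Fin.ext_iff] at h; simp [v0, vl] at h; omega
    · exact h2
  have hmaps : ∀ q ∈ CutQ hn I i, hQ hn q ∈ univ \ ({i, z} : Finset (Fin n)) := by
    intro q hq
    simp only [CutQ, Finset.mem_filter] at hq
    obtain ⟨-, hi, hd, hc, -⟩ := hq
    rw [Finset.mem_sdiff]
    refine ⟨Finset.mem_univ _, ?_⟩
    simp only [Finset.mem_insert, Finset.mem_singleton, not_or]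
    constructor
    · intro h
      exact cQ_ne_hQ hn hd (hc.trans h.symm)
    · -- hQ hn q ≠ z
      by_cases hsp : q = spq hn
      · -- i = v0, hQ = vl
        have hcv : cQ hn q = v0 hn := by rw [cQ, if_pos hsp]
        have hiv : i = v0 hn := by rw [← hc, hcv]
        have hhv : hQ hn q = vl hn := by rw [hQ, if_pos hsp]
        rw [hhv, hz, if_pos hiv]
        intro h
        rw [Fin.ext_iff] at h
        simp [vl, v1] at h
        omega
      · have hcv : cQ hn q = mxq q := by rw [cQ, if_neg hsp]
        have hhv : hQ hn q = mnq q := by rw [hQ, if_neg hsp]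
        have hlt : mnq q < mxq q := lt_of_le_of_ne (mnq_le_mxq q) (mnq_ne_mxq hd)
        have him : i = mxq q := by rw [← hc, hcv]
        by_cases h1 : i = v0 hn
        · exfalso
          have : (mnq q : Fin n).val < (mxq q).val := hlt
          rw [← him, h1] at this
          simp [v0] at this
        · by_cases h2 : i = vl hn
          · rw [hz, if_neg h1, if_pos h2, hhv]
            intro h
            apply hsp
            rw [← mnq_mxq q, h, ← him, h2, spq]
          · rw [hz, if_neg h1, if_neg h2, hhv]
            intro h
            apply h2
            have hv : (mnq q).val < (mxq q).val := hlt
            rw [h] at hv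
            rw [← him] at hv
            simp [vl] at hv
            rw [Fin.ext_iff]
            simp [vl]
            omega
  have hinj : Set.InjOn (hQ hn) ↑(CutQ hn I i) := by
    intro q hq q' hq' heq
    simp only [Finset.mem_coe, CutQ, Finset.mem_filter] at hq hq'
    have h1 : q = s(i, hQ hn q) := by rw [← hq.2.2.2.1, cq_hq]
    have h2 : q' = s(i, hQ hn q') := by rw [← hq'.2.2.2.1, cq_hq]
    rw [h1, h2, heq]
  have hcard := Finset.card_le_card_of_injOn (hQ hn) hmaps hinj
  have hc2 : ({i, z} : Finset (Fin n)).card = 2 := by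
    rw [Finset.card_insert_of_notMem (by simpa using hiz), Finset.card_singleton]
  rw [Finset.card_sdiff_of_subset (Finset.subset_univ _), hc2, Finset.card_univ, Fintype.card_fin] at hcard
  exact hcard

end S1

-- part 4: core bounds
namespace S1

set_option linter.unusedSectionVars false
set_option maxHeartbeats 1000000

variable {n : ℕ} {E : Type} [Fintype E] [DecidableEq E]

lemma pmms_core (hn : 2 ≤ n) {I : GraphInstance (Fin n) E}
    (hadd : ∀ i, IsAdditiveVal (I.val i)) {i j : Fin n} (hij : j ≠ i)
    (P : Fin 2 → Finset E) (hPd : ∀ s t : Fin 2, s ≠ t → Disjoint (P s) (P t))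
    (hPc : Finset.univ.biUnion P = XA hn I i ∪ XA hn I j) :
    (⨅ t, I.val i (P t)) ≤ I.val i (XA hn I i) := by
  classical
  set q : Sym2 (Fin n) := s(i, j) with hqdef
  have hiq : i ∈ q := Sym2.mem_mk_left i j
  have hd : ¬ q.IsDiag := by
    rw [hqdef, Sym2.mk_isDiag_iff]
    exact fun h => hij h.symm
  have hFsub : FQ I q ⊆ XA hn I i ∪ XA hn I j := by
    intro e he
    have hep : I.ep e = q := mem_FQ.mp he
    have ho := owner_mem hn I e
    rw [hep, hqdef] at ho
    rcases Sym2.mem_iff.mp ho with h | h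
    · exact Finset.mem_union_left _ (mem_XA.mpr h)
    · exact Finset.mem_union_right _ (mem_XA.mpr h)
  set B : Finset E := P 0 ∩ FQ I q with hBdef
  have hB : B ⊆ FQ I q := Finset.inter_subset_right
  have hcompl : FQ I q \ B = P 1 ∩ FQ I q := by
    ext e
    simp only [Finset.mem_sdiff, hBdef, Finset.mem_inter, Finset.mem_coe]
    constructor
    · rintro ⟨hF, hnot⟩
      have heU : e ∈ P 0 ∨ e ∈ P 1 := by
        have : e ∈ Finset.univ.biUnion P := by rw [hPc]; exact hFsub hF
        obtain ⟨t, -, ht⟩ := Finset.mem_biUnion.mp this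
        fin_cases t
        · exact Or.inl ht
        · exact Or.inr ht
      rcases heU with h | h
      · exact absurd ⟨h, hF⟩ hnot
      · exact ⟨h, hF⟩
    · rintro ⟨h1, hF⟩
      refine ⟨hF, fun hc => ?_⟩
      exact (Finset.disjoint_left.mp (hPd 0 1 (by decide)) hc.1) h1
  have hG1 := guarantee1 hn hadd hiq hB
  have hpart : ∀ t : Fin 2,
      I.val i (P t) ≤ I.val i (P t ∩ FQ I q) + I.val i (XA hn I i \ FQ I q) := by
    intro t
    rw [val_eq_sum hadd, val_eq_sum hadd, val_eq_sum hadd]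
    have hsplit := Finset.sum_inter_add_sum_sdiff (P t) (FQ I q) (wgt I i)
    have hle : ∑ e ∈ P t \ FQ I q, wgt I i e
        ≤ ∑ e ∈ XA hn I i \ FQ I q, wgt I i e := by
      have heq : ∑ e ∈ (P t \ FQ I q) ∩ (XA hn I i \ FQ I q), wgt I i e
          = ∑ e ∈ P t \ FQ I q, wgt I i e := by
        apply Finset.sum_subset Finset.inter_subset_left
        intro e het hnot
        by_contra hw
        have hie : i ∈ I.ep e := mem_ep_of_wgt_ne_zero I hw
        obtain ⟨hePt, heF⟩ := Finset.mem_sdiff.mp het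
        have heU : e ∈ XA hn I i ∪ XA hn I j := by
          rw [← hPc]
          exact Finset.mem_biUnion.mpr ⟨t, Finset.mem_univ _, hePt⟩
        rcases Finset.mem_union.mp heU with h | h
        · exact hnot (Finset.mem_inter.mpr ⟨het, Finset.mem_sdiff.mpr ⟨h, heF⟩⟩)
        · have hje : j ∈ I.ep e := by
            rw [← mem_XA.mp h]
            exact owner_mem hn I e
          have : I.ep e = q := by
            rw [hqdef]
            exact sym2_eq_of_mem hie hje (fun h' => hij h'.symm)
          exact heF (mem_FQ.mpr this)
      rw [← heq]
      exact Finset.sum_le_sum_of_subset_of_nonneg Finset.inter_subset_right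
        (fun e _ _ => wgt_nonneg I i e)
    linarith
  have hbdd : BddBelow (Set.range fun t : Fin 2 => I.val i (P t)) :=
    Set.Finite.bddBelow (Set.finite_range _)
  have h0 := ciInf_le hbdd 0
  have h1 := ciInf_le hbdd 1
  have hXeq : I.val i (XA hn I i ∩ FQ I q) + I.val i (XA hn I i \ FQ I q)
      = I.val i (XA hn I i) := by
    rw [val_eq_sum hadd, val_eq_sum hadd, val_eq_sum hadd]
    exact Finset.sum_inter_add_sum_sdiff _ _ _
  have hp0 := hpart 0
  have hp1 := hpart 1
  rw [← hcompl] at hp1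
  rcases le_total (I.val i B) (I.val i (FQ I q \ B)) with h | h
  · rw [min_eq_left h] at hG1
    rw [← hBdef] at hp0
    linarith
  · rw [min_eq_right h] at hG1
    linarith

lemma mms_core (hn : 2 ≤ n) {I : GraphInstance (Fin n) E}
    (hadd : ∀ i, IsAdditiveVal (I.val i)) (i : Fin n) (P : Fin n → Finset E)
    (hPd : ∀ s t : Fin n, s ≠ t → Disjoint (P s) (P t))
    (hPc : Finset.univ.biUnion P = Finset.univ) :
    (⨅ t, I.val i (P t)) ≤ I.val i (XA hn I i) := by
  classical
  haveI : Nonempty (Fin n) := ⟨v0 hn⟩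
  have hbdd : BddBelow (Set.range fun t : Fin n => I.val i (P t)) :=
    Set.Finite.bddBelow (Set.finite_range _)
  rcases isEmpty_or_nonempty E with hE | hE
  · haveI := hE
    have hPt : ∀ t, P t = ∅ := fun t => Finset.eq_empty_of_isEmpty _
    have hconst : (⨅ t, I.val i (P t)) = I.val i (∅ : Finset E) := by
      rw [iInf_congr (fun t => by rw [hPt t])]
      exact ciInf_const
    rw [hconst, I.val_empty]
    exact I.val_nonneg _ _
  · haveI : Inhabited E := Classical.inhabited_of_nonempty hE
    rcases Nat.lt_or_ge n 3 with hn2' | hn3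
    · -- n = 2
      have hn2 : n = 2 := by omega
      set j : Fin n := if i = v0 hn then vl hn else v0 hn with hjdef
      have hv0l : v0 hn ≠ vl hn := fun h => by
        have h' : (0 : ℕ) = n - 1 := congrArg Fin.val h
        omega
      have hij : j ≠ i := by
        rw [hjdef]
        split_ifs with h
        · rw [h]; exact hv0l.symm
        · exact fun h' => h h'.symm
      set q : Sym2 (Fin n) := s(i, j) with hqdef
      set ql : Sym2 (Fin n) := s(i, i) with hqldef
      have hiq : i ∈ q := Sym2.mem_mk_left i j
      have hiql : i ∈ ql := Sym2.mem_mk_left i i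
      have hd : ¬ q.IsDiag := by
        rw [hqdef, Sym2.mk_isDiag_iff]
        exact fun h => hij h.symm
      have hdl : ql.IsDiag := by rw [hqldef]; exact Sym2.mk_isDiag_iff.mpr rfl
      have hq_ne : q ≠ ql := fun h => hd (h ▸ hdl)
      have key : ∀ e, wgt I i e ≠ 0 → I.ep e = q ∨ I.ep e = ql := by
        intro e hw
        have hie : i ∈ I.ep e := mem_ep_of_wgt_ne_zero I hw
        have hspec : s(i, Sym2.Mem.other hie) = I.ep e := Sym2.other_spec hie
        set o := Sym2.Mem.other hie with hodef
        by_cases ho : o = i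
        · right; rw [← hspec, ho, hqldef]
        · left
          have hoj : o = j := by
            rw [Fin.ext_iff]
            have h1 := o.is_lt
            have h2 := j.is_lt
            have h3 := i.is_lt
            have h4 : o.val ≠ i.val := fun h => ho (Fin.ext h)
            have h5 : j.val ≠ i.val := fun h => hij (Fin.ext h)
            omega
          rw [← hspec, hoj, hqdef]
      have hpart : ∀ t : Fin n,
          I.val i (P t) ≤ I.val i (P t ∩ FQ I q) + I.val i (FQ I ql) := by
        intro t
        rw [val_eq_sum hadd, val_eq_sum hadd, val_eq_sum hadd]
        have hsub : ∀ x ∈ P t, x ∉ P t ∩ (FQ I q ∪ FQ I ql) → wgt I i x = 0 := by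
          intro x hx hnx
          by_contra hw
          rcases key x hw with h | h
          · exact hnx (Finset.mem_inter.mpr
              ⟨hx, Finset.mem_union_left _ (mem_FQ.mpr h)⟩)
          · exact hnx (Finset.mem_inter.mpr
              ⟨hx, Finset.mem_union_right _ (mem_FQ.mpr h)⟩)
        have heq : ∑ x ∈ P t, wgt I i x = ∑ x ∈ P t ∩ (FQ I q ∪ FQ I ql), wgt I i x :=
          (Finset.sum_subset Finset.inter_subset_left hsub).symm
        rw [heq, Finset.inter_union_distrib_left,
          Finset.sum_union ((FQ_disjoint I hq_ne).mono Finset.inter_subset_right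
            Finset.inter_subset_right)]
        have : ∑ x ∈ P t ∩ FQ I ql, wgt I i x ≤ ∑ x ∈ FQ I ql, wgt I i x :=
          Finset.sum_le_sum_of_subset_of_nonneg Finset.inter_subset_right
            (fun e _ _ => wgt_nonneg I i e)
        linarith
      have hall : ∀ t : Fin n, t = v0 hn ∨ t = vl hn := by
        intro t
        have h1 := t.is_lt
        rw [Fin.ext_iff, Fin.ext_iff]
        simp only [v0, vl]
        omega
      set B : Finset E := P (v0 hn) ∩ FQ I q with hBdef
      have hB : B ⊆ FQ I q := Finset.inter_subset_right
      have hcompl : FQ I q \ B = P (vl hn) ∩ FQ I q := by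
        ext e
        simp only [Finset.mem_sdiff, hBdef, Finset.mem_inter]
        constructor
        · rintro ⟨hF, hnot⟩
          have : e ∈ Finset.univ.biUnion P := by
            rw [hPc]; exact Finset.mem_univ e
          obtain ⟨t, -, ht⟩ := Finset.mem_biUnion.mp this
          rcases hall t with rfl | rfl
          · exact absurd ⟨ht, hF⟩ hnot
          · exact ⟨ht, hF⟩
        · rintro ⟨h1, hF⟩
          refine ⟨hF, fun hc => ?_⟩
          exact (Finset.disjoint_left.mp (hPd _ _ hv0l) hc.1) h1
      have hG1 := guarantee1 hn hadd hiq hB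
      have hdiagval := guarantee_diag hn I hdl hiql
      have hfin : I.val i (XA hn I i ∩ FQ I q) + I.val i (XA hn I i ∩ FQ I ql)
          ≤ I.val i (XA hn I i) := by
        rw [val_eq_sum hadd, val_eq_sum hadd, val_eq_sum hadd]
        rw [← Finset.sum_union ((FQ_disjoint I hq_ne).mono Finset.inter_subset_right
          Finset.inter_subset_right)]
        refine Finset.sum_le_sum_of_subset_of_nonneg ?_ (fun e _ _ => wgt_nonneg I i e)
        exact Finset.union_subset Finset.inter_subset_left Finset.inter_subset_left
      have hI0 := ciInf_le hbdd (v0 hn)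
      have hI1 := ciInf_le hbdd (vl hn)
      have hp0 := hpart (v0 hn)
      have hp1 := hpart (vl hn)
      rw [← hcompl] at hp1
      rw [← hBdef] at hp0
      rcases le_total (I.val i B) (I.val i (FQ I q \ B)) with h | h
      · rw [min_eq_left h] at hG1
        linarith
      · rw [min_eq_right h] at hG1
        linarith
    · -- n ≥ 3
      have hG2 : ∀ q ∈ CutQ hn I i, ∃ e, e ∈ FQ I q ∧
          I.val i (FQ I q) ≤ 2 * I.val i (XA hn I i ∩ FQ I q) + wgt I i e := by
        intro q hq
        simp only [CutQ, Finset.mem_filter] at hq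
        obtain ⟨-, hiq, hdq, hc, hne⟩ := hq
        obtain ⟨e, he, hval⟩ := guarantee2 hn hadd hdq hne
        rw [hc] at hval
        exact ⟨e, he, hval⟩
      choose! ε hεF hεval using hG2
      have hφ' : ∀ q ∈ CutQ hn I i, ∃ t, ε q ∈ P t := by
        intro q hq
        have : ε q ∈ Finset.univ.biUnion P := by
          rw [hPc]; exact Finset.mem_univ _
        obtain ⟨t, -, ht⟩ := Finset.mem_biUnion.mp this
        exact ⟨t, ht⟩
      choose! φ hφ using hφ'
      set T : Finset (Fin n) := (CutQ hn I i).image φ with hTdef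
      set S : Finset E := (CutQ hn I i).image ε with hSdef
      have hQbound : ∀ q ∈ QI i, I.val i (FQ I q) ≤
          2 * I.val i (XA hn I i ∩ FQ I q) +
          (if q ∈ CutQ hn I i then wgt I i (ε q) else 0) := by
        intro q hqQI
        have hiq : i ∈ q := by
          simp only [QI, Finset.mem_filter] at hqQI
          exact hqQI.2
        by_cases hcut : q ∈ CutQ hn I i
        · rw [if_pos hcut]
          exact hεval q hcut
        · rw [if_neg hcut]
          by_cases hdq : q.IsDiag
          · have h1 := guarantee_diag hn I hdq hiq
            have h2 := I.val_nonneg i (XA hn I i ∩ FQ I q)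
            linarith
          · by_cases hc : cQ hn q = i
            · have hne : ¬ (FQ I q).Nonempty := by
                intro hne
                exact hcut (by simp [CutQ, hiq, hdq, hc, hne])
              rw [Finset.not_nonempty_iff_eq_empty.mp hne, I.val_empty]
              have := I.val_nonneg i (XA hn I i ∩ (∅ : Finset E))
              linarith
            · have hh : i = hQ hn q := by
                rcases mem_cQ_or_hQ hn hiq with h | h
                · exact absurd h.symm hc
                · exact h
              have h3 := guarantee3 hn hadd (I := I) (q := q) hdq
              rw [← hh] at h3
              linarith
      have hsum1 : I.val i (Finset.univ : Finset E) ≤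
          2 * I.val i (XA hn I i) + ∑ q ∈ CutQ hn I i, wgt I i (ε q) := by
        rw [val_univ_decomp hadd, val_XA_decomp hn hadd]
        have h1 := Finset.sum_le_sum hQbound
        rw [Finset.sum_add_distrib, Finset.sum_ite_mem,
          Finset.inter_eq_right.mpr (CutQ_subset_QI hn I i), ← Finset.mul_sum] at h1
        exact h1
      have hcards := card_CutQ hn hn3 I i
      have hTcard : T.card ≤ n - 2 := Finset.card_image_le.trans hcards
      have h2lt : 1 < ((Finset.univ : Finset (Fin n)) \ T).card := by
        rw [Finset.card_sdiff_of_subset (Finset.subset_univ _), Finset.card_univ, Fintype.card_fin]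
        omega
      obtain ⟨t₁, ht₁, t₂, ht₂, hne12⟩ := Finset.one_lt_card.mp h2lt
      have hSsum : ∑ e ∈ S, wgt I i e = ∑ q ∈ CutQ hn I i, wgt I i (ε q) := by
        rw [hSdef]
        apply Finset.sum_image
        intro x hx y hy hxy
        have h1 : I.ep (ε x) = x := mem_FQ.mp (hεF x hx)
        have h2 : I.ep (ε y) = y := mem_FQ.mp (hεF y hy)
        rw [← h1, ← h2, hxy]
      have hS12 : ∀ e ∈ S, e ∉ P t₁ ∪ P t₂ := by
        intro e heS hmem
        obtain ⟨q, hq, rfl⟩ := Finset.mem_image.mp heS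
        have hφq : φ q ∈ T := by rw [hTdef]; exact Finset.mem_image_of_mem φ hq
        rcases Finset.mem_union.mp hmem with h | h
        · have hne' : φ q ≠ t₁ := fun hEq => (Finset.mem_sdiff.mp ht₁).2 (hEq ▸ hφq)
          exact (Finset.disjoint_left.mp (hPd _ _ hne') (hφ q hq)) h
        · have hne' : φ q ≠ t₂ := fun hEq => (Finset.mem_sdiff.mp ht₂).2 (hEq ▸ hφq)
          exact (Finset.disjoint_left.mp (hPd _ _ hne') (hφ q hq)) h
      have hsum2 : I.val i (P t₁) + I.val i (P t₂) + ∑ e ∈ S, wgt I i e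
          ≤ I.val i (Finset.univ : Finset E) := by
        rw [val_eq_sum hadd, val_eq_sum hadd, val_eq_sum hadd]
        have hd12 : Disjoint (P t₁) (P t₂) := hPd _ _ hne12
        rw [← Finset.sum_union hd12]
        have hdS : Disjoint (P t₁ ∪ P t₂) S := Finset.disjoint_right.mpr hS12
        rw [← Finset.sum_union hdS]
        exact Finset.sum_le_sum_of_subset_of_nonneg (Finset.subset_univ _)
          (fun e _ _ => wgt_nonneg I i e)
      have hi1 := ciInf_le hbdd t₁
      have hi2 := ciInf_le hbdd t₂
      linarith

end S1

/-- In every multi-graph instance with `n ≥ 2` agents, all of whose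
valuations are additive, there exists an orientation `X` that is both MMS
(`v_i(X_i) ≥ μ_i^n` for every agent `i`) and PMMS (`v_i(X_i) ≥ PMMS_i(X)` for every
agent `i`). -/
theorem stmt1 {n : ℕ} (hn : 2 ≤ n) {E : Type} [Fintype E] [DecidableEq E]
    (I : GraphInstance (Fin n) E)
    (hadd : ∀ i, IsAdditiveVal (I.val i)) :
    ∃ X : Fin n → Finset E, IsOrientation I X ∧
      (∀ i, mms (I.val i) n Finset.univ ≤ I.val i (X i)) ∧
      (∀ i, pmmsVal I X i ≤ I.val i (X i)) := by
  classical
  refine ⟨S1.XA hn I, ⟨?_, ?_⟩, ?_, ?_⟩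
  · intro i j hij
    rw [Finset.disjoint_left]
    intro e hei hej
    exact hij ((S1.mem_XA.mp hei).symm.trans (S1.mem_XA.mp hej))
  · intro e
    exact ⟨S1.owner hn I e, S1.owner_mem hn I e, S1.mem_XA.mpr rfl⟩
  · intro i
    apply Real.sSup_le _ (I.val_nonneg _ _)
    rintro x ⟨P, ⟨hPd, hPc⟩, rfl⟩
    exact S1.mms_core hn hadd i P hPd hPc
  · intro i
    apply Real.sSup_le _ (I.val_nonneg _ _)
    rintro x ⟨j, hji, rfl⟩
    apply Real.sSup_le _ (I.val_nonneg _ _)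
    rintro y ⟨P, ⟨hPd, hPc⟩, rfl⟩
    exact S1.pmms_core hn hadd hji P hPd hPc
end

section
/- In every multi-graph instance with n ≥ 1 agents all of whose valuations are additive, there exists an orientation X with v_i(X_i) ≥ μ_i^3 for every agent i, i.e., a 1-out-of-3 MMS orientation. In particular, for n ≥ 3 this orientation satisfies v_i(X_i) ≥ μ_i^n for every agent i. -/
open Finset

variable {V E : Type}

namespace Stmt2Proof

variable {E : Type} [DecidableEq E]

/-- The `k`-th pair block of a list: elements whose index divided by 2 is `k`. -/
def pairSet (l : List E) (k : ℕ) : Finset E :=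
  l.toFinset.filter (fun e => l.idxOf e / 2 = k)

lemma mem_pairSet {l : List E} {k : ℕ} {e : E} :
    e ∈ pairSet l k ↔ e ∈ l ∧ l.idxOf e / 2 = k := by
  simp [pairSet]

lemma indexOf_eq_iff {l : List E} (hl : l.Nodup) {e : E} (he : e ∈ l)
    {m : ℕ} (hm : m < l.length) : l.idxOf e = m ↔ e = l[m] := by
  constructor
  · intro h
    have h2 : l.idxOf e < l.length := List.idxOf_lt_length_iff.2 he
    subst h
    exact (List.getElem_idxOf h2).symm
  · intro h
    subst h
    exact hl.idxOf_getElem m hm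

lemma pairSet_eq_pair {l : List E} (hl : l.Nodup) {k : ℕ} (h : 2*k+1 < l.length) :
    pairSet l k = {l[2*k]'(by omega), l[2*k+1]'h} := by
  ext e
  rw [mem_pairSet, Finset.mem_insert, Finset.mem_singleton]
  constructor
  · rintro ⟨he, hk⟩
    have hidx : l.idxOf e < l.length := List.idxOf_lt_length_iff.2 he
    have hor : l.idxOf e = 2*k ∨ l.idxOf e = 2*k+1 := by omega
    rcases hor with h1 | h1
    · exact Or.inl ((indexOf_eq_iff hl he (by omega)).1 h1)
    · exact Or.inr ((indexOf_eq_iff hl he h).1 h1)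
  · rintro (rfl | rfl)
    · exact ⟨List.getElem_mem _, by rw [hl.idxOf_getElem]; omega⟩
    · exact ⟨List.getElem_mem _, by rw [hl.idxOf_getElem]; omega⟩

lemma pairSet_card_eq_two {l : List E} (hl : l.Nodup) {k : ℕ} (h : 2*k+1 < l.length) :
    (pairSet l k).card = 2 := by
  rw [pairSet_eq_pair hl h]
  rw [Finset.card_insert_of_notMem, Finset.card_singleton]
  simp only [Finset.mem_singleton]
  intro hEq
  have h1 := hl.idxOf_getElem (2*k) (by omega)
  have h2 := hl.idxOf_getElem (2*k+1) h
  rw [hEq, h2] at h1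
  omega

variable {V : Type}

lemma sym2_exists_mem (s : Sym2 V) : ∃ i, i ∈ s := by
  induction s using Sym2.ind with
  | _ x y => exact ⟨x, by simp⟩

/-- Hall-based existence of a keeper assignment: every item is kept by an endpoint,
and for every agent `i` and every full pair in `i`'s list, some element is kept by `i`. -/
lemma exists_keeper (ep : E → Sym2 V) (L : V → List E)
    (hnd : ∀ i, (L i).Nodup) (hmemL : ∀ i e, e ∈ L i ↔ i ∈ ep e) :
    ∃ keeper : E → V, (∀ e, keeper e ∈ ep e) ∧
      ∀ i k, 2*k+1 < (L i).length → ∃ e ∈ pairSet (L i) k, keeper e = i := by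
  classical
  set ι := {c : V × ℕ // 2 * c.2 + 1 < (L c.1).length} with hι
  set t : ι → Finset E := fun c => pairSet (L c.1.1) c.1.2 with ht
  have hcard2 : ∀ c : ι, (t c).card = 2 := fun c => pairSet_card_eq_two (hnd _) c.2
  have hall : ∀ s : Finset ι, s.card ≤ (s.biUnion t).card := by
    intro s
    set B := s.biUnion t with hB
    have fiber_le : ∀ e : E, (s.filter (fun c => e ∈ t c)).card ≤ 2 := by
      intro e
      obtain ⟨x, y, hxy⟩ : ∃ x y, ep e = s(x, y) :=
        Sym2.ind (fun a b => ⟨a, b, rfl⟩) (ep e)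
      have : (s.filter (fun c => e ∈ t c)).card ≤ ({x, y} : Finset V).card := by
        classical
        apply Finset.card_le_card_of_injOn (fun c => c.1.1)
        · intro c hc
          simp only [Finset.mem_coe, Finset.mem_filter] at hc
          have := (mem_pairSet.1 hc.2).1
          have hmem := (hmemL c.1.1 e).1 this
          rw [hxy] at hmem
          simpa using hmem
        · intro c hc c' hc' hcc
          simp only [Finset.mem_coe, Finset.mem_filter] at hc hc'
          dsimp only at hcc
          have h1 := (mem_pairSet.1 hc.2).2
          have h2 := (mem_pairSet.1 hc'.2).2
          apply Subtype.ext
          apply Prod.ext hcc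
          rw [← h1, ← h2, hcc]
      calc (s.filter (fun c => e ∈ t c)).card ≤ ({x, y} : Finset V).card := this
        _ ≤ 2 := Finset.card_insert_le _ _ |>.trans (by simp)
    have hsub : ∀ c ∈ s, t c ⊆ B := fun c hc => Finset.subset_biUnion_of_mem t hc
    have key : ∑ c ∈ s, (t c).card = ∑ e ∈ B, (s.filter (fun c => e ∈ t c)).card := by
      have : ∀ c ∈ s, (t c).card = ∑ e ∈ B, (if e ∈ t c then 1 else 0) := by
        intro c hc
        rw [← Finset.card_filter]
        congr 1
        have : B.filter (fun e => e ∈ t c) = t c := by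
          ext e
          constructor
          · intro h; exact (Finset.mem_filter.1 h).2
          · intro h; exact Finset.mem_filter.2 ⟨hsub c hc h, h⟩
        rw [this]
      rw [Finset.sum_congr rfl this, Finset.sum_comm]
      refine Finset.sum_congr rfl fun e _ => ?_
      rw [Finset.card_filter]
    have h1 : 2 * s.card = ∑ c ∈ s, (t c).card := by
      rw [Finset.sum_congr rfl (fun c _ => hcard2 c), Finset.sum_const, smul_eq_mul]
      ring
    have h2 : ∑ e ∈ B, (s.filter (fun c => e ∈ t c)).card ≤ 2 * B.card := by
      calc ∑ e ∈ B, (s.filter (fun c => e ∈ t c)).card ≤ ∑ _e ∈ B, 2 :=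
            Finset.sum_le_sum fun e _ => fiber_le e
        _ = 2 * B.card := by rw [Finset.sum_const, smul_eq_mul]; ring
    omega
  obtain ⟨f, hfinj, hft⟩ := (Finset.all_card_le_biUnion_card_iff_exists_injective t).1 hall
  refine ⟨fun e => if h : ∃ c : ι, f c = e then (h.choose).1.1
    else (sym2_exists_mem (ep e)).choose, ?_, ?_⟩
  · intro e
    by_cases h : ∃ c : ι, f c = e
    · simp only [dif_pos h]
      have hspec := h.choose_spec
      have := hft h.choose
      rw [hspec] at this
      exact (hmemL _ e).1 (mem_pairSet.1 this).1
    · simp only [dif_neg h]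
      exact (sym2_exists_mem (ep e)).choose_spec
  · intro i k hk
    set c : ι := ⟨(i, k), hk⟩ with hc
    refine ⟨f c, hft c, ?_⟩
    have h : ∃ c' : ι, f c' = f c := ⟨c, rfl⟩
    simp only [dif_pos h]
    have : h.choose = c := hfinj h.choose_spec
    rw [this]

end Stmt2Proof

/-- In every multi-graph instance with `n ≥ 1` agents, all of whose
valuations are additive, there exists an orientation `X` with `v_i(X_i) ≥ μ_i^3` for
every agent `i` (a `1`-out-of-`3` MMS orientation); in particular, for `n ≥ 3` this
orientation satisfies `v_i(X_i) ≥ μ_i^n` for every agent `i`. -/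
theorem stmt2 {n : ℕ} (hn : 1 ≤ n) {E : Type} [Fintype E] [DecidableEq E]
    (I : GraphInstance (Fin n) E)
    (hadd : ∀ i, IsAdditiveVal (I.val i)) :
    ∃ X : Fin n → Finset E, IsOrientation I X ∧
      (∀ i, mms (I.val i) 3 Finset.univ ≤ I.val i (X i)) ∧
      (3 ≤ n → ∀ i, mms (I.val i) n Finset.univ ≤ I.val i (X i)) := by
  classical
  set w : Fin n → E → ℝ := fun i e => I.val i {e} with hw
  have hw0 : ∀ i e, 0 ≤ w i e := fun i e => I.val_nonneg i _
  have hwz : ∀ i e, i ∉ I.ep e → w i e = 0 := by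
    intro i e h
    have h2 := I.graphical i e h ∅
    rw [I.val_empty] at h2
    simpa [hw] using h2
  have hval : ∀ i S, I.val i S = ∑ e ∈ S, w i e := fun i S => hadd i S
  set L : Fin n → List E := fun i =>
    ((Finset.univ.filter (fun e => i ∈ I.ep e)).toList).mergeSort
      (fun a b => decide (w i b ≤ w i a)) with hLdef
  have hperm : ∀ i, (L i).Perm (Finset.univ.filter (fun e => i ∈ I.ep e)).toList :=
    fun i => List.mergeSort_perm _ _
  have hnd : ∀ i, (L i).Nodup := fun i => (hperm i).symm.nodup (Finset.nodup_toList _)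
  have hmemL : ∀ i e, e ∈ L i ↔ i ∈ I.ep e := by
    intro i e
    rw [(hperm i).mem_iff, Finset.mem_toList, Finset.mem_filter]
    simp
  have hsorted : ∀ i, (L i).Pairwise (fun a b => w i b ≤ w i a) := by
    intro i
    have h := List.pairwise_mergeSort
      (le := fun a b => decide (w i b ≤ w i a))
      (fun a b c h1 h2 => by
        simp only [decide_eq_true_eq] at *
        exact le_trans h2 h1)
      (fun a b => by
        simp only [Bool.or_eq_true, decide_eq_true_eq]
        exact (le_total (w i b) (w i a)).imp id id)
      ((Finset.univ.filter (fun e => i ∈ I.ep e)).toList)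
    exact h.imp (fun hab => by simpa using hab)
  have hmono : ∀ (i : Fin n), ∀ a ∈ L i, ∀ b ∈ L i,
      (L i).idxOf a ≤ (L i).idxOf b → w i b ≤ w i a := by
    intro i a ha b hb hab
    haveI : IsRefl E (fun x y => w i y ≤ w i x) := ⟨fun x => le_refl _⟩
    have h := (hsorted i).rel_get_of_le
      (a := ⟨(L i).idxOf a, List.idxOf_lt_length_iff.2 ha⟩)
      (b := ⟨(L i).idxOf b, List.idxOf_lt_length_iff.2 hb⟩) (Fin.mk_le_mk.2 hab)
    rwa [List.idxOf_get, List.idxOf_get] at h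
  obtain ⟨keeper, hk1, hk2⟩ := Stmt2Proof.exists_keeper I.ep L hnd hmemL
  set X : Fin n → Finset E := fun i => Finset.univ.filter (fun e => keeper e = i) with hX
  have hXmem : ∀ (i : Fin n) (e : E), e ∈ X i ↔ keeper e = i := by
    intro i e; simp [hX]
  have horient : IsOrientation I X := by
    constructor
    · intro i j hij
      rw [Finset.disjoint_left]
      intro e he1 he2
      rw [hXmem] at he1 he2
      exact hij (he1.symm.trans he2)
    · intro e
      exact ⟨keeper e, hk1 e, (hXmem _ e).2 rfl⟩
  have key : ∀ (i : Fin n) (d : ℕ), 3 ≤ d →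
      mms (I.val i) d Finset.univ ≤ I.val i (X i) := by
    intro i d hd
    apply Real.sSup_le _ (I.val_nonneg i _)
    rintro x ⟨P, ⟨hPdisj, hPcover⟩, rfl⟩
    set l := L i with hldef
    set Kset := Finset.univ.filter (fun e => i ∈ I.ep e ∧ keeper e = i) with hKs
    set Lset := Finset.univ.filter (fun e => i ∈ I.ep e ∧ keeper e ≠ i) with hLs
    have hXK : X i = Kset := by
      ext e
      rw [hXmem, hKs, Finset.mem_filter]
      constructor
      · intro h; exact ⟨Finset.mem_univ e, h ▸ hk1 e, h⟩
      · intro h; exact h.2.2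
    have hKw : ∀ e ∈ Kset, i ∈ I.ep e ∧ keeper e = i := by
      intro e he; rw [hKs, Finset.mem_filter] at he; exact he.2
    have hLw : ∀ e ∈ Lset, i ∈ I.ep e ∧ keeper e ≠ i := by
      intro e he; rw [hLs, Finset.mem_filter] at he; exact he.2
    have hsum_univ : ∑ e, w i e = (∑ e ∈ Kset, w i e) + ∑ e ∈ Lset, w i e := by
      rw [← Finset.sum_filter_add_sum_filter_not Finset.univ
        (fun e => i ∈ I.ep e ∧ keeper e = i) (fun e => w i e)]
      congr 1
      symm
      apply Finset.sum_subset
      · intro e he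
        have := hLw e he
        rw [Finset.mem_filter]
        exact ⟨Finset.mem_univ e, fun h => this.2 h.2⟩
      · intro e he hne
        rw [Finset.mem_filter] at he
        by_cases hep : i ∈ I.ep e
        · exfalso
          apply hne
          rw [hLs, Finset.mem_filter]
          exact ⟨Finset.mem_univ e, hep, fun hkeep => he.2 ⟨hep, hkeep⟩⟩
        · exact hwz i e hep
    have hpair_ne : ∀ e1 ∈ Lset, ∀ e2 ∈ Lset, e1 ≠ e2 →
        l.idxOf e1 / 2 ≠ l.idxOf e2 / 2 := by
      intro e1 he1 e2 he2 hne heq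
      have h1 := hLw e1 he1
      have h2 := hLw e2 he2
      have hm1 : e1 ∈ l := (hmemL i e1).2 h1.1
      have hm2 : e2 ∈ l := (hmemL i e2).2 h2.1
      have hi1 : l.idxOf e1 < l.length := List.idxOf_lt_length_iff.2 hm1
      have hi2 : l.idxOf e2 < l.length := List.idxOf_lt_length_iff.2 hm2
      have hn12 : l.idxOf e1 ≠ l.idxOf e2 :=
        fun h => hne ((List.idxOf_inj hm1).1 h)
      have hfull : 2*(l.idxOf e1 / 2)+1 < l.length := by omega
      obtain ⟨e, hepair, hekeep⟩ := hk2 i (l.idxOf e1 / 2) hfull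
      rw [Stmt2Proof.mem_pairSet] at hepair
      rw [← hldef] at hepair
      have hor : l.idxOf e = l.idxOf e1 ∨ l.idxOf e = l.idxOf e2 := by
        have := hepair.2
        omega
      rcases hor with h | h
      · exact h1.2 (((List.idxOf_inj hepair.1).1 h) ▸ hekeep)
      · exact h2.2 (((List.idxOf_inj hepair.1).1 h) ▸ hekeep)
    have hIlow : ∀ t : Fin d, (⨅ t, I.val i (P t)) ≤ I.val i (P t) := fun t =>
      ciInf_le ((Set.finite_range _).bddBelow) t
    rw [hval, hXK]
    by_cases hLempty : Lset = ∅
    · calc (⨅ t, I.val i (P t)) ≤ I.val i (P ⟨0, by omega⟩) := hIlow _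
        _ ≤ I.val i Finset.univ := I.val_mono i (Finset.subset_univ _)
        _ = ∑ e, w i e := hval i _
        _ = (∑ e ∈ Kset, w i e) + ∑ e ∈ Lset, w i e := hsum_univ
        _ = ∑ e ∈ Kset, w i e := by rw [hLempty]; simp
    · obtain ⟨f0, hf0L, hf0min⟩ := Finset.exists_min_image Lset (fun e => l.idxOf e)
        (Finset.nonempty_iff_ne_empty.2 hLempty)
      have hf0l : f0 ∈ l := (hmemL i f0).2 (hLw f0 hf0L).1
      -- the key sum inequality via the pairing injection
      have hφ : ∀ e ∈ Lset.erase f0, ∃ e', e' ∈ l ∧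
          l.idxOf e' / 2 = l.idxOf e / 2 - 1 ∧ 1 ≤ l.idxOf e / 2 ∧
          keeper e' = i ∧ w i e ≤ w i e' := by
        intro e he
        rw [Finset.mem_erase] at he
        have heL := hLw e he.2
        have hml : e ∈ l := (hmemL i e).2 heL.1
        have hidx : l.idxOf e < l.length := List.idxOf_lt_length_iff.2 hml
        have hlt : l.idxOf f0 < l.idxOf e := by
          have hle := hf0min e he.2
          have hne : l.idxOf f0 ≠ l.idxOf e :=
            fun h => he.1 ((List.idxOf_inj hml).1 h.symm)
          omega
        have hk1' : 1 ≤ l.idxOf e / 2 := by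
          by_contra hcon
          exact hpair_ne f0 hf0L e he.2 (fun h' => he.1 h'.symm) (by omega)
        have hfull : 2*(l.idxOf e / 2 - 1)+1 < l.length := by omega
        obtain ⟨e', he'p, he'k⟩ := hk2 i (l.idxOf e / 2 - 1) hfull
        rw [Stmt2Proof.mem_pairSet] at he'p
        rw [← hldef] at he'p
        refine ⟨e', he'p.1, he'p.2, hk1', he'k, ?_⟩
        apply hmono i e' he'p.1 e hml
        rw [← hldef]
        have := he'p.2
        omega
      choose φ hφ1 hφ2 hφ3 hφ4 hφ5 using hφ
      have hsumL : ∑ e ∈ Lset.erase f0, w i e ≤ ∑ e ∈ Kset, w i e := by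
        rw [← Finset.sum_attach (Lset.erase f0) (fun e => w i e)]
        calc ∑ e ∈ (Lset.erase f0).attach, w i e.1
            ≤ ∑ e ∈ (Lset.erase f0).attach, w i (φ e.1 e.2) :=
              Finset.sum_le_sum (fun e _ => hφ5 e.1 e.2)
          _ = ∑ e' ∈ (Lset.erase f0).attach.image (fun e => φ e.1 e.2), w i e' := by
              rw [Finset.sum_image]
              intro a _ b _ hab
              have hka : l.idxOf a.1 / 2 = l.idxOf b.1 / 2 := by
                have h2a := hφ2 a.1 a.2
                have h2b := hφ2 b.1 b.2
                have h3a := hφ3 a.1 a.2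
                have h3b := hφ3 b.1 b.2
                rw [show φ a.1 a.2 = φ b.1 b.2 from hab] at h2a
                omega
              by_cases hne : a.1 = b.1
              · exact Subtype.ext hne
              · exact absurd hka (hpair_ne a.1 (Finset.mem_of_mem_erase a.2) b.1
                  (Finset.mem_of_mem_erase b.2) hne)
          _ ≤ ∑ e ∈ Kset, w i e := by
              apply Finset.sum_le_sum_of_subset_of_nonneg
              · intro e' he'
                rw [Finset.mem_image] at he'
                obtain ⟨a, ha, rfl⟩ := he'
                rw [hKs, Finset.mem_filter]
                exact ⟨Finset.mem_univ _, (hmemL i _).1 (hφ1 a.1 a.2), hφ4 a.1 a.2⟩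
              · intro e _ _; exact hw0 i e
      obtain ⟨t0, -, hft0⟩ := Finset.mem_biUnion.1 (hPcover ▸ Finset.mem_univ f0)
      obtain ⟨a, b, hab, hat, hbt⟩ : ∃ a b : Fin d, a ≠ b ∧ a ≠ t0 ∧ b ≠ t0 := by
        by_cases h0 : t0 = ⟨0, by omega⟩
        · exact ⟨⟨1, by omega⟩, ⟨2, by omega⟩, by simp [Fin.ext_iff],
            by rw [h0]; simp [Fin.ext_iff], by rw [h0]; simp [Fin.ext_iff]⟩
        by_cases h1 : t0 = ⟨1, by omega⟩
        · exact ⟨⟨0, by omega⟩, ⟨2, by omega⟩, by simp [Fin.ext_iff],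
            by rw [h1]; simp [Fin.ext_iff], by rw [h1]; simp [Fin.ext_iff]⟩
        · exact ⟨⟨0, by omega⟩, ⟨1, by omega⟩, by simp [Fin.ext_iff],
            fun h => h0 h.symm, fun h => h1 h.symm⟩
      have hxa := hIlow a
      have hxb := hIlow b
      have hnotin : ∀ t : Fin d, t ≠ t0 → f0 ∉ P t := by
        intro t ht hmem
        exact Finset.disjoint_left.1 (hPdisj t t0 ht) hmem hft0
      have hsub : P a ∪ P b ⊆ Finset.univ.erase f0 := by
        intro e he
        rw [Finset.mem_union] at he
        rw [Finset.mem_erase]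
        refine ⟨?_, Finset.mem_univ e⟩
        rintro rfl
        rcases he with h | h
        · exact hnotin a hat h
        · exact hnotin b hbt h
      have hPab : I.val i (P a) + I.val i (P b) ≤ (∑ e, w i e) - w i f0 := by
        rw [hval i (P a), hval i (P b), ← Finset.sum_union (hPdisj a b hab)]
        have h1 : ∑ e ∈ P a ∪ P b, w i e ≤ ∑ e ∈ Finset.univ.erase f0, w i e :=
          Finset.sum_le_sum_of_subset_of_nonneg hsub (fun e _ _ => hw0 i e)
        have h2 : ∑ e ∈ Finset.univ.erase f0, w i e = (∑ e, w i e) - w i f0 :=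
          Finset.sum_erase_eq_sub (Finset.mem_univ f0)
        linarith
      have hLsplit : ∑ e ∈ Lset.erase f0, w i e = (∑ e ∈ Lset, w i e) - w i f0 :=
        Finset.sum_erase_eq_sub hf0L
      linarith
  exact ⟨X, horient, fun i => key i 3 le_rfl, fun h3 i => key i n h3⟩
end

section
/- Fix integers n ≥ 1, d ≥ 1 and a real α > 0. The following are equivalent: (a) every multi-graph instance with n agents all of whose valuations are XOS admits an allocation X with v_i(X_i) ≥ α·μ_i^d for every agent i; (b) for every multi-graph instance with n agents all of whose valuations are additive, and every choice of canonical 1-out-of-d MMS partitions (B_i)_{i ∈ V}, there exists an allocation X that is frugal with respect to (B_i)_{i ∈ V} and satisfies v_i(X_i) ≥ α·μ_i^d for every agent i. -/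
open Finset

variable {V E : Type}

set_option linter.unusedSectionVars false

section MmsHelpers
variable {E : Type} [DecidableEq E] [Fintype E]

lemma mmsSet_finite (v : Finset E → ℝ) (d : ℕ) (F : Finset E) :
    {x | ∃ P : Fin d → Finset E, IsPartitionInto d P F ∧ x = ⨅ t, v (P t)}.Finite :=
  (Set.finite_range fun P : Fin d → Finset E => ⨅ t, v (P t)).subset
    (by rintro x ⟨P, _, rfl⟩; exact ⟨P, rfl⟩)

lemma trivial_partition (d : ℕ) (hd : 0 < d) (F : Finset E) :
    IsPartitionInto d (fun t => if t = ⟨0, hd⟩ then F else ∅) F := by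
  constructor
  · intro s t hst
    by_cases hs : s = ⟨0, hd⟩
    · have ht : t ≠ ⟨0, hd⟩ := by rintro rfl; exact hst hs
      simp [hs, ht]
    · simp [hs]
  · apply Finset.Subset.antisymm
    · intro e he
      obtain ⟨t, _, he⟩ := Finset.mem_biUnion.1 he
      by_cases h : t = ⟨0, hd⟩ <;> simp [h] at he
      exact he
    · intro e he
      exact Finset.mem_biUnion.2 ⟨⟨0, hd⟩, Finset.mem_univ _, by simp [he]⟩

lemma mmsSet_nonempty (v : Finset E → ℝ) (d : ℕ) (hd : 0 < d) (F : Finset E) :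
    {x | ∃ P : Fin d → Finset E, IsPartitionInto d P F ∧ x = ⨅ t, v (P t)}.Nonempty :=
  ⟨_, _, trivial_partition d hd F, rfl⟩

lemma mms_mem (v : Finset E → ℝ) (d : ℕ) (hd : 0 < d) (F : Finset E) :
    mms v d F ∈ {x | ∃ P : Fin d → Finset E, IsPartitionInto d P F ∧ x = ⨅ t, v (P t)} :=
  (mmsSet_nonempty v d hd F).csSup_mem (mmsSet_finite v d F)

lemma part_subset {d : ℕ} {P : Fin d → Finset E} {F : Finset E}
    (hP : IsPartitionInto d P F) (t : Fin d) : P t ⊆ F := by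
  rw [← hP.2]; exact Finset.subset_biUnion_of_mem P (Finset.mem_univ t)

lemma mms_bddAbove (v : Finset E → ℝ) (d : ℕ) (hd : 0 < d)
    (hmono : ∀ ⦃S T : Finset E⦄, S ⊆ T → v S ≤ v T) (F : Finset E) :
    BddAbove {x | ∃ P : Fin d → Finset E, IsPartitionInto d P F ∧ x = ⨅ t, v (P t)} := by
  haveI : Nonempty (Fin d) := ⟨⟨0, hd⟩⟩
  refine ⟨v F, ?_⟩
  rintro x ⟨P, hP, rfl⟩
  exact le_trans (ciInf_le (Finite.bddBelow_range _) ⟨0, hd⟩) (hmono (part_subset hP _))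

lemma le_mms (v : Finset E → ℝ) (d : ℕ) (hd : 0 < d)
    (hmono : ∀ ⦃S T : Finset E⦄, S ⊆ T → v S ≤ v T) {P : Fin d → Finset E} {F : Finset E}
    (hP : IsPartitionInto d P F) : (⨅ t, v (P t)) ≤ mms v d F :=
  le_csSup (mms_bddAbove v d hd hmono F) ⟨P, hP, rfl⟩

lemma mms_nonneg (v : Finset E → ℝ) (d : ℕ) (hd : 0 < d)
    (h0 : ∀ S, 0 ≤ v S)
    (hmono : ∀ ⦃S T : Finset E⦄, S ⊆ T → v S ≤ v T) (F : Finset E) :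
    0 ≤ mms v d F := by
  haveI : Nonempty (Fin d) := ⟨⟨0, hd⟩⟩
  refine le_trans ?_ (le_mms v d hd hmono (trivial_partition d hd F))
  exact Real.iInf_nonneg fun t => h0 _

lemma partition_sum (w : E → ℝ) {d : ℕ} {P : Fin d → Finset E} {F : Finset E}
    (hP : IsPartitionInto d P F) : ∑ t, ∑ e ∈ P t, w e = ∑ e ∈ F, w e := by
  rw [← hP.2, Finset.sum_biUnion]
  intro a _ b _ hab
  exact hP.1 a b hab

lemma mms_le_of_avg (w : E → ℝ) (d : ℕ) (hd : 0 < d) (μ : ℝ) (F : Finset E)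
    (htot : ∑ e ∈ F, w e = d * μ) :
    mms (fun S => ∑ e ∈ S, w e) d F ≤ μ := by
  haveI : Nonempty (Fin d) := ⟨⟨0, hd⟩⟩
  rw [mms]
  refine csSup_le (mmsSet_nonempty (fun S => ∑ e ∈ S, w e) d hd F) ?_
  rintro x ⟨Q, hQ, rfl⟩
  by_contra h
  push_neg at h
  have hall : ∀ t : Fin d, μ < ∑ e ∈ Q t, w e := fun t =>
    lt_of_lt_of_le h (ciInf_le (Finite.bddBelow_range _) t)
  have : ∑ _t : Fin d, μ < ∑ t : Fin d, ∑ e ∈ Q t, w e :=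
    Finset.sum_lt_sum_of_nonempty Finset.univ_nonempty fun t _ => hall t
  rw [partition_sum w hQ, htot, Finset.sum_const, Finset.card_univ, Fintype.card_fin,
    nsmul_eq_mul] at this
  exact lt_irrefl _ this

end MmsHelpers


/-- Fix `n ≥ 1`, `d ≥ 1` and a real `α > 0`. The following are
equivalent: (a) every multi-graph instance with `n` XOS agents admits an allocation `X`
with `v_i(X_i) ≥ α·μ_i^d` for every agent `i`; (b) for every multi-graph instance with
`n` additive agents and every choice of canonical 1-out-of-`d` MMS partitions
`(B_i)_i`, there is an allocation `X` frugal with respect to `(B_i)_i` with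
`v_i(X_i) ≥ α·μ_i^d` for every agent `i`. -/
theorem stmt6 (n d : ℕ) (hn : 1 ≤ n) (hd : 1 ≤ d) (α : ℝ) (hα : 0 < α) :
    (∀ (E : Type) [Fintype E] [DecidableEq E] (I : GraphInstance (Fin n) E),
      (∀ i, IsXOSVal (I.val i)) →
      ∃ X : Fin n → Finset E, IsAllocation X ∧
        ∀ i, α * mms (I.val i) d Finset.univ ≤ I.val i (X i))
    ↔
    (∀ (E : Type) [Fintype E] [DecidableEq E] (I : GraphInstance (Fin n) E),
      (∀ i, IsAdditiveVal (I.val i)) →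
      ∀ B : Fin n → Fin d → Finset E,
        (∀ i, IsCanonicalPartition (I.val i) d (B i)) →
        ∃ X : Fin n → Finset E, IsAllocation X ∧
          (∀ i, ∃ t : Fin d, X i ⊆ B i t) ∧
          ∀ i, α * mms (I.val i) d Finset.univ ≤ I.val i (X i)) := by
  have hd0 : 0 < d := hd
  haveI : Nonempty (Fin d) := ⟨⟨0, hd0⟩⟩
  constructor
  · -- (a) → (b)
    intro ha E _ _ I hadd B hB
    classical
    have hunivne : (Finset.univ : Finset (Fin d)).Nonempty := Finset.univ_nonempty
    set a : Fin n → Fin d → E → ℝ :=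
      fun i t e => if e ∈ B i t then I.val i {e} else 0 with ha_def
    set v' : Fin n → Finset E → ℝ :=
      fun i S => (Finset.univ : Finset (Fin d)).sup' hunivne fun t => ∑ e ∈ S, a i t e with hv'def
    have ha0 : ∀ i t e, 0 ≤ a i t e := fun i t e => by
      by_cases h : e ∈ B i t <;> simp [ha_def, h, I.val_nonneg]
    have hv'0 : ∀ i S, 0 ≤ v' i S := by
      intro i S
      refine le_trans ?_ (Finset.le_sup' (fun t => ∑ e ∈ S, a i t e) (Finset.mem_univ ⟨0, hd0⟩))
      exact Finset.sum_nonneg fun e _ => ha0 i _ e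
    have hv'mono : ∀ i ⦃S T : Finset E⦄, S ⊆ T → v' i S ≤ v' i T := by
      intro i S T hST
      refine Finset.sup'_le _ _ fun t _ =>
        le_trans ?_ (Finset.le_sup' (fun t => ∑ e ∈ T, a i t e) (Finset.mem_univ t))
      exact Finset.sum_le_sum_of_subset_of_nonneg hST fun e _ _ => ha0 i t e
    have hsing0 : ∀ i e, i ∉ I.ep e → I.val i ({e} : Finset E) = 0 := by
      intro i e h
      have := I.graphical i e h ∅
      simpa [I.val_empty] using this
    let I' : GraphInstance (Fin n) E := {
      ep := I.ep
      val := v'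
      val_nonneg := hv'0
      val_empty := fun i => by simp [hv'def]
      val_mono := hv'mono
      graphical := by
        intro i e h S
        have hae : ∀ t, a i t e = 0 := fun t => by
          by_cases he : e ∈ B i t <;> simp [ha_def, he, hsing0 i e h]
        by_cases heS : e ∈ S
        · rw [Finset.insert_eq_self.2 heS]
        · simp only [hv'def]
          congr 1
          funext t
          rw [Finset.sum_insert heS, hae, zero_add] }
    have hI'val : ∀ i S, I'.val i S = v' i S := fun _ _ => rfl
    have hkey : ∀ i (t : Fin d) (S : Finset E), ∑ e ∈ S, a i t e = I.val i (S ∩ B i t) := by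
      intro i t S
      rw [ha_def]
      rw [Finset.sum_ite_mem]
      exact (hadd i (S ∩ B i t)).symm
    have hxos' : ∀ i, IsXOSVal (I'.val i) := by
      intro i
      refine ⟨Finset.image (fun t => a i t) Finset.univ, hunivne.image _, ?_, ?_⟩
      · intro g hg e
        obtain ⟨t, _, rfl⟩ := Finset.mem_image.1 hg
        exact ha0 i t e
      · intro S
        rw [hI'val, hv'def]
        rw [Finset.sup'_image]
        rfl
    have hvB : ∀ i t, v' i (B i t) = I.val i (B i t) := by
      intro i t
      refine le_antisymm (Finset.sup'_le _ _ fun s _ => ?_) ?_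
      · rw [hkey]
        exact I.val_mono i Finset.inter_subset_left
      · have := Finset.le_sup' (fun s => ∑ e ∈ B i t, a i s e) (Finset.mem_univ t)
        rw [hkey i t (B i t), Finset.inter_self] at this
        exact this
    have hmmsle : ∀ i, mms (I.val i) d Finset.univ ≤ mms (v' i) d Finset.univ := by
      intro i
      rw [← (hB i).2]
      have : (⨅ t, I.val i (B i t)) = ⨅ t, v' i (B i t) :=
        iInf_congr fun t => (hvB i t).symm
      rw [this]
      exact le_mms (v' i) d hd0 (hv'mono i) (hB i).1
    obtain ⟨X, hXalloc, hXval⟩ := ha E I' hxos'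
    have hchoose : ∀ i, ∃ t : Fin d, I'.val i (X i) = I.val i (X i ∩ B i t) := by
      intro i
      obtain ⟨t, _, hts⟩ := Finset.exists_mem_eq_sup' hunivne (fun t => ∑ e ∈ X i, a i t e)
      refine ⟨t, ?_⟩
      have h2 : I'.val i (X i) = ∑ e ∈ X i, a i t e := hts
      rw [h2, hkey]
    choose t ht using hchoose
    refine ⟨fun i => X i ∩ B i (t i),
      fun i j hij => (hXalloc i j hij).mono Finset.inter_subset_left Finset.inter_subset_left,
      fun i => ⟨t i, Finset.inter_subset_right⟩, fun i => ?_⟩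
    calc α * mms (I.val i) d Finset.univ
        ≤ α * mms (I'.val i) d Finset.univ := mul_le_mul_of_nonneg_left (hmmsle i) hα.le
      _ ≤ I'.val i (X i) := hXval i
      _ = I.val i (X i ∩ B i (t i)) := ht i
  · -- (b) → (a)
    intro hb E _ _ I hxos
    classical
    have hPex : ∀ i : Fin n, ∃ P : Fin d → Finset E,
        IsPartitionInto d P Finset.univ ∧ mms (I.val i) d Finset.univ = ⨅ t, I.val i (P t) :=
      fun i => mms_mem (I.val i) d hd0 Finset.univ
    choose P hPpart hPval using hPex
    set μ : Fin n → ℝ := fun i => mms (I.val i) d Finset.univ with hμdef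
    have hμ0 : ∀ i, 0 ≤ μ i := fun i => mms_nonneg _ d hd0 (I.val_nonneg i) (I.val_mono i) _
    have hμle : ∀ i t, μ i ≤ I.val i (P i t) := by
      intro i t
      show mms (I.val i) d Finset.univ ≤ I.val i (P i t)
      rw [hPval i]
      exact ciInf_le (Finite.bddBelow_range _) t
    have hgex : ∀ (i : Fin n) (t : Fin d), ∃ g : E → ℝ, (∀ e, 0 ≤ g e) ∧
        (∀ S : Finset E, ∑ e ∈ S, g e ≤ I.val i S) ∧ ∑ e ∈ P i t, g e = I.val i (P i t) := by
      intro i t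
      obtain ⟨A, hA, hA0, hAval⟩ := hxos i
      obtain ⟨g, hgA, hg⟩ := Finset.exists_mem_eq_sup' hA (fun a => ∑ e ∈ P i t, a e)
      refine ⟨g, fun e => hA0 g hgA e, fun S => ?_, ?_⟩
      · rw [hAval S]
        exact Finset.le_sup' (fun a => ∑ e ∈ S, a e) hgA
      · rw [← hg, ← hAval]
    choose g hg0 hgle hgeq using hgex
    have hτex : ∀ (i : Fin n) (e : E), ∃ t, e ∈ P i t := by
      intro i e
      have he : e ∈ Finset.univ.biUnion (P i) := by
        rw [(hPpart i).2]; exact Finset.mem_univ e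
      obtain ⟨t, _, ht⟩ := Finset.mem_biUnion.1 he
      exact ⟨t, ht⟩
    choose τ hτ using hτex
    have hτuniq : ∀ i e t, e ∈ P i t → τ i e = t := by
      intro i e t het
      by_contra h
      exact (Finset.disjoint_left.1 ((hPpart i).1 _ _ h) (hτ i e)) het
    set c : Fin n → Fin d → ℝ :=
      fun i t => if I.val i (P i t) = 0 then 0 else μ i / I.val i (P i t) with hcdef
    have hc0 : ∀ i t, 0 ≤ c i t := by
      intro i t
      simp only [hcdef]
      split
      · exact le_refl 0
      · exact div_nonneg (hμ0 i) (I.val_nonneg i _)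
    have hc1 : ∀ i t, c i t ≤ 1 := by
      intro i t
      simp only [hcdef]
      split
      · exact zero_le_one
      · exact div_le_one_of_le₀ (hμle i t) (I.val_nonneg i _)
    set w : Fin n → E → ℝ := fun i e => c i (τ i e) * g i (τ i e) e with hwdef
    have hw0 : ∀ i e, 0 ≤ w i e := fun i e => mul_nonneg (hc0 _ _) (hg0 _ _ _)
    have hwle : ∀ i e, w i e ≤ g i (τ i e) e := fun i e =>
      mul_le_of_le_one_left (hg0 _ _ _) (hc1 _ _)
    have hwpart : ∀ i t, ∑ e ∈ P i t, w i e = μ i := by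
      intro i t
      have h1 : ∑ e ∈ P i t, w i e = c i t * ∑ e ∈ P i t, g i t e := by
        rw [Finset.mul_sum]
        refine Finset.sum_congr rfl fun e he => ?_
        simp only [hwdef]
        rw [hτuniq i e t he]
      rw [h1, hgeq]
      simp only [hcdef]
      split
      · rename_i h
        rw [h, mul_zero]
        have h2 : μ i ≤ 0 := by rw [← h]; exact hμle i t
        exact (le_antisymm h2 (hμ0 i)).symm
      · rename_i h
        rw [div_mul_cancel₀ _ h]
    let I'' : GraphInstance (Fin n) E := {
      ep := I.ep
      val := fun i S => ∑ e ∈ S, w i e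
      val_nonneg := fun i S => Finset.sum_nonneg fun e _ => hw0 i e
      val_empty := fun i => Finset.sum_empty
      val_mono := fun i S T hST =>
        Finset.sum_le_sum_of_subset_of_nonneg hST fun e _ _ => hw0 i e
      graphical := by
        intro i e h S
        have hge : g i (τ i e) e = 0 := by
          have h1 : ∑ e' ∈ ({e} : Finset E), g i (τ i e) e' ≤ I.val i {e} := hgle i (τ i e) {e}
          have h2 : I.val i ({e} : Finset E) = 0 := by
            have h3 := I.graphical i e h ∅
            simpa [I.val_empty] using h3
          rw [Finset.sum_singleton, h2] at h1
          exact le_antisymm h1 (hg0 _ _ _)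
        have hwe : w i e = 0 := by
          simp only [hwdef]
          rw [hge, mul_zero]
        show ∑ e' ∈ insert e S, w i e' = ∑ e' ∈ S, w i e'
        by_cases heS : e ∈ S
        · rw [Finset.insert_eq_self.2 heS]
        · rw [Finset.sum_insert heS, hwe, zero_add] }
    have hI''val : ∀ i S, I''.val i S = ∑ e ∈ S, w i e := fun _ _ => rfl
    have hadd'' : ∀ i, IsAdditiveVal (I''.val i) := by
      intro i S
      rw [hI''val]
      refine Finset.sum_congr rfl fun e _ => ?_
      rw [hI''val, Finset.sum_singleton]
    have hmms'' : ∀ i, mms (I''.val i) d Finset.univ = μ i := by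
      intro i
      refine le_antisymm ?_ ?_
      · have htot : ∑ e ∈ (Finset.univ : Finset E), w i e = d * μ i := by
          rw [← partition_sum (w i) (hPpart i)]
          have h4 : ∀ t : Fin d, ∑ e ∈ P i t, w i e = μ i := hwpart i
          rw [Finset.sum_congr rfl fun t _ => h4 t, Finset.sum_const, Finset.card_univ,
            Fintype.card_fin, nsmul_eq_mul]
        exact mms_le_of_avg (w i) d hd0 (μ i) Finset.univ htot
      · have h5 : (⨅ t, I''.val i (P i t)) = μ i := by
          calc (⨅ t, I''.val i (P i t)) = ⨅ _t : Fin d, μ i :=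
                iInf_congr fun t => hwpart i t
            _ = μ i := ciInf_const
        rw [← h5]
        exact le_mms (I''.val i) d hd0 (I''.val_mono i) (hPpart i)
    have hcanon : ∀ i, IsCanonicalPartition (I''.val i) d (P i) := by
      intro i
      refine ⟨hPpart i, ?_⟩
      rw [hmms'' i]
      calc (⨅ t, I''.val i (P i t)) = ⨅ _t : Fin d, μ i := iInf_congr fun t => hwpart i t
        _ = μ i := ciInf_const
    obtain ⟨X, hXalloc, hXfrug, hXval⟩ := hb E I'' hadd'' P hcanon
    refine ⟨X, hXalloc, fun i => ?_⟩
    obtain ⟨t, hXsub⟩ := hXfrug i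
    have h1 : α * μ i ≤ I''.val i (X i) := by
      have h6 := hXval i
      rw [hmms'' i] at h6
      exact h6
    have h2 : I''.val i (X i) ≤ ∑ e ∈ X i, g i t e := by
      rw [hI''val]
      refine Finset.sum_le_sum fun e he => ?_
      have h7 : τ i e = t := hτuniq i e t (hXsub he)
      calc w i e ≤ g i (τ i e) e := hwle i e
        _ = g i t e := by rw [h7]
    exact le_trans h1 (le_trans h2 (hgle i t (X i)))
end

section
/- For every integer d ≥ 1, every multi-graph instance with n = 2 agents whose valuations are both XOS, and every choice of canonical 1-out-of-d MMS partitions (B_1, B_2), there exists an allocation X that is frugal with respect to (B_1, B_2) and satisfies v_i(X_i) ≥ (1 − 1/d)·μ_i^d for each agent i ∈ {1, 2}. -/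
open Finset

variable {V E : Type}

/-- For every `d ≥ 1`, every multi-graph instance with `n = 2` XOS
agents, and every choice of canonical 1-out-of-`d` MMS partitions `(B_1, B_2)`, there
exists an allocation `X` frugal with respect to `(B_1, B_2)` with
`v_i(X_i) ≥ (1 − 1/d)·μ_i^d` for each agent `i`. -/
theorem stmt7 (d : ℕ) (hd : 1 ≤ d) {E : Type} [Fintype E] [DecidableEq E]
    (I : GraphInstance (Fin 2) E) (hxos : ∀ i, IsXOSVal (I.val i))
    (B : Fin 2 → Fin d → Finset E)
    (hB : ∀ i, IsCanonicalPartition (I.val i) d (B i)) :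
    ∃ X : Fin 2 → Finset E, IsAllocation X ∧
      (∀ i, ∃ t : Fin d, X i ⊆ B i t) ∧
      ∀ i, (1 - 1 / (d : ℝ)) * mms (I.val i) d Finset.univ ≤ I.val i (X i) := by
  have hdpos : (0:ℝ) < d := by exact_mod_cast hd
  have hone : 1 / (d:ℝ) ≤ 1 := by
    rw [div_le_one hdpos]; exact_mod_cast hd
  have hnn : (0:ℝ) ≤ 1 - 1 / d := by
    have : 0 ≤ 1 / (d:ℝ) := by positivity
    linarith
  have hne : Nonempty (Fin d) := ⟨⟨0, hd⟩⟩
  obtain ⟨⟨hB0disj, hB0cov⟩, hB0mms⟩ := hB 0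
  obtain ⟨⟨hB1disj, hB1cov⟩, hB1mms⟩ := hB 1
  obtain ⟨A, hA, hpos, hval⟩ := hxos 1
  set s : Fin d := Classical.arbitrary (Fin d) with hs
  obtain ⟨a, haA, hEq⟩ := Finset.exists_mem_eq_sup' hA (fun a => ∑ e ∈ B 1 s, a e)
  have hsum : ∑ t, ∑ e ∈ B 1 s ∩ B 0 t, a e = ∑ e ∈ B 1 s, a e := by
    rw [← Finset.sum_biUnion]
    · congr 1
      ext e
      simp only [Finset.mem_biUnion, Finset.mem_inter, Finset.mem_univ, true_and]
      constructor
      · rintro ⟨t, he, _⟩; exact he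
      · intro he
        have he2 : e ∈ Finset.univ.biUnion (B 0) := by
          rw [hB0cov]; exact Finset.mem_univ e
        obtain ⟨t, _, ht⟩ := Finset.mem_biUnion.mp he2
        exact ⟨t, he, ht⟩
    · intro x hx y hy hxy
      exact ((hB0disj x y hxy).mono Finset.inter_subset_right Finset.inter_subset_right)
  obtain ⟨t, -, htmin⟩ := Finset.exists_min_image Finset.univ
      (fun t => ∑ e ∈ B 1 s ∩ B 0 t, a e) ⟨Classical.arbitrary _, Finset.mem_univ _⟩
  set M : ℝ := ∑ e ∈ B 1 s, a e with hM
  have hdmul : (d:ℝ) * (∑ e ∈ B 1 s ∩ B 0 t, a e) ≤ M := by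
    have h := Finset.card_nsmul_le_sum Finset.univ
      (fun t' => ∑ e ∈ B 1 s ∩ B 0 t', a e) (∑ e ∈ B 1 s ∩ B 0 t, a e)
      (fun t' ht' => htmin t' ht')
    rw [hsum] at h
    simpa [nsmul_eq_mul, Finset.card_univ] using h
  have hft : (∑ e ∈ B 1 s ∩ B 0 t, a e) ≤ M / d := by
    rw [le_div_iff₀ hdpos]; linarith
  refine ⟨![B 0 t, B 1 s \ B 0 t], ?_, ?_, ?_⟩
  · intro i j hij
    fin_cases i <;> fin_cases j <;> simp_all <;>
      [exact Finset.disjoint_sdiff; exact Finset.sdiff_disjoint]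
  · intro i
    fin_cases i
    · exact ⟨t, by simp⟩
    · exact ⟨s, by simpa using Finset.sdiff_subset⟩
  · have hbd0 : BddBelow (Set.range fun t' => I.val 0 (B 0 t')) :=
      (Set.finite_range _).bddBelow
    have hbd1 : BddBelow (Set.range fun t' => I.val 1 (B 1 t')) :=
      (Set.finite_range _).bddBelow
    intro i
    fin_cases i
    · have h1 : mms (I.val 0) d Finset.univ ≤ I.val 0 (B 0 t) := by
        rw [← hB0mms]; exact ciInf_le hbd0 t
      have h0 : 0 ≤ mms (I.val 0) d Finset.univ := by
        rw [← hB0mms]; exact le_ciInf fun t' => I.val_nonneg 0 _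
      have := mul_le_of_le_one_left h0 (by linarith [one_div_nonneg.mpr hdpos.le] : (1:ℝ) - 1/d ≤ 1)
      simpa using le_trans this h1
    · have hMval : I.val 1 (B 1 s) = M := by rw [hval]; exact hEq
      have hmms1 : mms (I.val 1) d Finset.univ ≤ M := by
        rw [← hB1mms, ← hMval]; exact ciInf_le hbd1 s
      have hlow : ∑ e ∈ B 1 s \ B 0 t, a e ≤ I.val 1 (B 1 s \ B 0 t) := by
        rw [hval]; exact Finset.le_sup' (fun a => ∑ e ∈ B 1 s \ B 0 t, a e) haA
      have hsd : ∑ e ∈ B 1 s \ B 0 t, a e = M - ∑ e ∈ B 1 s ∩ B 0 t, a e := by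
        rw [show B 1 s \ B 0 t = B 1 s \ (B 1 s ∩ B 0 t) from
          (Finset.sdiff_inter_self_left _ _).symm,
          Finset.sum_sdiff_eq_sub Finset.inter_subset_left]
      have hchain : (1 - 1/(d:ℝ)) * mms (I.val 1) d Finset.univ ≤ (1 - 1/(d:ℝ)) * M :=
        mul_le_mul_of_nonneg_left hmms1 hnn
      have hMd : (1 - 1/(d:ℝ)) * M = M - M / d := by ring
      simp only [Matrix.cons_val_one, Matrix.head_cons]
      calc (1 - 1/(d:ℝ)) * mms (I.val 1) d Finset.univ
          ≤ (1 - 1/(d:ℝ)) * M := hchain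
        _ = M - M / d := hMd
        _ ≤ M - ∑ e ∈ B 1 s ∩ B 0 t, a e := by linarith
        _ = ∑ e ∈ B 1 s \ B 0 t, a e := hsd.symm
        _ ≤ I.val 1 (B 1 s \ B 0 t) := hlow
end

section
/- For every integer n ≥ 2, every integer d ≥ 1 and every real ε > 0, there exists a multi-graph instance with n agents whose valuations are all XOS such that no allocation X satisfies v_i(X_i) ≥ (1 − 1/Δ_n(d) + ε)·μ_i^d for all agents i, where Δ_n(d) = ⌈(n−1)d/(2(n−2))⌉ if n is odd and Δ_n(d) = ⌈nd/(2(n−1))⌉ if n is even. -/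
open Finset

variable {V E : Type}

namespace Stmt14


/-- Ancestor (node, side) pairs of leaf `ℓ` in the balanced interval tree on `[a,b)`.
A node is an interval `(x, y)`; the side is `true` if the leaf is in the left half. -/
def anc (a b ℓ : ℕ) : Finset (ℕ × ℕ × Bool) :=
  if h : b - a < 2 then ∅
  else
    insert (a, b, decide (ℓ < (a + b) / 2))
      (if ℓ < (a + b) / 2 then anc a ((a + b) / 2) ℓ else anc ((a + b) / 2) b ℓ)
  termination_by b - a
  decreasing_by
  · omega
  · omega

lemma anc_empty {a b : ℕ} (h : b - a < 2) (ℓ : ℕ) : anc a b ℓ = ∅ := by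
  rw [anc]; simp [h]

lemma anc_eq_left {a b ℓ : ℕ} (h : ¬ b - a < 2) (hℓ : ℓ < (a + b) / 2) :
    anc a b ℓ = insert (a, b, true) (anc a ((a + b) / 2) ℓ) := by
  rw [anc]; simp [h, hℓ]

lemma anc_eq_right {a b ℓ : ℕ} (h : ¬ b - a < 2) (hℓ : ¬ ℓ < (a + b) / 2) :
    anc a b ℓ = insert (a, b, false) (anc ((a + b) / 2) b ℓ) := by
  rw [anc]; simp [h, hℓ]

lemma mem_anc_aux : ∀ (k a b ℓ x y : ℕ) (s : Bool), b - a ≤ k → a ≤ ℓ → ℓ < b →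
    (x, y, s) ∈ anc a b ℓ →
    a ≤ x ∧ x ≤ ℓ ∧ ℓ < y ∧ y ≤ b ∧ x + 2 ≤ y ∧ s = decide (ℓ < (x + y) / 2) := by
  intro k
  induction k with
  | zero => intro a b ℓ x y s hk h1 h2 _; omega
  | succ k ih =>
    intro a b ℓ x y s hk h1 h2 hm
    by_cases h : b - a < 2
    · rw [anc_empty h] at hm; simp at hm
    · by_cases hℓ : ℓ < (a + b) / 2
      · rw [anc_eq_left h hℓ] at hm
        rcases Finset.mem_insert.1 hm with hroot | hchild
        · obtain ⟨hx, hy, hs⟩ : x = a ∧ y = b ∧ s = true := by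
            simpa [Prod.ext_iff] using hroot
          subst hx; subst hy
          exact ⟨le_refl _, h1, h2, le_refl _, by omega, by simp [hs, hℓ]⟩
        · obtain ⟨c1, c2, c3, c4, c5, c6⟩ :=
            ih a ((a + b) / 2) ℓ x y s (by omega) h1 hℓ hchild
          exact ⟨c1, c2, c3, by omega, c5, c6⟩
      · rw [anc_eq_right h hℓ] at hm
        rcases Finset.mem_insert.1 hm with hroot | hchild
        · obtain ⟨hx, hy, hs⟩ : x = a ∧ y = b ∧ s = false := by
            simpa [Prod.ext_iff] using hroot
          subst hx; subst hy
          exact ⟨le_refl _, by omega, h2, le_refl _, by omega, by simp [hs, hℓ]⟩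
        · obtain ⟨c1, c2, c3, c4, c5, c6⟩ :=
            ih ((a + b) / 2) b ℓ x y s (by omega) (by omega) h2 hchild
          exact ⟨by omega, c2, c3, c4, c5, c6⟩

lemma mem_anc {a b ℓ x y : ℕ} {s : Bool} (h1 : a ≤ ℓ) (h2 : ℓ < b)
    (hm : (x, y, s) ∈ anc a b ℓ) :
    a ≤ x ∧ x ≤ ℓ ∧ ℓ < y ∧ y ≤ b ∧ x + 2 ≤ y ∧ s = decide (ℓ < (x + y) / 2) :=
  mem_anc_aux (b - a) a b ℓ x y s (le_refl _) h1 h2 hm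

/-- For every side-choice `σ` there is a leaf all of whose ancestor sides disagree with `σ`. -/
lemma walk (σ : ℕ × ℕ → Bool) : ∀ (k a b : ℕ), b - a ≤ k → a < b →
    ∃ ℓ, a ≤ ℓ ∧ ℓ < b ∧ ∀ x y s, (x, y, s) ∈ anc a b ℓ → s ≠ σ (x, y) := by
  intro k
  induction k with
  | zero => intro a b hk hab; omega
  | succ k ih =>
    intro a b hk hab
    by_cases h : b - a < 2
    · exact ⟨a, le_refl _, hab, fun x y s hm => by rw [anc_empty h] at hm; simp at hm⟩
    · by_cases hσ : σ (a, b) = true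
      · -- go right
        obtain ⟨ℓ, hl1, hl2, hl3⟩ := ih ((a + b) / 2) b (by omega) (by omega)
        refine ⟨ℓ, by omega, hl2, fun x y s hm => ?_⟩
        rw [anc_eq_right h (by omega)] at hm
        rcases Finset.mem_insert.1 hm with hroot | hchild
        · obtain ⟨hx, hy, hs⟩ : x = a ∧ y = b ∧ s = false := by
            simpa [Prod.ext_iff] using hroot
          subst hx; subst hy; rw [hs, hσ]; simp
        · exact hl3 x y s hchild
      · -- go left
        obtain ⟨ℓ, hl1, hl2, hl3⟩ := ih a ((a + b) / 2) (by omega) (by omega)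
        refine ⟨ℓ, hl1, by omega, fun x y s hm => ?_⟩
        rw [anc_eq_left h (by omega)] at hm
        rcases Finset.mem_insert.1 hm with hroot | hchild
        · obtain ⟨hx, hy, hs⟩ : x = a ∧ y = b ∧ s = true := by
            simpa [Prod.ext_iff] using hroot
          subst hx; subst hy; rw [hs]; simp [hσ]
        · exact hl3 x y s hchild


/-- Counting: splitting the Steiner tree at the root. -/
lemma split_count (a b : ℕ) (hab : 2 ≤ b - a) (L : Finset ℕ) (hL : L ⊆ Finset.Ico a b) :
    ((L.filter (fun ℓ => ℓ < (a + b) / 2)).biUnion (anc a ((a + b) / 2))).card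
      + ((L.filter (fun ℓ => ¬ ℓ < (a + b) / 2)).biUnion (anc ((a + b) / 2) b)).card
      + (if (L.filter (fun ℓ => ℓ < (a + b) / 2)).Nonempty then 1 else 0)
      + (if (L.filter (fun ℓ => ¬ ℓ < (a + b) / 2)).Nonempty then 1 else 0)
      ≤ (L.biUnion (anc a b)).card := by
  set c := (a + b) / 2 with hc
  have hac : a < c := by omega
  have hcb : c < b := by omega
  set L1 := L.filter (fun ℓ => ℓ < c) with hL1
  set L2 := L.filter (fun ℓ => ¬ ℓ < c) with hL2
  set A := L1.biUnion (anc a c) with hA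
  set B := L2.biUnion (anc c b) with hB
  set T := L.biUnion (anc a b) with hT
  have hmemL1 : ∀ ℓ ∈ L1, a ≤ ℓ ∧ ℓ < c := fun ℓ hℓ => by
    have h1 := Finset.mem_filter.1 hℓ
    have h2 := Finset.mem_Ico.1 (hL h1.1)
    exact ⟨h2.1, h1.2⟩
  have hmemL2 : ∀ ℓ ∈ L2, c ≤ ℓ ∧ ℓ < b ∧ ¬ ℓ < c := fun ℓ hℓ => by
    have h1 := Finset.mem_filter.1 hℓ
    have h2 := Finset.mem_Ico.1 (hL h1.1)
    exact ⟨by omega, h2.2, h1.2⟩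
  have hboundA : ∀ q ∈ A, a ≤ q.1 ∧ q.2.1 ≤ c ∧ q.1 + 2 ≤ q.2.1 := fun q hq => by
    obtain ⟨ℓ, hℓ, hq2⟩ := Finset.mem_biUnion.1 hq
    obtain ⟨m1, m2⟩ := hmemL1 ℓ hℓ
    obtain ⟨c1, _, _, c4, c5, _⟩ := mem_anc m1 m2 (show (q.1, q.2.1, q.2.2) ∈ _ from hq2)
    exact ⟨c1, c4, c5⟩
  have hboundB : ∀ q ∈ B, c ≤ q.1 ∧ q.2.1 ≤ b ∧ q.1 + 2 ≤ q.2.1 := fun q hq => by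
    obtain ⟨ℓ, hℓ, hq2⟩ := Finset.mem_biUnion.1 hq
    obtain ⟨m1, m2, _⟩ := hmemL2 ℓ hℓ
    obtain ⟨c1, _, _, c4, c5, _⟩ := mem_anc m1 m2 (show (q.1, q.2.1, q.2.2) ∈ _ from hq2)
    exact ⟨c1, c4, c5⟩
  have hAT : A ⊆ T := fun q hq => by
    obtain ⟨ℓ, hℓ, hq2⟩ := Finset.mem_biUnion.1 hq
    refine Finset.mem_biUnion.2 ⟨ℓ, Finset.filter_subset _ _ hℓ, ?_⟩
    rw [anc_eq_left (by omega) (hmemL1 ℓ hℓ).2]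
    exact Finset.mem_insert_of_mem hq2
  have hBT : B ⊆ T := fun q hq => by
    obtain ⟨ℓ, hℓ, hq2⟩ := Finset.mem_biUnion.1 hq
    refine Finset.mem_biUnion.2 ⟨ℓ, Finset.filter_subset _ _ hℓ, ?_⟩
    rw [anc_eq_right (by omega) (hmemL2 ℓ hℓ).2.2]
    exact Finset.mem_insert_of_mem hq2
  have hdisjAB : Disjoint A B := by
    rw [Finset.disjoint_left]
    intro q hqA hqB
    have b1 := hboundA q hqA
    have b2 := hboundB q hqB
    omega
  have hrootT : ∀ ℓ ∈ L, (a, b, decide (ℓ < c)) ∈ T := fun ℓ hℓ => by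
    refine Finset.mem_biUnion.2 ⟨ℓ, hℓ, ?_⟩
    by_cases hcase : ℓ < c
    · rw [anc_eq_left (by omega) hcase]; simp [hcase]
    · rw [anc_eq_right (by omega) hcase]; simp [hcase]
  have hnotA : ∀ s : Bool, (a, b, s) ∉ A := fun s hmem => by
    have := hboundA _ hmem; simp at this; omega
  have hnotB : ∀ s : Bool, (a, b, s) ∉ B := fun s hmem => by
    have := hboundB _ hmem; simp at this; omega
  have hcardAB : (A ∪ B).card = A.card + B.card := Finset.card_union_of_disjoint hdisjAB
  by_cases h1 : L1.Nonempty
  · by_cases h2 : L2.Nonempty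
    · -- both sides
      have h1c := h1
      obtain ⟨l1, hl1⟩ := h1c
      have h2c := h2
      obtain ⟨l2, hl2⟩ := h2c
      have ht1 : (a, b, true) ∈ T := by
        have := hrootT l1 (Finset.filter_subset _ _ hl1)
        simpa [(hmemL1 l1 hl1).2] using this
      have ht2 : (a, b, false) ∈ T := by
        have := hrootT l2 (Finset.filter_subset _ _ hl2)
        simpa [(hmemL2 l2 hl2).2.2] using this
      have hsub : insert (a, b, true) (insert (a, b, false) (A ∪ B)) ⊆ T := by
        intro q hq
        rcases Finset.mem_insert.1 hq with rfl | hq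
        · exact ht1
        rcases Finset.mem_insert.1 hq with rfl | hq
        · exact ht2
        rcases Finset.mem_union.1 hq with hq | hq
        · exact hAT hq
        · exact hBT hq
      have hcard : (insert (a, b, true) (insert (a, b, false) (A ∪ B))).card
          = A.card + B.card + 2 := by
        rw [Finset.card_insert_of_notMem, Finset.card_insert_of_notMem, hcardAB]
        · intro hmem
          rcases Finset.mem_union.1 hmem with h | h
          · exact hnotA _ h
          · exact hnotB _ h
        · intro hmem
          rcases Finset.mem_insert.1 hmem with h | h
          · simp at h
          rcases Finset.mem_union.1 h with h | h
          · exact hnotA _ h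
          · exact hnotB _ h
      have hle := Finset.card_le_card hsub
      rw [hcard] at hle
      simp only [if_pos h1, if_pos h2]
      omega
    · -- only left
      have hBempty : B = ∅ := by
        rw [hB, Finset.not_nonempty_iff_eq_empty.1 h2]; rfl
      have h1c := h1
      obtain ⟨l1, hl1⟩ := h1c
      have ht1 : (a, b, true) ∈ T := by
        have := hrootT l1 (Finset.filter_subset _ _ hl1)
        simpa [(hmemL1 l1 hl1).2] using this
      have hsub : insert (a, b, true) A ⊆ T := by
        intro q hq
        rcases Finset.mem_insert.1 hq with rfl | hq
        · exact ht1
        · exact hAT hq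
      have hcard : (insert (a, b, true) A).card = A.card + 1 :=
        Finset.card_insert_of_notMem (hnotA _)
      have hle := Finset.card_le_card hsub
      rw [hcard] at hle
      simp only [if_pos h1, if_neg h2, hBempty, Finset.card_empty]
      omega
  · by_cases h2 : L2.Nonempty
    · -- only right
      have hAempty : A = ∅ := by
        rw [hA, Finset.not_nonempty_iff_eq_empty.1 h1]; rfl
      have h2c := h2
      obtain ⟨l2, hl2⟩ := h2c
      have ht2 : (a, b, false) ∈ T := by
        have := hrootT l2 (Finset.filter_subset _ _ hl2)
        simpa [(hmemL2 l2 hl2).2.2] using this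
      have hsub : insert (a, b, false) B ⊆ T := by
        intro q hq
        rcases Finset.mem_insert.1 hq with rfl | hq
        · exact ht2
        · exact hBT hq
      have hcard : (insert (a, b, false) B).card = B.card + 1 :=
        Finset.card_insert_of_notMem (hnotB _)
      have hle := Finset.card_le_card hsub
      rw [hcard] at hle
      simp only [if_pos h2, if_neg h1, hAempty, Finset.card_empty]
      omega
    · -- neither
      have hAempty : A = ∅ := by
        rw [hA, Finset.not_nonempty_iff_eq_empty.1 h1]; rfl
      have hBempty : B = ∅ := by
        rw [hB, Finset.not_nonempty_iff_eq_empty.1 h2]; rfl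
      simp [if_neg h1, if_neg h2, hAempty, hBempty]


/-- Budget function for the Hall-type induction. -/
noncomputable def Bd (d D : ℕ) (p : ℕ) : ℤ :=
  max ((p : ℤ) * d - 2 * ((p : ℤ) - 1) * D) ((d : ℤ) - D)

lemma Bd_le_d {d D : ℕ} (hd2D : (d : ℤ) ≤ 2 * D) (p : ℕ) (hp : 1 ≤ p) :
    Bd d D p ≤ (d : ℤ) := by
  have hp' : (1 : ℤ) ≤ (p : ℤ) := by exact_mod_cast hp
  have hD : (0 : ℤ) ≤ (D : ℤ) := Int.ofNat_nonneg D
  refine max_le ?_ (by omega)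
  nlinarith [mul_nonneg (sub_nonneg.2 hp') (sub_nonneg.2 hd2D)]

lemma Bd_step_one {d D : ℕ} (hd2D : (d : ℤ) ≤ 2 * D) (p q : ℕ) (hp : 1 ≤ p) :
    Bd d D p ≤ (D : ℤ) + Bd d D q := by
  have h1 : Bd d D p ≤ (d : ℤ) := Bd_le_d hd2D p hp
  have h2 : (d : ℤ) - D ≤ Bd d D q := le_max_right _ _
  omega

lemma Bd_step_two {d D : ℕ} (hd2D : (d : ℤ) ≤ 2 * D) (p1 p2 : ℕ)
    (hp1 : 1 ≤ p1) (hp2 : 1 ≤ p2) :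
    Bd d D p1 + Bd d D p2 ≤ 2 * (D : ℤ) + Bd d D (p1 + p2) := by
  have hD : (0 : ℤ) ≤ (D : ℤ) := Int.ofNat_nonneg D
  have hb1 : Bd d D p1 ≤ (d : ℤ) := Bd_le_d hd2D p1 hp1
  have hb2 : Bd d D p2 ≤ (d : ℤ) := Bd_le_d hd2D p2 hp2
  have hf : ((p1 : ℤ) * d - 2 * ((p1 : ℤ) - 1) * D) + ((p2 : ℤ) * d - 2 * ((p2 : ℤ) - 1) * D)
      = ((p1 + p2 : ℕ) : ℤ) * d - 2 * (((p1 + p2 : ℕ) : ℤ) - 1) * D + 2 * D := by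
    push_cast; ring
  have hmax : ((p1 + p2 : ℕ) : ℤ) * d - 2 * (((p1 + p2 : ℕ) : ℤ) - 1) * D
      ≤ Bd d D (p1 + p2) := le_max_left _ _
  have hmax2 : (d : ℤ) - D ≤ Bd d D (p1 + p2) := le_max_right _ _
  rcases max_choice ((p1 : ℤ) * d - 2 * ((p1 : ℤ) - 1) * D) ((d : ℤ) - D) with he1 | he1 <;>
  rcases max_choice ((p2 : ℤ) * d - 2 * ((p2 : ℤ) - 1) * D) ((d : ℤ) - D) with he2 | he2 <;>
  unfold Bd <;> rw [he1, he2] <;>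
  [skip; skip; skip; omega]
  · omega
  · -- f(p1) + (d - D) ≤ 2D + Bd : f(p1) ≤ d
    have : (p1 : ℤ) * d - 2 * ((p1 : ℤ) - 1) * D ≤ (d : ℤ) := by
      have hp' : (1 : ℤ) ≤ (p1 : ℤ) := by exact_mod_cast hp1
      nlinarith [mul_nonneg (sub_nonneg.2 hp') (sub_nonneg.2 hd2D)]
    omega
  · have : (p2 : ℤ) * d - 2 * ((p2 : ℤ) - 1) * D ≤ (d : ℤ) := by
      have hp' : (1 : ℤ) ≤ (p2 : ℤ) := by exact_mod_cast hp2
      nlinarith [mul_nonneg (sub_nonneg.2 hp') (sub_nonneg.2 hd2D)]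
    omega

/-- Main Hall-type estimate on subtrees. -/
lemma hall_aux {d D : ℕ} (hd2D : (d : ℤ) ≤ 2 * D) :
    ∀ (k a b : ℕ), b - a ≤ k → a < b → ∀ L ⊆ Finset.Ico a b, L.Nonempty →
      (d : ℤ) * L.card ≤ (D : ℤ) * ((L.biUnion (anc a b)).card : ℤ) + Bd d D (b - a) := by
  intro k
  induction k with
  | zero => intro a b hk hab; omega
  | succ k ih =>
    intro a b hk hab L hL hLne
    by_cases h2 : b - a < 2
    · -- singleton interval
      have hb : b = a + 1 := by omega
      have hsub : L ⊆ {a} := by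
        intro x hx
        have := Finset.mem_Ico.1 (hL hx)
        simp; omega
      have hcard : L.card = 1 := by
        have h1 : L.card ≤ 1 := by
          simpa using Finset.card_le_card hsub
        have h0 : 1 ≤ L.card := Finset.Nonempty.card_pos hLne
        omega
      have hbu : L.biUnion (anc a b) = ∅ := by
        apply Finset.eq_empty_of_forall_notMem
        intro q hq
        obtain ⟨ℓ, _, hq2⟩ := Finset.mem_biUnion.1 hq
        rw [anc_empty h2] at hq2
        simp at hq2
      rw [hcard, hbu]
      have : Bd d D (b - a) = max ((1:ℤ) * d - 2 * ((1:ℤ) - 1) * D) ((d : ℤ) - D) := by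
        unfold Bd
        congr 2 <;> push_cast [show b - a = 1 by omega] <;> ring
      rw [this]
      have hD : (0 : ℤ) ≤ (D : ℤ) := Int.ofNat_nonneg D
      simp only [Finset.card_empty]
      have : max ((1:ℤ) * d - 2 * ((1:ℤ) - 1) * D) ((d : ℤ) - D) ≥ (d : ℤ) := by
        refine le_trans ?_ (le_max_left _ _); omega
      push_cast
      omega
    · -- split
      set c := (a + b) / 2 with hc
      have hac : a < c := by omega
      have hcb : c < b := by omega
      set L1 := L.filter (fun ℓ => ℓ < c) with hL1
      set L2 := L.filter (fun ℓ => ¬ ℓ < c) with hL2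
      have hL1sub : L1 ⊆ Finset.Ico a c := by
        intro x hx
        have h1 := Finset.mem_filter.1 hx
        have hI := Finset.mem_Ico.1 (hL h1.1)
        exact Finset.mem_Ico.2 ⟨hI.1, h1.2⟩
      have hL2sub : L2 ⊆ Finset.Ico c b := by
        intro x hx
        have h1 := Finset.mem_filter.1 hx
        have hI := Finset.mem_Ico.1 (hL h1.1)
        exact Finset.mem_Ico.2 ⟨by omega, hI.2⟩
      have hcards : L1.card + L2.card = L.card :=
        Finset.card_filter_add_card_filter_not _
      have hsc := split_count a b (by omega) L hL
      rw [← hc] at hsc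
      rw [← hL1, ← hL2] at hsc
      set A := L1.biUnion (anc a c) with hA
      set B := L2.biUnion (anc c b) with hB
      set T := L.biUnion (anc a b) with hT
      have hD : (0 : ℤ) ≤ (D : ℤ) := Int.ofNat_nonneg D
      by_cases hn1 : L1.Nonempty
      · by_cases hn2 : L2.Nonempty
        · have ih1 := ih a c (by omega) hac L1 hL1sub hn1
          have ih2 := ih c b (by omega) hcb L2 hL2sub hn2
          rw [← hA] at ih1
          rw [← hB] at ih2
          have hstep := Bd_step_two hd2D (c - a) (b - c) (by omega) (by omega)
          have hpsum : c - a + (b - c) = b - a := by omega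
          rw [hpsum] at hstep
          have hTcard : (A.card : ℤ) + B.card + 2 ≤ (T.card : ℤ) := by
            rw [if_pos hn1, if_pos hn2] at hsc
            exact_mod_cast hsc
          have hcast : ((L1.card : ℤ) + L2.card) = (L.card : ℤ) := by exact_mod_cast hcards
          have hmul := mul_le_mul_of_nonneg_left hTcard hD
          have hexp : (D:ℤ) * ((A.card:ℤ) + B.card + 2) = D * (A.card:ℤ) + D * (B.card:ℤ) + 2 * D := by ring
          have hdist : (d:ℤ) * (L.card:ℤ) = (d:ℤ) * (L1.card:ℤ) + (d:ℤ) * (L2.card:ℤ) := by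
            rw [← hcast]; ring
          linarith [ih1, ih2, hstep]
        · have hL2e : L2 = ∅ := Finset.not_nonempty_iff_eq_empty.1 hn2
          have hLeq : L1 = L := by
            have := hcards
            rw [hL2e] at this
            simp at this
            exact Finset.eq_of_subset_of_card_le (Finset.filter_subset _ _) (by omega)
          have ih1 := ih a c (by omega) hac L1 hL1sub hn1
          rw [← hA] at ih1
          have hstep := Bd_step_one hd2D (c - a) (b - a) (by omega)
          have hBe : B = ∅ := by rw [hB, hL2e]; simp
          have hTcard : (A.card : ℤ) + 1 ≤ (T.card : ℤ) := by
            rw [if_pos hn1, if_neg hn2, hBe] at hsc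
            simp at hsc
            exact_mod_cast hsc
          rw [hLeq] at ih1
          have hmul := mul_le_mul_of_nonneg_left hTcard hD
          have hexp : (D:ℤ) * ((A.card:ℤ) + 1) = D * (A.card:ℤ) + D := by ring
          linarith [ih1, hstep]
      · have hL1e : L1 = ∅ := Finset.not_nonempty_iff_eq_empty.1 hn1
        have hn2 : L2.Nonempty := by
          rcases hLne with ⟨x, hx⟩
          by_cases hxc : x < c
          · exfalso
            have : x ∈ L1 := Finset.mem_filter.2 ⟨hx, hxc⟩
            rw [hL1e] at this
            simp at this
          · exact ⟨x, Finset.mem_filter.2 ⟨hx, hxc⟩⟩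
        have hLeq : L2 = L := by
          have := hcards
          rw [hL1e] at this
          simp at this
          exact Finset.eq_of_subset_of_card_le (Finset.filter_subset _ _) (by omega)
        have ih2 := ih c b (by omega) hcb L2 hL2sub hn2
        rw [← hB] at ih2
        have hstep := Bd_step_one hd2D (b - c) (b - a) (by omega)
        have hAe : A = ∅ := by rw [hA, hL1e]; simp
        have hTcard : (B.card : ℤ) + 1 ≤ (T.card : ℤ) := by
          rw [if_neg hn1, if_pos hn2, hAe] at hsc
          simp at hsc
          exact_mod_cast hsc
        rw [hLeq] at ih2
        have hmul := mul_le_mul_of_nonneg_left hTcard hD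
        have hexp : (D:ℤ) * ((B.card:ℤ) + 1) = D * (B.card:ℤ) + D := by ring
        linarith [ih2, hstep]

/-- Root estimate: for an even ground interval `[0, N)` with `N*d ≤ 2*(N-1)*D`. -/
lemma hall_root {d D N : ℕ} (hd2D : (d : ℤ) ≤ 2 * D) (hNe : 2 * (N / 2) = N)
    (hN2 : 2 ≤ N) (hkey : (N : ℤ) * d ≤ 2 * ((N : ℤ) - 1) * D) :
    ∀ L ⊆ Finset.Ico 0 N, (d : ℤ) * L.card ≤ (D : ℤ) * ((L.biUnion (anc 0 N)).card : ℤ) := by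
  intro L hL
  rcases Finset.eq_empty_or_nonempty L with rfl | hLne
  · simp
  have hD : (0 : ℤ) ≤ (D : ℤ) := Int.ofNat_nonneg D
  set c := (0 + N) / 2 with hc
  have hcN : 2 * c = N := by omega
  have hBdc : Bd d D c ≤ (D : ℤ) := by
    have hcc : ((c : ℕ) : ℤ) * 2 = (N : ℤ) := by
      push_cast [← hcN]; ring
    refine max_le ?_ (by omega)
    nlinarith [hkey, hcc]
  have hac : 0 < c := by omega
  have hcb : c < N := by omega
  set L1 := L.filter (fun ℓ => ℓ < c) with hL1
  set L2 := L.filter (fun ℓ => ¬ ℓ < c) with hL2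
  have hL1sub : L1 ⊆ Finset.Ico 0 c := by
    intro x hx
    have h1 := Finset.mem_filter.1 hx
    exact Finset.mem_Ico.2 ⟨Nat.zero_le _, h1.2⟩
  have hL2sub : L2 ⊆ Finset.Ico c N := by
    intro x hx
    have h1 := Finset.mem_filter.1 hx
    have hI := Finset.mem_Ico.1 (hL h1.1)
    exact Finset.mem_Ico.2 ⟨by omega, hI.2⟩
  have hcards : L1.card + L2.card = L.card :=
    Finset.card_filter_add_card_filter_not _
  have hsc := split_count 0 N (by omega) L hL
  rw [← hc] at hsc
  rw [← hL1, ← hL2] at hsc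
  set A := L1.biUnion (anc 0 c) with hA
  set B := L2.biUnion (anc c N) with hB
  set T := L.biUnion (anc 0 N) with hT
  have hca : c - 0 = c := by omega
  by_cases hn1 : L1.Nonempty
  · by_cases hn2 : L2.Nonempty
    · have ih1 := hall_aux hd2D c 0 c (le_refl _) hac L1 hL1sub hn1
      have ih2 := hall_aux hd2D (N - c) c N (le_refl _) hcb L2 hL2sub hn2
      rw [← hA, hca] at ih1
      rw [← hB] at ih2
      have hBd2 : Bd d D (N - c) ≤ (D : ℤ) := by
        have : N - c = c := by omega
        rw [this]; exact hBdc
      have hTcard : (A.card : ℤ) + B.card + 2 ≤ (T.card : ℤ) := by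
        rw [if_pos hn1, if_pos hn2] at hsc
        exact_mod_cast hsc
      have hcast : ((L1.card : ℤ) + L2.card) = (L.card : ℤ) := by exact_mod_cast hcards
      have hmul := mul_le_mul_of_nonneg_left hTcard hD
      have hexp : (D:ℤ) * ((A.card:ℤ) + B.card + 2) = D * (A.card:ℤ) + D * (B.card:ℤ) + 2 * D := by ring
      have hdist : (d:ℤ) * (L.card:ℤ) = (d:ℤ) * (L1.card:ℤ) + (d:ℤ) * (L2.card:ℤ) := by
        rw [← hcast]; ring
      linarith [ih1, ih2, hBdc, hBd2]
    · have hL2e : L2 = ∅ := Finset.not_nonempty_iff_eq_empty.1 hn2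
      have hLeq : L1 = L := by
        have := hcards
        rw [hL2e] at this
        simp at this
        exact Finset.eq_of_subset_of_card_le (Finset.filter_subset _ _) (by omega)
      have ih1 := hall_aux hd2D c 0 c (le_refl _) hac L1 hL1sub hn1
      rw [← hA, hca] at ih1
      have hBe : B = ∅ := by rw [hB, hL2e]; simp
      have hTcard : (A.card : ℤ) + 1 ≤ (T.card : ℤ) := by
        rw [if_pos hn1, if_neg hn2, hBe] at hsc
        simp at hsc
        exact_mod_cast hsc
      rw [hLeq] at ih1
      have hmul := mul_le_mul_of_nonneg_left hTcard hD
      have hexp : (D:ℤ) * ((A.card:ℤ) + 1) = D * (A.card:ℤ) + D := by ring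
      linarith [ih1, hBdc]
  · have hL1e : L1 = ∅ := Finset.not_nonempty_iff_eq_empty.1 hn1
    have hn2 : L2.Nonempty := by
      rcases hLne with ⟨x, hx⟩
      by_cases hxc : x < c
      · exfalso
        have : x ∈ L1 := Finset.mem_filter.2 ⟨hx, hxc⟩
        rw [hL1e] at this
        simp at this
      · exact ⟨x, Finset.mem_filter.2 ⟨hx, hxc⟩⟩
    have hLeq : L2 = L := by
      have := hcards
      rw [hL1e] at this
      simp at this
      exact Finset.eq_of_subset_of_card_le (Finset.filter_subset _ _) (by omega)
    have ih2 := hall_aux hd2D (N - c) c N (le_refl _) hcb L2 hL2sub hn2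
    rw [← hB] at ih2
    have hBd2 : Bd d D (N - c) ≤ (D : ℤ) := by
      have : N - c = c := by omega
      rw [this]; exact hBdc
    have hAe : A = ∅ := by rw [hA, hL1e]; simp
    have hTcard : (B.card : ℤ) + 1 ≤ (T.card : ℤ) := by
      rw [if_neg hn1, if_pos hn2, hAe] at hsc
      simp at hsc
      exact_mod_cast hsc
    rw [hLeq] at ih2
    have hmul := mul_le_mul_of_nonneg_left hTcard hD
    have hexp : (D:ℤ) * ((B.card:ℤ) + 1) = D * (B.card:ℤ) + D := by ring
    linarith [ih2, hBd2]


end Stmt14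

open Stmt14 in
set_option maxHeartbeats 1000000 in
/-- For every `n ≥ 2`, `d ≥ 1` and real `ε > 0`, there exists a
multi-graph instance with `n` XOS agents such that no allocation `X` satisfies
`v_i(X_i) ≥ (1 − 1/Δ_n(d) + ε)·μ_i^d` for all agents `i`, where
`Δ_n(d) = ⌈(n−1)d/(2(n−2))⌉` if `n` is odd and `Δ_n(d) = ⌈nd/(2(n−1))⌉` if `n` is
even. -/
theorem stmt14 (n d : ℕ) (hn : 2 ≤ n) (hd : 1 ≤ d) (ε : ℝ) (hε : 0 < ε) :
    ∃ (m : ℕ) (I : GraphInstance (Fin n) (Fin m)),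
      (∀ i, IsXOSVal (I.val i)) ∧
      ¬ ∃ X : Fin n → Finset (Fin m), IsAllocation X ∧
        ∀ i, (1 - 1 / (((if Odd n
              then ⌈(((n : ℝ) - 1) * d) / (2 * ((n : ℝ) - 2))⌉₊
              else ⌈((n : ℝ) * d) / (2 * ((n : ℝ) - 1))⌉₊) : ℕ) : ℝ) + ε)
            * mms (I.val i) d Finset.univ ≤ I.val i (X i) := by
  classical
  have hne_d : NeZero d := ⟨by omega⟩
  set D : ℕ := (if Odd n
              then ⌈(((n : ℝ) - 1) * d) / (2 * ((n : ℝ) - 2))⌉₊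
              else ⌈((n : ℝ) * d) / (2 * ((n : ℝ) - 1))⌉₊) with hDdef
  set N : ℕ := if Odd n then n - 1 else n with hNdef
  -- basic arithmetic facts
  have hN2 : 2 ≤ N := by
    rw [hNdef]; split
    · rename_i hodd
      rcases hodd with ⟨k, hk⟩
      omega
    · exact hn
  have hNn : N ≤ n := by rw [hNdef]; split <;> omega
  have hNeven : 2 * (N / 2) = N := by
    rw [hNdef]; split
    · rename_i hodd; rcases hodd with ⟨k, hk⟩; omega
    · rename_i hodd
      have : Even n := Nat.not_odd_iff_even.1 hodd
      rcases this with ⟨k, hk⟩; omega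
  have harith : 1 ≤ D ∧ D ≤ d ∧ (N : ℤ) * d ≤ 2 * ((N : ℤ) - 1) * D := by
    by_cases hodd : Odd n
    · have hN3 : 3 ≤ n := by
        rcases hodd with ⟨k, hk⟩; omega
    
      have hNval : N = n - 1 := by rw [hNdef, if_pos hodd]
      have hDval : D = ⌈(((n : ℝ) - 1) * d) / (2 * ((n : ℝ) - 2))⌉₊ := by
        rw [hDdef, if_pos hodd]
      have hden : (0:ℝ) < 2 * ((n : ℝ) - 2) := by
        have : (3:ℝ) ≤ (n:ℝ) := by exact_mod_cast hN3
        linarith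
      have hnum : (0:ℝ) < ((n : ℝ) - 1) * d := by
        have h1 : (3:ℝ) ≤ (n:ℝ) := by exact_mod_cast hN3
        have h2 : (1:ℝ) ≤ (d:ℝ) := by exact_mod_cast hd
        nlinarith
      have hx_pos : (0:ℝ) < (((n : ℝ) - 1) * d) / (2 * ((n : ℝ) - 2)) :=
        div_pos hnum hden
      have hD1 : 1 ≤ D := by
        rw [hDval]
        exact Nat.one_le_iff_ne_zero.2 (by positivity)
      have hDd : D ≤ d := by
        rw [hDval]
        apply Nat.ceil_le.2
        rw [div_le_iff₀ hden]
        have h1 : (3:ℝ) ≤ (n:ℝ) := by exact_mod_cast hN3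
        have h2 : (0:ℝ) ≤ (d:ℝ) := by positivity
        nlinarith
      have hkey : (N : ℤ) * d ≤ 2 * ((N : ℤ) - 1) * D := by
        have hle := Nat.le_ceil ((((n : ℝ) - 1) * d) / (2 * ((n : ℝ) - 2)))
        rw [← hDval] at hle
        rw [div_le_iff₀ hden] at hle
        have hcast1 : ((N:ℤ) : ℝ) = (n:ℝ) - 1 := by
          rw [hNval]; push_cast [Nat.cast_sub (by omega : 1 ≤ n)]; ring
        have hgoal : ((N:ℤ) * d : ℤ) ≤ 2 * ((N:ℤ) - 1) * D := by
          have : (((N:ℤ) * d : ℤ) : ℝ) ≤ ((2 * ((N:ℤ) - 1) * D : ℤ) : ℝ) := by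
            push_cast
            rw [show ((N:ℕ):ℝ) = (n:ℝ) - 1 by exact_mod_cast hcast1]
            calc ((n:ℝ) - 1) * d ≤ (D:ℝ) * (2 * ((n:ℝ) - 2)) := hle
              _ = 2 * ((n:ℝ) - 1 - 1) * D := by ring
          exact_mod_cast this
        exact hgoal
      exact ⟨hD1, hDd, hkey⟩
    · have hNval : N = n := by rw [hNdef, if_neg hodd]
      have hDval : D = ⌈((n : ℝ) * d) / (2 * ((n : ℝ) - 1))⌉₊ := by
        rw [hDdef, if_neg hodd]
      have hden : (0:ℝ) < 2 * ((n : ℝ) - 1) := by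
        have : (2:ℝ) ≤ (n:ℝ) := by exact_mod_cast hn
        linarith
      have hD1 : 1 ≤ D := by
        rw [hDval]
        apply Nat.one_le_iff_ne_zero.2
        have : (0:ℝ) < ((n : ℝ) * d) / (2 * ((n : ℝ) - 1)) := by
          apply div_pos _ hden
          have h1 : (2:ℝ) ≤ (n:ℝ) := by exact_mod_cast hn
          have h2 : (1:ℝ) ≤ (d:ℝ) := by exact_mod_cast hd
          nlinarith
        positivity
      have hDd : D ≤ d := by
        rw [hDval]
        apply Nat.ceil_le.2
        rw [div_le_iff₀ hden]
        have h1 : (2:ℝ) ≤ (n:ℝ) := by exact_mod_cast hn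
        have h2 : (0:ℝ) ≤ (d:ℝ) := by positivity
        nlinarith
      have hkey : (N : ℤ) * d ≤ 2 * ((N : ℤ) - 1) * D := by
        have hle := Nat.le_ceil (((n : ℝ) * d) / (2 * ((n : ℝ) - 1)))
        rw [← hDval] at hle
        rw [div_le_iff₀ hden] at hle
        have : (((N:ℤ) * d : ℤ) : ℝ) ≤ ((2 * ((N:ℤ) - 1) * D : ℤ) : ℝ) := by
          push_cast
          rw [hNval]
          calc (n:ℝ) * d ≤ (D:ℝ) * (2 * ((n:ℝ) - 1)) := hle
            _ = 2 * ((n:ℝ) - 1) * D := by ring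
        exact_mod_cast this
      exact ⟨hD1, hDd, hkey⟩
  obtain ⟨hD1, hDd, hkey⟩ := harith
  have hd2D : (d : ℤ) ≤ 2 * D := by
    by_contra hcon
    push_neg at hcon
    have h1 : (2:ℤ) ≤ (N:ℤ) := by exact_mod_cast hN2
    have h2 : (1:ℤ) ≤ (D:ℤ) := by exact_mod_cast hD1
    nlinarith
  -- Hall's theorem: assign each group a (node, side, slot)
  set t : Fin N × Fin d → Finset ((ℕ × ℕ × Bool) × Fin D) :=
    fun p => (anc 0 N (p.1 : ℕ)) ×ˢ (univ : Finset (Fin D)) with htdef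
  have hhall : ∀ s : Finset (Fin N × Fin d), s.card ≤ (s.biUnion t).card := by
    intro s
    rcases s.eq_empty_or_nonempty with rfl | hs
    · simp
    have hLsub : (s.image (fun p => ((p.1 : ℕ)))) ⊆ Finset.Ico 0 N := by
      intro x hx
      obtain ⟨p, _, rfl⟩ := Finset.mem_image.1 hx
      exact Finset.mem_Ico.2 ⟨Nat.zero_le _, p.1.isLt⟩
    have hbi : s.biUnion t
        = ((s.image (fun p => ((p.1 : ℕ)))).biUnion (anc 0 N)) ×ˢ (univ : Finset (Fin D)) := by
      ext q
      simp only [Finset.mem_biUnion, Finset.mem_image, htdef]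
      constructor
      · rintro ⟨p, hp, hq⟩
        have h1 := Finset.mem_product.1 hq
        exact Finset.mem_product.2 ⟨Finset.mem_biUnion.2 ⟨(p.1:ℕ), Finset.mem_image.2 ⟨p, hp, rfl⟩, h1.1⟩, h1.2⟩
      · intro hq
        have h1 := Finset.mem_product.1 hq
        obtain ⟨x, hx, hq1⟩ := Finset.mem_biUnion.1 h1.1
        obtain ⟨p, hp, rfl⟩ := Finset.mem_image.1 hx
        exact ⟨p, hp, Finset.mem_product.2 ⟨hq1, h1.2⟩⟩
    have hfib : s.card ≤ d * (s.image (fun p => ((p.1 : ℕ)))).card := by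
      apply Finset.card_le_mul_card_image
      intro b _
      calc (s.filter fun a => ((a.1:ℕ)) = b).card
          ≤ (univ : Finset (Fin d)).card := by
            apply Finset.card_le_card_of_injOn (fun p => p.2) (fun p _ => Finset.mem_univ _)
            intro p hp p' hp' hpp
            have h1 := (Finset.mem_filter.1 hp).2
            have h2 := (Finset.mem_filter.1 hp').2
            have hfst : p.1 = p'.1 := Fin.ext (h1.trans h2.symm)
            exact Prod.ext hfst hpp
        _ = d := by simp
    have hroot := hall_root hd2D hNeven hN2 hkey (s.image (fun p => ((p.1 : ℕ)))) hLsub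
    have hfin : (s.card : ℤ) ≤ ((s.biUnion t).card : ℤ) := by
      rw [hbi, Finset.card_product]
      push_cast
      calc (s.card : ℤ) ≤ (d : ℤ) * ((s.image (fun p => ((p.1 : ℕ)))).card : ℤ) := by
            exact_mod_cast hfib
        _ ≤ (D : ℤ) * (((s.image (fun p => ((p.1 : ℕ)))).biUnion (anc 0 N)).card : ℤ) := hroot
        _ = (((s.image (fun p => ((p.1 : ℕ)))).biUnion (anc 0 N)).card : ℤ) * (D:ℤ) := by ring
        _ = _ := by norm_num
    exact_mod_cast hfin
  obtain ⟨F, hFinj, hFmem⟩ := (Finset.all_card_le_biUnion_card_iff_exists_injective t).mp hhall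
  have hFanc : ∀ p : Fin N × Fin d, (F p).1 ∈ anc 0 N (p.1 : ℕ) := by
    intro p
    have := hFmem p
    rw [htdef] at this
    exact (Finset.mem_product.1 this).1
  have hFbnd : ∀ p : Fin N × Fin d,
      (F p).1.1 ≤ (p.1 : ℕ) ∧ ((p.1 : ℕ)) < (F p).1.2.1 ∧ (F p).1.2.1 ≤ N ∧
      (F p).1.2.2 = decide (((p.1 : ℕ)) < ((F p).1.1 + (F p).1.2.1) / 2) := by
    intro p
    have h := mem_anc (Nat.zero_le _) p.1.isLt (show ((F p).1.1, (F p).1.2.1, (F p).1.2.2) ∈ _ from hFanc p)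
    exact ⟨h.2.1, h.2.2.1, h.2.2.2.1, h.2.2.2.2.2⟩
  -- the item set and the instance
  refine ⟨(N+1) * ((N+1) * (D * D)), ?_⟩
  have hcardE : Fintype.card (Fin (N+1) × Fin (N+1) × Fin D × Fin D)
      = (N+1) * ((N+1) * (D * D)) := by simp
  set ev : Fin ((N+1) * ((N+1) * (D * D))) ≃ (Fin (N+1) × Fin (N+1) × Fin D × Fin D) :=
    (Fintype.equivFinOfCardEq hcardE).symm with hevdef
  set enc : ℕ → ℕ → Fin D → Fin D → Fin ((N+1) * ((N+1) * (D * D))) :=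
    fun x y s u => ev.symm (⟨x % (N+1), Nat.mod_lt _ (Nat.succ_pos N)⟩,
      ⟨y % (N+1), Nat.mod_lt _ (Nat.succ_pos N)⟩, s, u) with hencdef
  have enc_inj : ∀ {x y x' y' : ℕ} {s u s' u' : Fin D}, x ≤ N → y ≤ N → x' ≤ N → y' ≤ N →
      enc x y s u = enc x' y' s' u' → x = x' ∧ y = y' ∧ s = s' ∧ u = u' := by
    intro x y x' y' s u s' u' hx hy hx' hy' h
    rw [hencdef] at h
    have h2 := ev.symm.injective h
    have h3 : x % (N+1) = x' % (N+1) ∧ y % (N+1) = y' % (N+1) ∧ s = s' ∧ u = u' := by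
      simpa [Prod.ext_iff, Fin.ext_iff] using h2
    refine ⟨?_, ?_, h3.2.2.1, h3.2.2.2⟩
    · have h4 := h3.1
      rwa [Nat.mod_eq_of_lt (by omega), Nat.mod_eq_of_lt (by omega)] at h4
    · have h4 := h3.2.1
      rwa [Nat.mod_eq_of_lt (by omega), Nat.mod_eq_of_lt (by omega)] at h4
  set G : Fin N → Fin d → Finset (Fin ((N+1) * ((N+1) * (D * D)))) :=
    fun i j => (univ : Finset (Fin D)).image (fun u =>
      if (F (i,j)).1.2.2 = true then enc (F (i,j)).1.1 (F (i,j)).1.2.1 ((F (i,j)).2) u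
      else enc (F (i,j)).1.1 (F (i,j)).1.2.1 u ((F (i,j)).2)) with hGdef
  have hGcard : ∀ i j, (G i j).card = D := by
    intro i j
    obtain ⟨hb1, hb2, hb3, _⟩ := hFbnd (i, j)
    have hinj : Function.Injective (fun u =>
        if (F (i,j)).1.2.2 = true then enc (F (i,j)).1.1 (F (i,j)).1.2.1 ((F (i,j)).2) u
        else enc (F (i,j)).1.1 (F (i,j)).1.2.1 u ((F (i,j)).2)) := by
      intro u u' huu
      simp only at huu
      by_cases hside : (F (i,j)).1.2.2 = true
      · rw [if_pos hside, if_pos hside] at huu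
        exact (enc_inj (by omega) (by omega) (by omega) (by omega) huu).2.2.2
      · rw [if_neg hside, if_neg hside] at huu
        exact (enc_inj (by omega) (by omega) (by omega) (by omega) huu).2.2.1
    rw [hGdef]
    rw [Finset.card_image_of_injective _ hinj]
    simp
  have hGdisj : ∀ (i : Fin N) (j j' : Fin d), j ≠ j' → Disjoint (G i j) (G i j') := by
    intro i j j' hjj
    rw [Finset.disjoint_left]
    intro e hej hej'
    rw [hGdef] at hej hej'
    obtain ⟨u, _, hu⟩ := Finset.mem_image.1 hej
    obtain ⟨u', _, hu'⟩ := Finset.mem_image.1 hej'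
    obtain ⟨hb1, hb2, hb3, hb4⟩ := hFbnd (i, j)
    obtain ⟨hc1, hc2, hc3, hc4⟩ := hFbnd (i, j')
    have hee := hu.trans hu'.symm
    have hFF : F (i, j) = F (i, j') := by
      by_cases h1 : (F (i,j)).1.2.2 = true <;> by_cases h2 : (F (i,j')).1.2.2 = true
      · rw [if_pos h1, if_pos h2] at hee
        obtain ⟨e1, e2, e3, _⟩ := enc_inj (by omega) (by omega) (by omega) (by omega) hee
        refine Prod.ext (Prod.ext e1 (Prod.ext e2 ?_)) e3
        rw [h1, h2]
      · rw [if_pos h1, if_neg h2] at hee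
        obtain ⟨e1, e2, _, _⟩ := enc_inj (by omega) (by omega) (by omega) (by omega) hee
        exact absurd (by rw [hc4, ← e1, ← e2, ← hb4]; exact h1) h2
      · rw [if_neg h1, if_pos h2] at hee
        obtain ⟨e1, e2, _, _⟩ := enc_inj (by omega) (by omega) (by omega) (by omega) hee
        exfalso
        exact h1 (by rw [hb4, e1, e2, ← hc4]; exact h2)
      · rw [if_neg h1, if_neg h2] at hee
        obtain ⟨e1, e2, e3, e4⟩ := enc_inj (by omega) (by omega) (by omega) (by omega) hee
        refine Prod.ext (Prod.ext e1 (Prod.ext e2 ?_)) e4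
        rw [hb4, hc4, e1, e2]
    have := hFinj hFF
    exact hjj (by simpa [Prod.ext_iff] using this)
  set i0 : Fin n := ⟨0, by omega⟩ with hi0
  set ownL : Fin ((N+1) * ((N+1) * (D * D))) → Fin n := fun e =>
    if h : ∃ p : Fin N × Fin d,
        F p = ((((ev e).1 : ℕ), ((ev e).2.1 : ℕ), true), (ev e).2.2.1)
    then Fin.castLE hNn h.choose.1 else i0 with hownL
  set ownR : Fin ((N+1) * ((N+1) * (D * D))) → Fin n := fun e =>
    if h : ∃ p : Fin N × Fin d,
        F p = ((((ev e).1 : ℕ), ((ev e).2.1 : ℕ), false), (ev e).2.2.2)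
    then Fin.castLE hNn h.choose.1 else i0 with hownR
  set EP : Fin ((N+1) * ((N+1) * (D * D))) → Sym2 (Fin n) :=
    fun e => s(ownL e, ownR e) with hEP
  set Vl : Fin n → Finset (Fin ((N+1) * ((N+1) * (D * D)))) → ℝ := fun i S =>
    if h : (i : ℕ) < N
    then ((univ.sup (fun j => (S ∩ G ⟨(i:ℕ), h⟩ j).card) : ℕ) : ℝ) else 0 with hVldef
  -- ownership: members of a group have their agent as an endpoint
  have hG_ep : ∀ (i : Fin N) (j : Fin d) e, e ∈ G i j → Fin.castLE hNn i ∈ EP e := by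
    intro i j e he
    rw [hGdef] at he
    obtain ⟨u, _, hu⟩ := Finset.mem_image.1 he
    obtain ⟨hb1, hb2, hb3, hb4⟩ := hFbnd (i, j)
    by_cases hside : (F (i,j)).1.2.2 = true
    · rw [if_pos hside] at hu
      have hev1 : ((ev e).1 : ℕ) = (F (i,j)).1.1 := by
        rw [← hu]; simp only [hencdef]; rw [Equiv.apply_symm_apply]
        exact Nat.mod_eq_of_lt (by omega)
      have hev2 : ((ev e).2.1 : ℕ) = (F (i,j)).1.2.1 := by
        rw [← hu]; simp only [hencdef]; rw [Equiv.apply_symm_apply]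
        exact Nat.mod_eq_of_lt (by omega)
      have hev3 : (ev e).2.2.1 = (F (i,j)).2 := by
        rw [← hu]; simp only [hencdef]; rw [Equiv.apply_symm_apply]
      have htup : F (i, j) = ((((ev e).1 : ℕ), ((ev e).2.1 : ℕ), true), (ev e).2.2.1) := by
        rw [hev1, hev2, hev3, ← hside]
      have hex : ∃ p : Fin N × Fin d,
          F p = ((((ev e).1 : ℕ), ((ev e).2.1 : ℕ), true), (ev e).2.2.1) := ⟨(i, j), htup⟩
      have hchoose : hex.choose = (i, j) := hFinj (hex.choose_spec.trans htup.symm)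
      have hown : ownL e = Fin.castLE hNn i := by
        simp only [hownL]
        rw [dif_pos hex, hchoose]
      simp only [hEP, Sym2.mem_iff]
      exact Or.inl hown.symm
    · rw [if_neg hside] at hu
      have hev1 : ((ev e).1 : ℕ) = (F (i,j)).1.1 := by
        rw [← hu]; simp only [hencdef]; rw [Equiv.apply_symm_apply]
        exact Nat.mod_eq_of_lt (by omega)
      have hev2 : ((ev e).2.1 : ℕ) = (F (i,j)).1.2.1 := by
        rw [← hu]; simp only [hencdef]; rw [Equiv.apply_symm_apply]
        exact Nat.mod_eq_of_lt (by omega)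
      have hev3 : (ev e).2.2.2 = (F (i,j)).2 := by
        rw [← hu]; simp only [hencdef]; rw [Equiv.apply_symm_apply]
      have hsf : (F (i,j)).1.2.2 = false := by
        cases hx : (F (i,j)).1.2.2
        · rfl
        · exact absurd hx hside
      have htup : F (i, j) = ((((ev e).1 : ℕ), ((ev e).2.1 : ℕ), false), (ev e).2.2.2) := by
        rw [hev1, hev2, hev3, ← hsf]
      have hex : ∃ p : Fin N × Fin d,
          F p = ((((ev e).1 : ℕ), ((ev e).2.1 : ℕ), false), (ev e).2.2.2) := ⟨(i, j), htup⟩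
      have hchoose : hex.choose = (i, j) := hFinj (hex.choose_spec.trans htup.symm)
      have hown : ownR e = Fin.castLE hNn i := by
        simp only [hownR]
        rw [dif_pos hex, hchoose]
      simp only [hEP, Sym2.mem_iff]
      exact Or.inr hown.symm
  have hmemG_ne : ∀ (i : Fin n) (h : (i : ℕ) < N) (j : Fin d) e,
      i ∉ EP e → e ∉ G ⟨(i:ℕ), h⟩ j := by
    intro i h j e hie hmem
    apply hie
    have := hG_ep ⟨(i:ℕ), h⟩ j e hmem
    have hcast : Fin.castLE hNn (⟨(i:ℕ), h⟩ : Fin N) = i := by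
      apply Fin.ext; rfl
    rwa [hcast] at this
  refine ⟨⟨EP, Vl, ?_, ?_, ?_, ?_⟩, ?_, ?_⟩
  · -- nonneg
    intro i S
    simp only [hVldef]
    split
    · positivity
    · exact le_refl 0
  · -- empty
    intro i
    simp only [hVldef]
    split
    · norm_cast
      simp [Finset.empty_inter]
    · rfl
  · -- mono
    intro i S T hST
    simp only [hVldef]
    split
    · rename_i h
      have : (univ.sup (fun j => (S ∩ G ⟨(i:ℕ), h⟩ j).card))
          ≤ (univ.sup (fun j => (T ∩ G ⟨(i:ℕ), h⟩ j).card)) := by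
        apply Finset.sup_mono_fun
        intro j _
        exact Finset.card_le_card (Finset.inter_subset_inter hST (Finset.Subset.refl _))
      exact_mod_cast this
    · exact le_refl 0
  · -- graphical
    intro i e hie S
    simp only [hVldef]
    split
    · rename_i h
      congr 1
      apply congrArg
      funext j
      rw [Finset.insert_inter_of_notMem (hmemG_ne i h j e hie)]
    · rfl
  · -- XOS
    intro i
    by_cases h : (i : ℕ) < N
    · have huniv_ne : (univ : Finset (Fin d)).Nonempty := Finset.univ_nonempty
      refine ⟨(univ : Finset (Fin d)).image
          (fun j => fun e => if e ∈ G ⟨(i:ℕ), h⟩ j then (1:ℝ) else 0),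
        huniv_ne.image _, ?_, ?_⟩
      · intro a ha e
        obtain ⟨j, _, rfl⟩ := Finset.mem_image.1 ha
        dsimp only
        split <;> norm_num
      · intro S
        rw [Finset.sup'_image]
        have hterm : ∀ j : Fin d,
            (∑ e ∈ S, if e ∈ G ⟨(i:ℕ), h⟩ j then (1:ℝ) else 0)
            = ((S ∩ G ⟨(i:ℕ), h⟩ j).card : ℝ) := by
          intro j
          rw [Finset.sum_boole, Finset.filter_mem_eq_inter]
        show Vl i S = _
        simp only [hVldef]
        rw [dif_pos h]
        rw [← Finset.sup'_eq_sup huniv_ne]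
        rw [Nat.cast_finsetSup']
        apply Finset.sup'_congr huniv_ne rfl
        intro j _
        exact (hterm j).symm
    · refine ⟨{fun _ => (0:ℝ)}, Finset.singleton_nonempty _, ?_, ?_⟩
      · intro a ha e
        simp only [Finset.mem_singleton] at ha
        rw [ha]
      · intro S
        rw [Finset.sup'_singleton]
        simp only [hVldef]
        rw [dif_neg h]
        simp
  -- the impossibility statement
  rintro ⟨X, hX, hsat0⟩
  have hVl : ∀ (ℓ : Fin N) (S : Finset (Fin ((N+1) * ((N+1) * (D * D))))),
      Vl (Fin.castLE hNn ℓ) S = ((univ.sup (fun j => (S ∩ G ℓ j).card) : ℕ) : ℝ) := by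
    intro ℓ S
    have h : ((Fin.castLE hNn ℓ : Fin n) : ℕ) < N := ℓ.isLt
    simp only [hVldef]
    rw [dif_pos h]
    have heq : (⟨((Fin.castLE hNn ℓ : Fin n) : ℕ), h⟩ : Fin N) = ℓ := by apply Fin.ext; rfl
    rw [heq]
  have hvle : ∀ (ℓ : Fin N) S, (univ.sup (fun j => (S ∩ G ℓ j).card)) ≤ D := by
    intro ℓ S
    apply Finset.sup_le
    intro j _
    calc (S ∩ G ℓ j).card ≤ (G ℓ j).card := Finset.card_le_card Finset.inter_subset_right
      _ = D := hGcard ℓ j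
  set j0 : Fin d := ⟨0, by omega⟩ with hj0
  have hmms : ∀ ℓ : Fin N, mms (Vl (Fin.castLE hNn ℓ)) d Finset.univ = (D : ℝ) := by
    intro ℓ
    set P : Fin d → Finset (Fin ((N+1) * ((N+1) * (D * D)))) := fun j =>
      if j = j0 then (Finset.univ \ Finset.univ.biUnion (G ℓ)) ∪ G ℓ j0 else G ℓ j with hP
    have hGsubP : ∀ j, G ℓ j ⊆ P j := by
      intro j
      simp only [hP]
      split
      · rename_i hj; rw [hj]; exact Finset.subset_union_right
      · exact Finset.Subset.refl _
    have hPart : IsPartitionInto d P Finset.univ := by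
      constructor
      · have key : ∀ a b : Fin d, a ≠ b → a = j0 → Disjoint (P a) (P b) := by
          intro a b hab ha
          have hbne : ¬ (b = j0) := fun hb => hab (ha.trans hb.symm)
          simp only [hP, if_pos ha, if_neg hbne]
          apply Finset.disjoint_union_left.2
          constructor
          · exact Finset.sdiff_disjoint.mono_right
              (Finset.subset_biUnion_of_mem (G ℓ) (Finset.mem_univ b))
          · exact hGdisj ℓ j0 b (fun hcon => hab (ha.trans hcon))
        intro a b hab
        by_cases ha : a = j0
        · exact key a b hab ha
        · by_cases hb : b = j0
          · exact (key b a hab.symm hb).symm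
          · simp only [hP, if_neg ha, if_neg hb]
            exact hGdisj ℓ a b hab
      · apply Finset.eq_univ_of_forall
        intro e
        rw [Finset.mem_biUnion]
        by_cases he : ∃ j, e ∈ G ℓ j
        · obtain ⟨j, hj⟩ := he
          exact ⟨j, Finset.mem_univ _, hGsubP j hj⟩
        · refine ⟨j0, Finset.mem_univ _, ?_⟩
          simp only [hP, if_pos rfl]
          apply Finset.mem_union_left
          rw [Finset.mem_sdiff]
          refine ⟨Finset.mem_univ _, ?_⟩
          rw [Finset.mem_biUnion]
          push_neg at he
          rintro ⟨j, _, hj⟩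
          exact he j hj
    have hPval : ∀ j, Vl (Fin.castLE hNn ℓ) (P j) = (D : ℝ) := by
      intro j
      rw [hVl]
      have hle := hvle ℓ (P j)
      have hge : D ≤ univ.sup (fun j' => (P j ∩ G ℓ j').card) := by
        have hDeq : (P j ∩ G ℓ j).card = D := by
          rw [Finset.inter_eq_right.2 (hGsubP j)]
          exact hGcard ℓ j
        refine le_trans (le_of_eq hDeq.symm) ?_
        exact Finset.le_sup (f := fun j' => (P j ∩ G ℓ j').card) (Finset.mem_univ j)
      have heq : univ.sup (fun j' => (P j ∩ G ℓ j').card) = D := le_antisymm hle hge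
      rw [heq]
    have hIinf : (⨅ t, Vl (Fin.castLE hNn ℓ) (P t)) = (D:ℝ) := by
      have heq : (fun t => Vl (Fin.castLE hNn ℓ) (P t)) = fun _ => (D:ℝ) := funext hPval
      rw [heq]
      exact ciInf_const
    have hub : ∀ x ∈ {x | ∃ Q : Fin d → Finset (Fin ((N+1) * ((N+1) * (D * D)))),
        IsPartitionInto d Q Finset.univ ∧ x = ⨅ t, Vl (Fin.castLE hNn ℓ) (Q t)},
        x ≤ (D:ℝ) := by
      rintro x ⟨Q, hQ, rfl⟩
      have hbdd : BddBelow (Set.range fun t => Vl (Fin.castLE hNn ℓ) (Q t)) :=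
        Set.Finite.bddBelow (Set.finite_range _)
      calc (⨅ t, Vl (Fin.castLE hNn ℓ) (Q t)) ≤ Vl (Fin.castLE hNn ℓ) (Q j0) :=
            ciInf_le hbdd j0
        _ ≤ (D:ℝ) := by rw [hVl]; exact_mod_cast hvle ℓ (Q j0)
    unfold mms
    apply le_antisymm
    · exact csSup_le ⟨(D:ℝ), ⟨P, hPart, hIinf.symm⟩⟩ hub
    · exact le_csSup ⟨(D:ℝ), hub⟩ ⟨P, hPart, hIinf.symm⟩
  -- each active agent must receive a full group
  have hpick : ∀ ℓ : Fin N, ∃ j : Fin d, G ℓ j ⊆ X (Fin.castLE hNn ℓ) := by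
    intro ℓ
    have h2 : (1 - 1 / (D:ℝ) + ε) * mms (Vl (Fin.castLE hNn ℓ)) d Finset.univ
        ≤ Vl (Fin.castLE hNn ℓ) (X (Fin.castLE hNn ℓ)) := hsat0 (Fin.castLE hNn ℓ)
    rw [hmms ℓ, hVl] at h2
    have hcge : D ≤ univ.sup (fun j => (X (Fin.castLE hNn ℓ) ∩ G ℓ j).card) := by
      by_contra hlt
      push_neg at hlt
      have hD0 : (0:ℝ) < (D:ℝ) := by exact_mod_cast hD1
      have hcle : ((univ.sup (fun j => (X (Fin.castLE hNn ℓ) ∩ G ℓ j).card) : ℕ) : ℝ)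
          ≤ (D:ℝ) - 1 := by
        have hstep : (univ.sup (fun j => (X (Fin.castLE hNn ℓ) ∩ G ℓ j).card)) + 1 ≤ D := hlt
        have := (Nat.cast_le (α := ℝ)).2 hstep
        push_cast at this
        linarith
      have h1 : (1 / (D:ℝ)) * D = 1 := one_div_mul_cancel (ne_of_gt hD0)
      have heq : (1 - 1 / (D:ℝ) + ε) * D = (D:ℝ) - 1 + ε * D := by
        have hexpand : (1 - 1 / (D:ℝ) + ε) * D = D - (1 / (D:ℝ)) * D + ε * D := by ring
        rw [hexpand, h1]
      rw [heq] at h2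
      linarith [mul_pos hε hD0, hcle]
    obtain ⟨j, -, hj⟩ := (Finset.le_sup_iff (show (⊥:ℕ) < D from hD1)).1 hcge
    refine ⟨j, ?_⟩
    have heq2 : X (Fin.castLE hNn ℓ) ∩ G ℓ j = G ℓ j := by
      apply Finset.eq_of_subset_of_card_le Finset.inter_subset_right
      rw [hGcard ℓ j]
      exact hj
    intro e he
    have hmem : e ∈ X (Fin.castLE hNn ℓ) ∩ G ℓ j := by rw [heq2]; exact he
    exact (Finset.mem_inter.1 hmem).1
  choose jj hjj using hpick
  -- derive the contradiction via the tree walk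
  set σ : ℕ × ℕ → Bool :=
    fun v => decide (∃ ℓ : Fin N, (F (ℓ, jj ℓ)).1 = (v.1, v.2, true)) with hσ
  obtain ⟨ls, -, hlsN, hside⟩ := walk σ N 0 N (by omega) (by omega)
  set Ls : Fin N := ⟨ls, hlsN⟩ with hLsdef
  have hzside := hside (F (Ls, jj Ls)).1.1 (F (Ls, jj Ls)).1.2.1 (F (Ls, jj Ls)).1.2.2
    (hFanc (Ls, jj Ls))
  by_cases hcase : (F (Ls, jj Ls)).1.2.2 = true
  · apply hzside
    have hexx : ∃ ℓ0 : Fin N,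
        (F (ℓ0, jj ℓ0)).1 = ((F (Ls, jj Ls)).1.1, (F (Ls, jj Ls)).1.2.1, true) :=
      ⟨Ls, by rw [← hcase]⟩
    simp only [hσ, hcase]
    simp [hexx]
  · have hfalse : (F (Ls, jj Ls)).1.2.2 = false := by
      cases hx : (F (Ls, jj Ls)).1.2.2
      · rfl
      · exact absurd hx hcase
    have hσtrue : σ ((F (Ls, jj Ls)).1.1, (F (Ls, jj Ls)).1.2.1) = true := by
      cases hx : σ ((F (Ls, jj Ls)).1.1, (F (Ls, jj Ls)).1.2.1)
      · exact absurd (hfalse.trans hx.symm) hzside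
      · rfl
    rw [hσ] at hσtrue
    have hex2 : ∃ ℓ0 : Fin N,
        (F (ℓ0, jj ℓ0)).1 = ((F (Ls, jj Ls)).1.1, (F (Ls, jj Ls)).1.2.1, true) := by
      simpa using hσtrue
    obtain ⟨l0, hl0⟩ := hex2
    have hw1 : (F (l0, jj l0)).1.1 = (F (Ls, jj Ls)).1.1 := by rw [hl0]
    have hw2 : (F (l0, jj l0)).1.2.1 = (F (Ls, jj Ls)).1.2.1 := by rw [hl0]
    have hw3 : (F (l0, jj l0)).1.2.2 = true := by rw [hl0]
    have hne : l0 ≠ Ls := by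
      intro hcon
      rw [hcon, hfalse] at hw3
      exact Bool.false_ne_true hw3
    have hit1 : enc (F (Ls, jj Ls)).1.1 (F (Ls, jj Ls)).1.2.1
        ((F (l0, jj l0)).2) ((F (Ls, jj Ls)).2) ∈ G l0 (jj l0) := by
      rw [hGdef]
      apply Finset.mem_image.2
      refine ⟨(F (Ls, jj Ls)).2, Finset.mem_univ _, ?_⟩
      rw [if_pos hw3, hw1, hw2]
    have hit2 : enc (F (Ls, jj Ls)).1.1 (F (Ls, jj Ls)).1.2.1
        ((F (l0, jj l0)).2) ((F (Ls, jj Ls)).2) ∈ G Ls (jj Ls) := by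
      rw [hGdef]
      apply Finset.mem_image.2
      refine ⟨(F (l0, jj l0)).2, Finset.mem_univ _, ?_⟩
      rw [if_neg (by rw [hfalse]; exact Bool.false_ne_true)]
    have hXdisj := hX (Fin.castLE hNn l0) (Fin.castLE hNn Ls)
      (fun hcon => hne (Fin.castLE_injective hNn hcon))
    exact Finset.disjoint_left.1 hXdisj (hjj l0 hit1) (hjj Ls hit2)
end

section
/- In every multi-graph instance with n ≥ 1 agents whose valuations are all subadditive, there exists an orientation X with v_i(X_i) ≥ (1/2)·μ_i^n for every agent i, i.e., a 1/2-MMS orientation. -/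
open Finset

variable {V E : Type}

section Stmt17Aux

open scoped Classical

variable {n : ℕ} {E : Type} [Fintype E] [DecidableEq E]

/-- incident edges of agent `i` -/
noncomputable def s17inc (I : GraphInstance (Fin n) E) (i : Fin n) : Finset E :=
  univ.filter fun e => i ∈ I.ep e

/-- the larger endpoint of an edge -/
def s17big (I : GraphInstance (Fin n) E) (e : E) : Fin n :=
  Sym2.lift ⟨fun a b => max a b, fun a b => max_comm a b⟩ (I.ep e)

/-- the smaller endpoint of an edge -/
def s17small (I : GraphInstance (Fin n) E) (e : E) : Fin n :=
  Sym2.lift ⟨fun a b => min a b, fun a b => min_comm a b⟩ (I.ep e)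

lemma s17lift_max_mem (z : Sym2 (Fin n)) :
    Sym2.lift ⟨fun a b => max a b, fun a b => max_comm a b⟩ z ∈ z := by
  induction z using Sym2.ind with
  | _ x y =>
    rw [Sym2.lift_mk]
    show max x y ∈ s(x, y)
    rcases max_choice x y with h | h <;> rw [h] <;> simp [Sym2.mem_iff]

lemma s17lift_min_mem (z : Sym2 (Fin n)) :
    Sym2.lift ⟨fun a b => min a b, fun a b => min_comm a b⟩ z ∈ z := by
  induction z using Sym2.ind with
  | _ x y =>
    rw [Sym2.lift_mk]
    show min x y ∈ s(x, y)
    rcases min_choice x y with h | h <;> rw [h] <;> simp [Sym2.mem_iff]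

lemma s17lift_le_max (z : Sym2 (Fin n)) :
    ∀ i : Fin n, i ∈ z → i ≤ Sym2.lift ⟨fun a b => max a b, fun a b => max_comm a b⟩ z := by
  induction z using Sym2.ind with
  | _ x y =>
    intro i h
    rw [Sym2.lift_mk]
    show i ≤ max x y
    rcases Sym2.mem_iff.mp h with rfl | rfl
    · exact le_max_left _ _
    · exact le_max_right _ _

lemma s17lift_min_eq (z : Sym2 (Fin n)) :
    ∀ i : Fin n, i ∈ z →
      Sym2.lift ⟨fun a b => max a b, fun a b => max_comm a b⟩ z ≠ i →
      Sym2.lift ⟨fun a b => min a b, fun a b => min_comm a b⟩ z = i := by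
  induction z using Sym2.ind with
  | _ x y =>
    intro i h hb
    rw [Sym2.lift_mk]
    rw [Sym2.lift_mk] at hb
    show min x y = i
    replace hb : max x y ≠ i := hb
    rcases Sym2.mem_iff.mp h with rfl | rfl
    · rcases le_total i y with hxy | hxy
      · exact min_eq_left hxy
      · exact absurd (max_eq_left hxy) hb
    · rcases le_total x i with hxy | hxy
      · exact absurd (max_eq_right hxy) hb
      · exact min_eq_right hxy

lemma s17big_mem (I : GraphInstance (Fin n) E) (e : E) : s17big I e ∈ I.ep e :=
  s17lift_max_mem (I.ep e)

lemma s17small_mem (I : GraphInstance (Fin n) E) (e : E) : s17small I e ∈ I.ep e :=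
  s17lift_min_mem (I.ep e)

lemma s17le_big (I : GraphInstance (Fin n) E) (e : E) {i : Fin n} (h : i ∈ I.ep e) :
    i ≤ s17big I e :=
  s17lift_le_max (I.ep e) i h

lemma s17small_eq (I : GraphInstance (Fin n) E) (e : E) {i : Fin n} (h : i ∈ I.ep e)
    (hb : s17big I e ≠ i) : s17small I e = i :=
  s17lift_min_eq (I.ep e) i h hb

/-- values only depend on incident edges -/
lemma s17val_inc (I : GraphInstance (Fin n) E) (i : Fin n) (S : Finset E) :
    I.val i S = I.val i (S ∩ s17inc I i) := by
  generalize hk : (S \ s17inc I i).card = k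
  induction k generalizing S with
  | zero =>
    have h0 : S \ s17inc I i = ∅ := card_eq_zero.mp hk
    have hsub : S ⊆ s17inc I i := by
      intro e he
      by_contra hne
      exact (notMem_empty e) (h0 ▸ mem_sdiff.mpr ⟨he, hne⟩)
    rw [inter_eq_left.mpr hsub]
  | succ k ih =>
    have hne : (S \ s17inc I i).Nonempty := by
      rw [← card_pos, hk]; omega
    obtain ⟨e, he⟩ := hne
    obtain ⟨heS, heInc⟩ := mem_sdiff.mp he
    have hep : i ∉ I.ep e := fun h => heInc (mem_filter.mpr ⟨mem_univ e, h⟩)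
    have h1 : I.val i S = I.val i (S.erase e) := by
      conv_lhs => rw [← insert_erase heS]
      exact I.graphical i e hep _
    have h2 : (S.erase e) \ s17inc I i = (S \ s17inc I i).erase e := by
      ext x
      simp only [mem_sdiff, mem_erase]
      tauto
    have hk2 : ((S.erase e) \ s17inc I i).card = k := by
      rw [h2, card_erase_of_mem he, hk]
      omega
    have h3 : S.erase e ∩ s17inc I i = S ∩ s17inc I i := by
      ext x
      simp only [mem_inter, mem_erase]
      constructor
      · rintro ⟨⟨_, hx⟩, hinc⟩; exact ⟨hx, hinc⟩
      · rintro ⟨hx, hinc⟩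
        refine ⟨⟨?_, hx⟩, hinc⟩
        rintro rfl; exact heInc hinc
    rw [h1, ih _ hk2, h3]

variable (I : GraphInstance (Fin n) E) (P : Fin n → Fin n → Finset E)

/-- who gets edge `e` under part-assignment `m`: the bigger endpoint iff the edge is
in its chosen part -/
def s17owner (m : Fin n → Fin n) (e : E) : Fin n :=
  if e ∈ P (s17big I e) (m (s17big I e)) then s17big I e else s17small I e

/-- the resulting orientation -/
def s17alloc (m : Fin n → Fin n) (i : Fin n) : Finset E :=
  univ.filter fun e => s17owner I P m e = i

/-- what agent `i` surely keeps of part `a` (only depends on `m j` for `j > i`) -/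
noncomputable def s17keep (i a : Fin n) (m : Fin n → Fin n) : Finset E :=
  (P i a ∩ s17inc I i).filter fun e =>
    s17big I e = i ∨ e ∉ P (s17big I e) (m (s17big I e))

/-- agent `i` is satisfied with part `a` against assignment `m` -/
def s17OK (i a : Fin n) (m : Fin n → Fin n) : Prop :=
  mms (I.val i) n Finset.univ ≤ 2 * I.val i (s17keep I P i a m)

lemma s17owner_mem (m : Fin n → Fin n) (e : E) : s17owner I P m e ∈ I.ep e := by
  unfold s17owner
  split
  · exact s17big_mem I e
  · exact s17small_mem I e

lemma s17keep_subset_alloc (m : Fin n → Fin n) (i : Fin n) :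
    s17keep I P i (m i) m ⊆ s17alloc I P m i := by
  intro e he
  obtain ⟨hePinc, hcond⟩ := mem_filter.mp he
  obtain ⟨heP, heInc⟩ := mem_inter.mp hePinc
  have hib : i ∈ I.ep e := (mem_filter.mp heInc).2
  refine mem_filter.mpr ⟨mem_univ _, ?_⟩
  unfold s17owner
  by_cases hb : e ∈ P (s17big I e) (m (s17big I e))
  · rw [if_pos hb]
    rcases hcond with hbig | hnot
    · exact hbig
    · exact absurd hb hnot
  · rw [if_neg hb]
    have hbig : s17big I e ≠ i := by
      rintro rfl; exact hb heP
    exact s17small_eq I e hib hbig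

lemma s17keep_agree (i a : Fin n) (m m' : Fin n → Fin n)
    (hag : ∀ j : Fin n, i < j → m j = m' j) :
    s17keep I P i a m = s17keep I P i a m' := by
  unfold s17keep
  apply filter_congr
  intro e he
  obtain ⟨_, heInc⟩ := mem_inter.mp he
  have hib : i ∈ I.ep e := (mem_filter.mp heInc).2
  rcases eq_or_lt_of_le (s17le_big I e hib) with heq | hlt
  · rw [← heq]
    simp
  · rw [hag _ hlt]

lemma s17keep_cover (hPdis : ∀ i : Fin n, ∀ a b : Fin n, a ≠ b → Disjoint (P i a) (P i b))
    (i a : Fin n) (m m' : Fin n → Fin n)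
    (hdiff : ∀ j : Fin n, i < j → m j ≠ m' j) :
    s17keep I P i a m ∪ s17keep I P i a m' = P i a ∩ s17inc I i := by
  apply Finset.Subset.antisymm
  · exact union_subset (filter_subset _ _) (filter_subset _ _)
  · intro e he
    obtain ⟨heP, heInc⟩ := mem_inter.mp he
    have hib : i ∈ I.ep e := (mem_filter.mp heInc).2
    by_cases h1 : s17big I e = i ∨ e ∉ P (s17big I e) (m (s17big I e))
    · exact mem_union_left _ (mem_filter.mpr ⟨he, h1⟩)
    · push_neg at h1
      obtain ⟨hbig, hmem⟩ := h1
      have hlt : i < s17big I e := lt_of_le_of_ne (s17le_big I e hib) (Ne.symm hbig)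
      have hnot : e ∉ P (s17big I e) (m' (s17big I e)) := fun hmem' =>
        (Finset.disjoint_left.mp (hPdis (s17big I e) _ _ (hdiff _ hlt)) hmem) hmem'
      exact mem_union_right _ (mem_filter.mpr ⟨he, Or.inr hnot⟩)

/-- existence of a canonical partition: all parts have value at least the MMS -/
lemma s17exists_good_partition (hn : 1 ≤ n) (i : Fin n) :
    ∃ Q : Fin n → Finset E, IsPartitionInto n Q Finset.univ ∧
      ∀ a, mms (I.val i) n Finset.univ ≤ I.val i (Q a) := by
  have hfin : {x : ℝ | ∃ Q : Fin n → Finset E,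
      IsPartitionInto n Q Finset.univ ∧ x = ⨅ t, I.val i (Q t)}.Finite := by
    apply Set.Finite.subset (Set.finite_range fun Q : Fin n → Finset E => ⨅ t, I.val i (Q t))
    rintro x ⟨Q, _, rfl⟩
    exact ⟨Q, rfl⟩
  have hnonempty : {x : ℝ | ∃ Q : Fin n → Finset E,
      IsPartitionInto n Q Finset.univ ∧ x = ⨅ t, I.val i (Q t)}.Nonempty := by
    refine ⟨_, ⟨fun t => if t = ⟨0, hn⟩ then Finset.univ else ∅, ⟨?_, ?_⟩, rfl⟩⟩
    · intro s t hst
      show Disjoint (if s = ⟨0, hn⟩ then (Finset.univ : Finset E) else ∅)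
        (if t = ⟨0, hn⟩ then (Finset.univ : Finset E) else ∅)
      by_cases hs : s = ⟨0, hn⟩
      · have ht : ¬ (t = ⟨0, hn⟩) := fun h => hst (hs.trans h.symm)
        rw [if_pos hs, if_neg ht]
        exact Finset.disjoint_empty_right _
      · rw [if_neg hs]
        exact Finset.disjoint_empty_left _
    · apply Finset.eq_univ_of_forall
      intro e
      rw [Finset.mem_biUnion]
      refine ⟨⟨0, hn⟩, Finset.mem_univ _, ?_⟩
      show e ∈ (if (⟨0, hn⟩ : Fin n) = ⟨0, hn⟩ then (Finset.univ : Finset E) else ∅)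
      rw [if_pos rfl]
      exact Finset.mem_univ e
  have hmem := Set.Nonempty.csSup_mem hnonempty hfin
  obtain ⟨Q, hQ, hEq⟩ := hmem
  refine ⟨Q, hQ, fun a => ?_⟩
  have hmms : mms (I.val i) n Finset.univ = ⨅ t, I.val i (Q t) := hEq
  rw [hmms]
  exact ciInf_le (Set.Finite.bddBelow (Set.finite_range _)) a

/-- The core existence lemma: a "Latin family" of part-assignments. -/
lemma s17family (hsub : ∀ i, IsSubadditiveVal (I.val i))
    (hPdis : ∀ i : Fin n, ∀ a b : Fin n, a ≠ b → Disjoint (P i a) (P i b))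
    (hPval : ∀ i a, mms (I.val i) n Finset.univ ≤ I.val i (P i a)) :
    ∀ h : ℕ, 1 ≤ h → h ≤ n →
      ∃ F : Fin (n + 1 - h) → Fin n → Fin n,
        (∀ r r' : Fin (n + 1 - h), r ≠ r' →
          ∀ j : Fin n, n - h ≤ (j : ℕ) → F r j ≠ F r' j) ∧
        (∀ r : Fin (n + 1 - h), ∀ j : Fin n, n - h ≤ (j : ℕ) →
          s17OK I P j (F r j) (F r)) := by
  intro h
  induction h with
  | zero => omega
  | succ h ih =>
    intro _ hle
    rcases Nat.eq_zero_or_pos h with rfl | hpos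
    · -- base case: h + 1 = 1, family of size n
      refine ⟨fun r _ => ⟨r.1, by omega⟩, ?_, ?_⟩
      · intro r r' hrr j _
        intro hcontra
        apply hrr
        have := Fin.val_eq_of_eq hcontra
        exact Fin.ext this
      · intro r j hj
        have hjval : (j : ℕ) = n - 1 := by have := j.isLt; omega
        have hkeep : s17keep I P j (⟨r.1, by omega⟩ : Fin n) (fun _ => ⟨r.1, by omega⟩) =
            P j ⟨r.1, by omega⟩ ∩ s17inc I j := by
          unfold s17keep
          apply filter_true_of_mem
          intro e he
          obtain ⟨_, heInc⟩ := mem_inter.mp he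
          have hib : j ∈ I.ep e := (mem_filter.mp heInc).2
          left
          have h1 := s17le_big I e hib
          have h2 := (s17big I e).isLt
          apply Fin.ext
          have h3 : (j : ℕ) ≤ (s17big I e : ℕ) := h1
          omega
        unfold s17OK
        rw [hkeep, ← s17val_inc]
        have := hPval j (⟨r.1, by omega⟩ : Fin n)
        have h0 := I.val_nonneg j (P j ⟨r.1, by omega⟩)
        linarith
    · -- inductive step
      obtain ⟨F, hpair, hOK⟩ := ih hpos (by omega)
      have hn2 : 2 ≤ n := by omega
      let i : Fin n := ⟨n - 1 - h, by omega⟩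
      have hival : (i : ℕ) = n - 1 - h := rfl
      -- bad parts for each family member
      set Bad : Fin (n + 1 - h) → Finset (Fin n) :=
        fun r => univ.filter fun a => ¬ s17OK I P i a (F r) with hBadDef
      have hBadDisj : ∀ r r' : Fin (n + 1 - h), r ≠ r' → Disjoint (Bad r) (Bad r') := by
        intro r r' hrr
        rw [Finset.disjoint_left]
        intro a har har'
        have h1 : ¬ s17OK I P i a (F r) := (mem_filter.mp har).2
        have h2 : ¬ s17OK I P i a (F r') := (mem_filter.mp har').2
        have hdiff : ∀ j : Fin n, i < j → F r j ≠ F r' j := by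
          intro j hj
          apply hpair r r' hrr j
          have hlt : (i : ℕ) < (j : ℕ) := hj
          omega
        have hcov := s17keep_cover I P hPdis i a (F r) (F r') hdiff
        have hle : I.val i (P i a ∩ s17inc I i) ≤
            I.val i (s17keep I P i a (F r)) + I.val i (s17keep I P i a (F r')) := by
          rw [← hcov]; exact hsub i _ _
        have hveq : I.val i (P i a) = I.val i (P i a ∩ s17inc I i) := s17val_inc I i _
        have hmu := hPval i a
        unfold s17OK at h1 h2
        push_neg at h1 h2
        linarith
      -- choose the member to discard
      obtain ⟨d, hd⟩ : ∃ d : Fin (n + 1 - h), ∀ r, r ≠ d → Bad r ≠ Finset.univ := by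
        by_cases hex : ∃ r, Bad r = Finset.univ
        · obtain ⟨r0, hr0⟩ := hex
          refine ⟨r0, fun r hr hBad => ?_⟩
          have hdsj := hBadDisj r r0 hr
          rw [hBad, hr0] at hdsj
          exact (Finset.disjoint_left.mp hdsj (mem_univ i)) (mem_univ i)
        · exact ⟨⟨0, by omega⟩, fun r _ hBad => hex ⟨r, hBad⟩⟩
      -- Hall's condition for choosing distinct good parts
      set t : {r : Fin (n + 1 - h) // r ≠ d} → Finset (Fin n) := fun r => (Bad r.1)ᶜ with htdef
      have hall : ∀ s : Finset {r : Fin (n + 1 - h) // r ≠ d},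
          s.card ≤ (s.biUnion t).card := by
        intro s
        rcases Finset.eq_empty_or_nonempty s with rfl | ⟨r, hr⟩
        · simp
        by_cases hsing : s.card = 1
        · obtain ⟨r', hs⟩ := Finset.card_eq_one.mp hsing
          subst hs
          rw [Finset.singleton_biUnion]
          rw [Finset.card_singleton]
          have hssub : Bad r'.1 ⊂ Finset.univ :=
            (Finset.subset_univ _).ssubset_of_ne (hd r'.1 r'.2)
          obtain ⟨a, _, hna⟩ := Finset.exists_of_ssubset hssub
          have hne' : (Bad r'.1)ᶜ.Nonempty := ⟨a, Finset.mem_compl.mpr hna⟩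
          have := Finset.card_pos.mpr hne'
          show 1 ≤ ((Bad r'.1)ᶜ).card
          omega
        · -- s has at least two elements
          have h2 : 1 < s.card := by
            have : 1 ≤ s.card := Finset.one_le_card.mpr ⟨r, hr⟩
            omega
          obtain ⟨r', hr', hne⟩ := Finset.exists_mem_ne h2 r
          have hunion : (s.biUnion t) = Finset.univ := by
            apply Finset.eq_univ_of_forall
            intro a
            rw [Finset.mem_biUnion]
            by_cases ha : a ∈ Bad r.1
            · refine ⟨r', hr', ?_⟩
              rw [htdef]
              simp only [Finset.mem_compl]
              intro ha'
              have hvne : r'.1 ≠ r.1 := fun hv => hne (Subtype.ext hv)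
              exact (Finset.disjoint_left.mp (hBadDisj r'.1 r.1 hvne) ha') ha
            · exact ⟨r, hr, by rw [htdef]; simpa using ha⟩
          rw [hunion]
          calc s.card ≤ Fintype.card {r : Fin (n + 1 - h) // r ≠ d} := Finset.card_le_univ s
          _ ≤ Fintype.card (Fin (n + 1 - h)) := Fintype.card_subtype_le _
          _ ≤ Fintype.card (Fin n) := by simp; omega
          _ = Finset.univ.card := (Finset.card_univ).symm
      obtain ⟨f, hfinj, hfmem⟩ :=
        (Finset.all_card_le_biUnion_card_iff_exists_injective t).mp hall
      -- the new family
      have hcardι : Fintype.card {r : Fin (n + 1 - h) // r ≠ d} = n + 1 - (h + 1) := by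
        have : Fintype.card {r : Fin (n + 1 - h) // r ≠ d} =
            Fintype.card (Fin (n + 1 - h)) - 1 := by
          rw [Fintype.card_subtype_compl, Fintype.card_subtype_eq]
        rw [this, Fintype.card_fin]
        omega
      set eqv := Fintype.equivFinOfCardEq hcardι with heqv
      set F' : Fin (n + 1 - (h + 1)) → Fin n → Fin n :=
        fun q => Function.update (F (eqv.symm q).1) i (f (eqv.symm q)) with hF'def
      have hvalne : ∀ q q' : Fin (n + 1 - (h + 1)), q ≠ q' →
          (eqv.symm q).1 ≠ (eqv.symm q').1 := by
        intro q q' hqq hv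
        exact hqq (eqv.symm.injective (Subtype.ext hv))
      have hagree : ∀ q, ∀ j : Fin n, i < j → F' q j = F (eqv.symm q).1 j := by
        intro q j hj
        rw [hF'def]
        simp only []
        rw [Function.update_of_ne (ne_of_gt hj)]
      refine ⟨F', ?_, ?_⟩
      · intro q q' hqq j hj
        by_cases hji : j = i
        · have h1 : F' q j = f (eqv.symm q) := by
            rw [hF'def, hji]; simp only [Function.update_self]
          have h2 : F' q' j = f (eqv.symm q') := by
            rw [hF'def, hji]; simp only [Function.update_self]
          rw [h1, h2]
          intro hcontra
          exact hqq (eqv.symm.injective (hfinj hcontra))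
        · have hj2 : i < j := by
            rw [Fin.lt_def]
            have hj3 : (j : ℕ) ≠ (i : ℕ) := fun hc => hji (Fin.ext hc)
            omega
          rw [hagree q j hj2, hagree q' j hj2]
          apply hpair _ _ (hvalne q q' hqq) j
          have hlt : (i : ℕ) < (j : ℕ) := hj2
          omega
      · intro q j hj
        by_cases hji : j = i
        · have hgood : s17OK I P i (f (eqv.symm q)) (F (eqv.symm q).1) := by
            have := hfmem (eqv.symm q)
            rw [htdef] at this
            simp only [Finset.mem_compl, hBadDef, Finset.mem_filter, mem_univ,
              true_and, not_not] at this
            exact this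
          have hkeq : s17keep I P i (f (eqv.symm q)) (F (eqv.symm q).1) =
              s17keep I P i (f (eqv.symm q)) (F' q) := by
            apply s17keep_agree
            intro j' hj'
            exact (hagree q j' hj').symm
          have hF'j : F' q j = f (eqv.symm q) := by
            rw [hF'def, hji]; simp only [Function.update_self]
          rw [hF'j, hji]
          unfold s17OK at hgood ⊢
          rw [← hkeq]
          exact hgood
        · have hj2 : i < j := by
            rw [Fin.lt_def]
            have hj3 : (j : ℕ) ≠ (i : ℕ) := fun hc => hji (Fin.ext hc)
            omega
          have hjge : n - h ≤ (j : ℕ) := by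
            have hlt : (i : ℕ) < (j : ℕ) := hj2
            omega
          have hold := hOK (eqv.symm q).1 j hjge
          have hFj : F' q j = F (eqv.symm q).1 j := hagree q j hj2
          have hkeq : s17keep I P j (F (eqv.symm q).1 j) (F (eqv.symm q).1) =
              s17keep I P j (F (eqv.symm q).1 j) (F' q) := by
            apply s17keep_agree
            intro j' hj'
            exact (hagree q j' (lt_trans hj2 hj')).symm
          rw [hFj]
          unfold s17OK at hold ⊢
          rw [← hkeq]
          exact hold

end Stmt17Aux


/-- In every multi-graph instance with `n ≥ 1` subadditive agents,
there exists an orientation `X` with `v_i(X_i) ≥ (1/2)·μ_i^n` for every agent `i`,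
i.e., a `1/2`-MMS orientation. -/
theorem stmt17 {n : ℕ} (hn : 1 ≤ n) {E : Type} [Fintype E] [DecidableEq E]
    (I : GraphInstance (Fin n) E) (hsub : ∀ i, IsSubadditiveVal (I.val i)) :
    ∃ X : Fin n → Finset E, IsOrientation I X ∧
      ∀ i, (1 / 2 : ℝ) * mms (I.val i) n Finset.univ ≤ I.val i (X i) := by
  classical
  choose P hPart hPval using fun i => s17exists_good_partition I hn i
  have hPdis : ∀ i : Fin n, ∀ a b : Fin n, a ≠ b → Disjoint (P i a) (P i b) :=
    fun i a b hab => (hPart i).1 a b hab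
  obtain ⟨F, -, hOK⟩ := s17family I P hsub hPdis hPval n hn le_rfl
  have hr0 : (0 : ℕ) < n + 1 - n := by omega
  refine ⟨s17alloc I P (F ⟨0, hr0⟩), ⟨?_, ?_⟩, ?_⟩
  · intro i j hij
    rw [Finset.disjoint_left]
    intro e he1 he2
    exact hij (((Finset.mem_filter.mp he1).2.symm).trans (Finset.mem_filter.mp he2).2)
  · intro e
    exact ⟨s17owner I P (F ⟨0, hr0⟩) e, s17owner_mem I P (F ⟨0, hr0⟩) e,
      Finset.mem_filter.mpr ⟨Finset.mem_univ e, rfl⟩⟩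
  · intro i
    have h1 := hOK ⟨0, hr0⟩ i (by omega)
    unfold s17OK at h1
    have h2 : I.val i (s17keep I P i (F ⟨0, hr0⟩ i) (F ⟨0, hr0⟩)) ≤
        I.val i (s17alloc I P (F ⟨0, hr0⟩) i) :=
      I.val_mono i (s17keep_subset_alloc I P (F ⟨0, hr0⟩) i)
    linarith
end

section
/- For every integer n ≥ 2 and every real ε > 0, there exists a multi-graph instance with n agents whose valuations are all subadditive such that no allocation X satisfies v_i(X_i) ≥ (1/2 + ε)·μ_i^n for all agents i; that is, a (1/2 + ε)-MMS allocation is not guaranteed to exist for n subadditive agents. -/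
open Finset

variable {V E : Type}

open Classical in
noncomputable def blockVal {m : ℕ} (n : ℕ) (B : Fin n → Finset (Fin m))
    (S : Finset (Fin m)) : ℝ :=
  if ∃ r, B r ⊆ S then 1 else if S.Nonempty then 1/2 else 0

lemma blockVal_nonneg {m n : ℕ} (B : Fin n → Finset (Fin m)) (S : Finset (Fin m)) :
    0 ≤ blockVal n B S := by
  unfold blockVal; split_ifs <;> norm_num

lemma blockVal_le_one {m n : ℕ} (B : Fin n → Finset (Fin m)) (S : Finset (Fin m)) :
    blockVal n B S ≤ 1 := by
  unfold blockVal; split_ifs <;> norm_num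

lemma blockVal_empty {m n : ℕ} (B : Fin n → Finset (Fin m)) (hB : ∀ r, (B r).Nonempty) :
    blockVal n B ∅ = 0 := by
  unfold blockVal
  rw [if_neg, if_neg]
  · exact Finset.not_nonempty_empty
  · rintro ⟨r, hr⟩
    exact (hB r).ne_empty (Finset.subset_empty.1 hr)

lemma blockVal_mono {m n : ℕ} (B : Fin n → Finset (Fin m)) {S T : Finset (Fin m)}
    (hST : S ⊆ T) : blockVal n B S ≤ blockVal n B T := by
  unfold blockVal
  by_cases h1 : ∃ r, B r ⊆ S
  · obtain ⟨r, hr⟩ := h1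
    rw [if_pos ⟨r, hr⟩, if_pos ⟨r, hr.trans hST⟩]
  · rw [if_neg h1]
    by_cases h2 : S.Nonempty
    · rw [if_pos h2]
      by_cases h3 : ∃ r, B r ⊆ T
      · rw [if_pos h3]; norm_num
      · rw [if_neg h3, if_pos (h2.mono hST)]
    · rw [if_neg h2]
      split_ifs <;> norm_num

lemma blockVal_subadd {m n : ℕ} (B : Fin n → Finset (Fin m)) (S T : Finset (Fin m)) :
    blockVal n B (S ∪ T) ≤ blockVal n B S + blockVal n B T := by
  by_cases hS : S = ∅
  · subst hS; rw [Finset.empty_union]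
    exact le_add_of_nonneg_left (blockVal_nonneg _ _)
  by_cases hT : T = ∅
  · subst hT; rw [Finset.union_empty]
    exact le_add_of_nonneg_right (blockVal_nonneg _ _)
  have hSne : S.Nonempty := Finset.nonempty_iff_ne_empty.2 hS
  have hTne : T.Nonempty := Finset.nonempty_iff_ne_empty.2 hT
  unfold blockVal
  rw [if_pos hSne, if_pos hTne]
  split_ifs <;> norm_num

lemma blockVal_gt_half {m n : ℕ} {B : Fin n → Finset (Fin m)} {S : Finset (Fin m)}
    (h : 1/2 < blockVal n B S) : ∃ r, B r ⊆ S := by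
  by_contra hc
  unfold blockVal at h
  rw [if_neg hc] at h
  split_ifs at h <;> norm_num at h


def rowSet (n : ℕ) (r : Fin n) : Finset (Fin (n*n)) :=
  univ.filter fun e => (e : ℕ) / n = r

def colSet (n : ℕ) (c : Fin n) : Finset (Fin (n*n)) :=
  univ.filter fun e => (e : ℕ) % n = c

def cell {n : ℕ} (r c : Fin n) : Fin (n*n) :=
  ⟨(c : ℕ) + r * n, by
    have h1 := c.isLt
    calc (c : ℕ) + r * n < n + r * n := by omega
      _ = ((r : ℕ) + 1) * n := by ring
      _ ≤ n * n := Nat.mul_le_mul_right n r.isLt⟩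

lemma cell_mem_rowSet {n : ℕ} (hn : 0 < n) (r c : Fin n) : cell r c ∈ rowSet n r := by
  simp only [rowSet, mem_filter, mem_univ, true_and, cell]
  rw [Nat.add_mul_div_right _ _ hn, Nat.div_eq_of_lt c.isLt, Nat.zero_add]

lemma cell_mem_colSet {n : ℕ} (hn : 0 < n) (r c : Fin n) : cell r c ∈ colSet n c := by
  simp only [colSet, mem_filter, mem_univ, true_and, cell]
  rw [Nat.add_mul_mod_self_right, Nat.mod_eq_of_lt c.isLt]

lemma rowSet_isPartition (n : ℕ) (hn : 0 < n) : IsPartitionInto n (rowSet n) Finset.univ := by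
  constructor
  · intro s t hst
    rw [Finset.disjoint_left]
    intro e hs ht
    simp only [rowSet, mem_filter, mem_univ, true_and] at hs ht
    exact hst (Fin.ext (hs.symm.trans ht))
  · ext e
    simp only [mem_biUnion, mem_univ, iff_true, rowSet, mem_filter, true_and]
    exact ⟨⟨(e : ℕ) / n, (Nat.div_lt_iff_lt_mul hn).2 e.isLt⟩, rfl⟩

lemma colSet_isPartition (n : ℕ) (hn : 0 < n) : IsPartitionInto n (colSet n) Finset.univ := by
  constructor
  · intro s t hst
    rw [Finset.disjoint_left]
    intro e hs ht
    simp only [colSet, mem_filter, mem_univ, true_and] at hs ht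
    exact hst (Fin.ext (hs.symm.trans ht))
  · ext e
    simp only [mem_biUnion, mem_univ, iff_true, colSet, mem_filter, true_and]
    exact ⟨⟨(e : ℕ) % n, Nat.mod_lt _ hn⟩, rfl⟩

lemma one_le_mms {m n : ℕ} (hn : 0 < n) (B : Fin n → Finset (Fin m))
    (hB : IsPartitionInto n B Finset.univ) :
    1 ≤ mms (blockVal n B) n Finset.univ := by
  have hne : Nonempty (Fin n) := ⟨⟨0, hn⟩⟩
  apply le_csSup
  · refine ⟨1, ?_⟩
    rintro x ⟨P, hP, rfl⟩
    have hb : BddBelow (Set.range fun t => blockVal n B (P t)) :=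
      (Set.finite_range _).bddBelow
    exact le_trans (ciInf_le hb ⟨0, hn⟩) (blockVal_le_one _ _)
  · refine ⟨B, hB, ?_⟩
    have hval : ∀ t : Fin n, blockVal n B (B t) = 1 := by
      intro t
      unfold blockVal
      rw [if_pos ⟨t, subset_rfl⟩]
    have h1 : (⨅ t : Fin n, blockVal n B (B t)) = 1 := by
      simp only [hval, ciInf_const]
    exact h1.symm

noncomputable def theVal (n : ℕ) (i : Fin n) : Finset (Fin (n*n)) → ℝ :=
  if (i : ℕ) = 0 then blockVal n (rowSet n)
  else if (i : ℕ) = 1 then blockVal n (colSet n)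
  else fun _ => 0

/-- For every `n ≥ 2` and real `ε > 0`, there exists a multi-graph
instance with `n` subadditive agents such that no allocation `X` satisfies
`v_i(X_i) ≥ (1/2 + ε)·μ_i^n` for all agents `i`. -/
theorem stmt18 (n : ℕ) (hn : 2 ≤ n) (ε : ℝ) (hε : 0 < ε) :
    ∃ (m : ℕ) (I : GraphInstance (Fin n) (Fin m)),
      (∀ i, IsSubadditiveVal (I.val i)) ∧
      ¬ ∃ X : Fin n → Finset (Fin m), IsAllocation X ∧
        ∀ i, (1 / 2 + ε) * mms (I.val i) n Finset.univ ≤ I.val i (X i) := by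
  classical
  have hn0 : 0 < n := by omega
  have hn1 : 1 < n := hn
  have hrow_ne : ∀ r : Fin n, (rowSet n r).Nonempty :=
    fun r => ⟨cell r ⟨0, hn0⟩, cell_mem_rowSet hn0 r ⟨0, hn0⟩⟩
  have hcol_ne : ∀ c : Fin n, (colSet n c).Nonempty :=
    fun c => ⟨cell ⟨0, hn0⟩ c, cell_mem_colSet hn0 ⟨0, hn0⟩ c⟩
  refine ⟨n * n,
    { ep := fun _ => s(⟨0, hn0⟩, ⟨1, hn1⟩)
      val := theVal n
      val_nonneg := ?_
      val_empty := ?_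
      val_mono := ?_
      graphical := ?_ }, ?_, ?_⟩
  · intro i S
    unfold theVal
    split_ifs
    · exact blockVal_nonneg _ _
    · exact blockVal_nonneg _ _
    · exact le_refl 0
  · intro i
    unfold theVal
    split_ifs
    · exact blockVal_empty _ hrow_ne
    · exact blockVal_empty _ hcol_ne
    · rfl
  · intro i S T hST
    unfold theVal
    split_ifs
    · exact blockVal_mono _ hST
    · exact blockVal_mono _ hST
    · exact le_refl 0
  · intro i e hie S
    have h01 : (i : ℕ) ≠ 0 ∧ (i : ℕ) ≠ 1 := by
      rw [Sym2.mem_iff] at hie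
      push_neg at hie
      exact ⟨fun h => hie.1 (Fin.ext h), fun h => hie.2 (Fin.ext h)⟩
    unfold theVal
    rw [if_neg h01.1, if_neg h01.2]
  · intro i S T
    show theVal n i (S ∪ T) ≤ theVal n i S + theVal n i T
    unfold theVal
    split_ifs
    · exact blockVal_subadd _ _ _
    · exact blockVal_subadd _ _ _
    · norm_num
  · rintro ⟨X, hX, hval⟩
    set u0 : Fin n := ⟨0, hn0⟩ with hu0
    set u1 : Fin n := ⟨1, hn1⟩ with hu1
    have hv0 : theVal n u0 = blockVal n (rowSet n) := by
      unfold theVal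
      rw [if_pos rfl]
    have hv1 : theVal n u1 = blockVal n (colSet n) := by
      unfold theVal
      rw [if_neg (by norm_num), if_pos rfl]
    have h0 : (1/2 + ε) * mms (blockVal n (rowSet n)) n Finset.univ ≤
        blockVal n (rowSet n) (X u0) := hval u0
    have h1 : (1/2 + ε) * mms (blockVal n (colSet n)) n Finset.univ ≤
        blockVal n (colSet n) (X u1) := hval u1
    have hm0 : 1 ≤ mms (blockVal n (rowSet n)) n Finset.univ :=
      one_le_mms hn0 _ (rowSet_isPartition n hn0)
    have hm1 : 1 ≤ mms (blockVal n (colSet n)) n Finset.univ :=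
      one_le_mms hn0 _ (colSet_isPartition n hn0)
    have hhalf : (0:ℝ) ≤ 1/2 + ε := by linarith
    have hb0 : 1/2 < blockVal n (rowSet n) (X u0) := by
      have := mul_le_mul_of_nonneg_left hm0 hhalf
      rw [mul_one] at this
      linarith
    have hb1 : 1/2 < blockVal n (colSet n) (X u1) := by
      have := mul_le_mul_of_nonneg_left hm1 hhalf
      rw [mul_one] at this
      linarith
    obtain ⟨r, hr⟩ := blockVal_gt_half hb0
    obtain ⟨c, hc⟩ := blockVal_gt_half hb1
    have hne : u0 ≠ u1 := Fin.ne_of_val_ne (by norm_num)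
    exact (Finset.disjoint_left.1 (hX u0 u1 hne) (hr (cell_mem_rowSet hn0 r c)))
      (hc (cell_mem_colSet hn0 r c))
end
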